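/- arXiv:1204.5199 — 7 statements merged into one kernel-verified Lean document; each statement's English description precedes it below -/
import Mathlib

section
/- Let S be a set containing a distinguished element O, let Ω ⊆ S_nc respect direct sums of matrices, suppose supp Ω is nonempty, and suppose that for every n ∈ supp Ω the set Ω_n is a singleton {X_n}. Let d = gcd{n : n ∈ supp Ω}. Then there exists a matrix X ∈ S^{d×d} such that X_n = ⊕_{α=1}^{n/d} X for every n ∈ supp Ω. -/
namespace NCPaper

variable {S : Type*}

/-- Direct sum of two square matrices over `S`, with off-diagonal entries `O`. -/
def dSum (O : S) {n m : ℕ} (X : Matrix (Fin n) (Fin n) S) (Y : Matrix (Fin m) (Fin m) S) :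
    Matrix (Fin (n + m)) (Fin (n + m)) S := fun i j =>
  if hi : (i : ℕ) < n then
    if hj : (j : ℕ) < n then X ⟨i, hi⟩ ⟨j, hj⟩ else O
  else if hj : (j : ℕ) < n then O
  else Y ⟨(i : ℕ) - n, by have := i.isLt; omega⟩ ⟨(j : ℕ) - n, by have := j.isLt; omega⟩

/-- Direct sum of `k` copies of a `d × d` matrix, as a `(k*d) × (k*d)` matrix. -/
def repSum (O : S) {d : ℕ} (k : ℕ) (X : Matrix (Fin d) (Fin d) S) :
    Matrix (Fin (k * d)) (Fin (k * d)) S := fun i j =>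
  if (i : ℕ) / d = (j : ℕ) / d then
    X ⟨(i : ℕ) % d, Nat.mod_lt _ (Nat.pos_of_ne_zero fun h => absurd i.isLt (by simp [h]))⟩
      ⟨(j : ℕ) % d, Nat.mod_lt _ (Nat.pos_of_ne_zero fun h => absurd j.isLt (by simp [h]))⟩
  else O

/-- Cast a square matrix along an equality of sizes. -/
def castMat {n m : ℕ} (h : n = m) (X : Matrix (Fin n) (Fin n) S) :
    Matrix (Fin m) (Fin m) S := fun i j => X (Fin.cast h.symm i) (Fin.cast h.symm j)

/-- The support of a subset of the nc space: sizes where it is nonempty. -/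
def supp (Ω : ∀ n : ℕ, Set (Matrix (Fin n) (Fin n) S)) : Set ℕ :=
  {n | 0 < n ∧ (Ω n).Nonempty}

/-- A subset of the nc space respects direct sums of matrices. -/
def RespectsDSums (O : S) (Ω : ∀ n : ℕ, Set (Matrix (Fin n) (Fin n) S)) : Prop :=
  ∀ ⦃n m : ℕ⦄ (X : Matrix (Fin n) (Fin n) S) (Y : Matrix (Fin m) (Fin m) S),
    X ∈ Ω n → Y ∈ Ω m → dSum O X Y ∈ Ω (n + m)


/-- Entry function on ℕ × ℕ, with default `O` out of range. -/
def Ent (O : S) (X : ∀ n : ℕ, Matrix (Fin n) (Fin n) S) (n i j : ℕ) : S :=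
  if h : i < n ∧ j < n then X n ⟨i, h.1⟩ ⟨j, h.2⟩ else O

/-- The "limit" entry function obtained by evaluating at a large level. -/
def fEnt (O : S) (X : ∀ n : ℕ, Matrix (Fin n) (Fin n) S) (a i j : ℕ) : S :=
  Ent O X ((max i j + 1) * a) i j

theorem Ent_dsum (O : S) (X : ∀ n : ℕ, Matrix (Fin n) (Fin n) S) {n m : ℕ}
    (h : X (n + m) = dSum O (X n) (X m)) {i j : ℕ} (hi : i < n + m) (hj : j < n + m) :
    Ent O X (n + m) i j =
      if i < n then (if j < n then Ent O X n i j else O)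
      else if j < n then O else Ent O X m (i - n) (j - n) := by
  unfold Ent
  rw [dif_pos ⟨hi, hj⟩]
  have h' : X (n + m) ⟨i, hi⟩ ⟨j, hj⟩ = dSum O (X n) (X m) ⟨i, hi⟩ ⟨j, hj⟩ := by rw [h]
  rw [h']
  unfold dSum
  by_cases h1 : i < n <;> by_cases h2 : j < n
  · simp only [dif_pos h1, dif_pos h2, if_pos h1, if_pos h2, dif_pos (And.intro h1 h2)]
  · simp [h1, h2]
  · simp [h1, h2]
  · simp only [dif_neg h1, dif_neg h2, if_neg h1, if_neg h2]
    rw [dif_pos (And.intro (show i - n < m by omega) (show j - n < m by omega))]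

/-- **Noncommutative singleton lemma.** If a subset of the nc space respects direct sums and
each nonempty level is a singleton `{X n}`, then there is a single `d × d` matrix `Xs`
(with `d` the gcd of the support) such that `X n` is the direct sum of `n / d` copies of
`Xs` for all `n` in the support. -/
theorem nc_singleton_lemma {S : Type*} (O : S)
    (Ω : ∀ n : ℕ, Set (Matrix (Fin n) (Fin n) S)) (hΩ0 : Ω 0 = ∅)
    (hdir : RespectsDSums O Ω) (hne : (supp Ω).Nonempty)
    (X : ∀ n : ℕ, Matrix (Fin n) (Fin n) S)
    (hsingle : ∀ n ∈ supp Ω, Ω n = {X n})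
    (d : ℕ) (hdvd : ∀ n ∈ supp Ω, d ∣ n)
    (hgcd : ∀ e : ℕ, (∀ n ∈ supp Ω, e ∣ n) → e ∣ d) :
    ∃ Xs : Matrix (Fin d) (Fin d) S, ∀ n, ∀ hn : n ∈ supp Ω,
      X n = castMat (Nat.div_mul_cancel (hdvd n hn)) (repSum O (n / d) Xs) := by
  classical
  obtain ⟨a, ha⟩ := hne
  have hXmem : ∀ n ∈ supp Ω, X n ∈ Ω n := by
    intro n hn; rw [hsingle n hn]; rfl
  have hadd : ∀ {n m : ℕ}, n ∈ supp Ω → m ∈ supp Ω → n + m ∈ supp Ω := by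
    intro n m hn hm
    exact ⟨by have := hn.1; omega, ⟨dSum O (X n) (X m), hdir _ _ (hXmem n hn) (hXmem m hm)⟩⟩
  have hsum : ∀ {n m : ℕ}, n ∈ supp Ω → m ∈ supp Ω → X (n + m) = dSum O (X n) (X m) := by
    intro n m hn hm
    have h1 := hdir _ _ (hXmem n hn) (hXmem m hm)
    rw [hsingle (n + m) (hadd hn hm)] at h1
    exact h1.symm
  have key : ∀ {n m : ℕ}, n ∈ supp Ω → m ∈ supp Ω → ∀ {i j : ℕ}, i < n + m → j < n + m →
      Ent O X (n + m) i j =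
        if i < n then (if j < n then Ent O X n i j else O)
        else if j < n then O else Ent O X m (i - n) (j - n) := by
    intro n m hn hm i j hi hj
    exact Ent_dsum O X (hsum hn hm) hi hj
  have agree : ∀ {n m : ℕ}, n ∈ supp Ω → m ∈ supp Ω → ∀ {i j : ℕ},
      i < n → j < n → i < m → j < m → Ent O X n i j = Ent O X m i j := by
    intro n m hn hm i j hin hjn him hjm
    have h1 := key hn hm (i := i) (j := j) (by omega) (by omega)
    rw [if_pos hin, if_pos hjn] at h1
    have h2 := key hm hn (i := i) (j := j) (by omega) (by omega)
    rw [if_pos him, if_pos hjm] at h2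
    rw [← h1, ← h2, Nat.add_comm n m]
  have hshiftE : ∀ {n m : ℕ}, n ∈ supp Ω → m ∈ supp Ω → ∀ {i j : ℕ}, i < m → j < m →
      Ent O X m i j = Ent O X (n + m) (n + i) (n + j) := by
    intro n m hn hm i j hi hj
    have h1 := key hn hm (i := n + i) (j := n + j) (by omega) (by omega)
    rw [if_neg (by omega), if_neg (by omega)] at h1
    have e1 : n + i - n = i := by omega
    have e2 : n + j - n = j := by omega
    rw [e1, e2] at h1
    exact h1.symm
  have hoffLE : ∀ {n m : ℕ}, n ∈ supp Ω → m ∈ supp Ω → ∀ {i j : ℕ},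
      i < n → n ≤ j → j < n + m → Ent O X (n + m) i j = O := by
    intro n m hn hm i j hi hj1 hj2
    have h1 := key hn hm (i := i) (j := j) (by omega) hj2
    rwa [if_pos hi, if_neg (by omega)] at h1
  have hoffRE : ∀ {n m : ℕ}, n ∈ supp Ω → m ∈ supp Ω → ∀ {i j : ℕ},
      j < n → n ≤ i → i < n + m → Ent O X (n + m) i j = O := by
    intro n m hn hm i j hj hi1 hi2
    have h1 := key hn hm (i := i) (j := j) hi2 (by omega)
    rwa [if_neg (by omega), if_pos hj] at h1
  have hmul : ∀ (k : ℕ), 0 < k → ∀ {n : ℕ}, n ∈ supp Ω → k * n ∈ supp Ω := by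
    intro k
    induction k with
    | zero => omega
    | succ k ih =>
      intro _ n hn
      rcases Nat.eq_zero_or_pos k with hk0 | hk0
      · subst hk0; simpa using hn
      · have h := hadd hn (ih hk0 hn)
        have e : n + k * n = (k + 1) * n := by ring
        rwa [e] at h
  have hma : ∀ i j : ℕ, (max i j + 1) * a ∈ supp Ω ∧ i < (max i j + 1) * a ∧
      j < (max i j + 1) * a := by
    intro i j
    have h1 : max i j + 1 ≤ (max i j + 1) * a := Nat.le_mul_of_pos_right _ ha.1
    exact ⟨hmul _ (by omega) ha, by omega, by omega⟩
  have hfeq : ∀ {n : ℕ}, n ∈ supp Ω → ∀ {i j : ℕ}, i < n → j < n →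
      Ent O X n i j = fEnt O X a i j := by
    intro n hn i j hi hj
    obtain ⟨hm, him, hjm⟩ := hma i j
    exact agree hn hm hi hj him hjm
  have hshiftf : ∀ {n : ℕ}, n ∈ supp Ω → ∀ i j : ℕ,
      fEnt O X a (n + i) (n + j) = fEnt O X a i j := by
    intro n hn i j
    obtain ⟨hm, him, hjm⟩ := hma i j
    have h1 : Ent O X ((max i j + 1) * a) i j
        = Ent O X (n + (max i j + 1) * a) (n + i) (n + j) := hshiftE hn hm him hjm
    have h2 : Ent O X (n + (max i j + 1) * a) (n + i) (n + j) = fEnt O X a (n + i) (n + j) :=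
      hfeq (hadd hn hm) (by omega) (by omega)
    exact (h1.trans h2).symm
  have hoffLf : ∀ {n : ℕ}, n ∈ supp Ω → ∀ {i j : ℕ}, i < n → n ≤ j → fEnt O X a i j = O := by
    intro n hn i j hi hj
    obtain ⟨hm, him, hjm⟩ := hma i j
    have h0 : Ent O X (n + (max i j + 1) * a) i j = O := hoffLE hn hm hi hj (by omega)
    have h1 : Ent O X (n + (max i j + 1) * a) i j = fEnt O X a i j :=
      hfeq (hadd hn hm) (by omega) (by omega)
    rw [← h1]; exact h0
  have hoffRf : ∀ {n : ℕ}, n ∈ supp Ω → ∀ {i j : ℕ}, j < n → n ≤ i → fEnt O X a i j = O := by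
    intro n hn i j hj hi
    obtain ⟨hm, him, hjm⟩ := hma i j
    have h0 : Ent O X (n + (max i j + 1) * a) i j = O := hoffRE hn hm hj hi (by omega)
    have h1 : Ent O X (n + (max i j + 1) * a) i j = fEnt O X a i j :=
      hfeq (hadd hn hm) (by omega) (by omega)
    rw [← h1]; exact h0
  have hd0 : 0 < d := by
    rcases hdvd a ha with ⟨c, hc⟩
    rcases Nat.eq_zero_or_pos d with h | h
    · subst h; have := ha.1; omega
    · exact h
  -- produce u, v ∈ supp with u = v + d
  have hP : ∃ e : ℕ, 0 < e ∧ ∃ u v : ℕ, u ∈ supp Ω ∧ v ∈ supp Ω ∧ u = v + e :=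
    ⟨a, ha.1, a + a, a, hadd ha ha, ha, rfl⟩
  obtain ⟨he0pos, u, v, hu, hv, huv0⟩ := Nat.find_spec hP
  have he0dvd : ∀ n ∈ supp Ω, Nat.find hP ∣ n := by
    intro n hn
    by_contra hnd
    have hr : n % Nat.find hP ≠ 0 := fun h => hnd (Nat.dvd_of_mod_eq_zero h)
    have hrlt : n % Nat.find hP < Nat.find hP := Nat.mod_lt _ he0pos
    apply Nat.find_min hP hrlt
    refine ⟨Nat.pos_of_ne_zero hr, ?_⟩
    rcases Nat.eq_zero_or_pos (n / Nat.find hP) with hq0 | hq0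
    · have hn_eq : n / Nat.find hP * Nat.find hP + n % Nat.find hP = n := Nat.div_add_mod' n _
      rw [hq0, Nat.zero_mul, Nat.zero_add] at hn_eq
      exact ⟨a + n, a, hadd ha hn, ha, by omega⟩
    · refine ⟨n + n / Nat.find hP * v, n / Nat.find hP * u,
        hadd hn (hmul _ hq0 hv), hmul _ hq0 hu, ?_⟩
      have hn_eq : n / Nat.find hP * Nat.find hP + n % Nat.find hP = n := Nat.div_add_mod' n _
      have hqu : n / Nat.find hP * u = n / Nat.find hP * v + n / Nat.find hP * Nat.find hP := by
        rw [huv0, Nat.mul_add]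
      omega
  have he0d : Nat.find hP ∣ d := hgcd _ he0dvd
  have hde0 : d ∣ Nat.find hP := by
    have h1 := hdvd u hu
    have h2 := hdvd v hv
    rw [huv0] at h1
    exact (Nat.dvd_add_right h2).mp h1
  have huv : u = v + d := by rw [huv0, Nat.dvd_antisymm hde0 he0d]
  have hdshift : ∀ i j : ℕ, fEnt O X a (i + d) (j + d) = fEnt O X a i j := by
    intro i j
    have h1 := hshiftf hv (i + d) (j + d)
    have h2 := hshiftf hu i j
    have e1 : v + (i + d) = u + i := by omega
    have e2 : v + (j + d) = u + j := by omega
    rw [e1, e2, h2] at h1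
    exact h1.symm
  have hdshiftk : ∀ k i j : ℕ, fEnt O X a (i + k * d) (j + k * d) = fEnt O X a i j := by
    intro k
    induction k with
    | zero => intro i j; simp
    | succ k ih =>
      intro i j
      have e1 : i + (k + 1) * d = (i + k * d) + d := by ring
      have e2 : j + (k + 1) * d = (j + k * d) + d := by ring
      rw [e1, e2, hdshift, ih]
  -- off-diagonal vanishing relative to d-blocks
  obtain ⟨k, hk⟩ := hdvd a ha
  have hk1 : 0 < k := by
    rcases Nat.eq_zero_or_pos k with h | h
    · rw [h, Nat.mul_zero] at hk; have := ha.1; omega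
    · exact h
  have hoff_base : ∀ {x y : ℕ}, x < d → d ≤ y → fEnt O X a x y = O := by
    intro x y hx hy
    have h4 := hdshiftk (k - 1) x y
    rw [← h4]
    have ekd : (k - 1) * d + d = k * d := by
      rcases k with _ | k'
      · omega
      · simp [Nat.succ_sub_one]; ring
    refine hoffLf ha ?_ ?_
    · rw [hk]; rw [Nat.mul_comm d k]; omega
    · rw [hk]; rw [Nat.mul_comm d k]; omega
  have hoff_base' : ∀ {x y : ℕ}, y < d → d ≤ x → fEnt O X a x y = O := by
    intro x y hy hx
    have h4 := hdshiftk (k - 1) x y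
    rw [← h4]
    have ekd : (k - 1) * d + d = k * d := by
      rcases k with _ | k'
      · omega
      · simp [Nat.succ_sub_one]; ring
    refine hoffRf ha ?_ ?_
    · rw [hk]; rw [Nat.mul_comm d k]; omega
    · rw [hk]; rw [Nat.mul_comm d k]; omega
  have hoff_lt : ∀ i j : ℕ, i / d < j / d → fEnt O X a i j = O := by
    intro i j hij
    have e1 : i % d + i / d * d = i := Nat.mod_add_div' i d
    have h3 : (i / d + 1) * d ≤ j := by
      have h5 : i / d + 1 ≤ j / d := hij
      calc (i / d + 1) * d ≤ j / d * d := Nat.mul_le_mul_right d h5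
        _ ≤ j := Nat.div_mul_le_self j d
    have e4 : (i / d + 1) * d = i / d * d + d := by ring
    have e2 : (j - i / d * d) + i / d * d = j := by omega
    have h6 := hdshiftk (i / d) (i % d) (j - i / d * d)
    rw [e1, e2] at h6
    rw [h6]
    exact hoff_base (Nat.mod_lt _ hd0) (by omega)
  have hoff_gt : ∀ i j : ℕ, j / d < i / d → fEnt O X a i j = O := by
    intro i j hij
    have e1 : j % d + j / d * d = j := Nat.mod_add_div' j d
    have h3 : (j / d + 1) * d ≤ i := by
      have h5 : j / d + 1 ≤ i / d := hij
      calc (j / d + 1) * d ≤ i / d * d := Nat.mul_le_mul_right d h5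
        _ ≤ i := Nat.div_mul_le_self i d
    have e4 : (j / d + 1) * d = j / d * d + d := by ring
    have e2 : (i - j / d * d) + j / d * d = i := by omega
    have h6 := hdshiftk (j / d) (i - j / d * d) (j % d)
    rw [e1, e2] at h6
    rw [h6]
    exact hoff_base' (Nat.mod_lt _ hd0) (by omega)
  -- conclusion
  refine ⟨fun i j => fEnt O X a (i : ℕ) (j : ℕ), ?_⟩
  intro n hn
  funext i j
  have hXE : X n i j = Ent O X n (i : ℕ) (j : ℕ) := by
    unfold Ent
    rw [dif_pos ⟨i.isLt, j.isLt⟩]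
  show X n i j = castMat _ (repSum O (n / d) _) i j
  unfold castMat repSum
  simp only [Fin.coe_cast]
  rw [hXE, hfeq hn i.isLt j.isLt]
  by_cases hq : (i : ℕ) / d = (j : ℕ) / d
  · rw [if_pos hq]
    have h1 := hdshiftk ((i : ℕ) / d) ((i : ℕ) % d) ((j : ℕ) % d)
    have e1 : (i : ℕ) % d + (i : ℕ) / d * d = i := Nat.mod_add_div' _ _
    have e2 : (j : ℕ) % d + (i : ℕ) / d * d = j := by rw [hq]; exact Nat.mod_add_div' _ _
    rw [e1, e2] at h1
    exact h1
  · rw [if_neg hq]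
    rcases Nat.lt_or_ge ((i : ℕ) / d) ((j : ℕ) / d) with h | h
    · exact hoff_lt _ _ h
    · exact hoff_gt _ _ (by omega)

end NCPaper
end

section
/- Let S be a set containing a distinguished element O, let Ω ⊆ S_nc respect direct sums of matrices with supp Ω nonempty, and let f : Ω → Ω satisfy: (i) f(Ω_n) ⊆ Ω_n for every n ∈ supp Ω; (ii) f respects direct sums, i.e., f(X ⊕ Y) = f(X) ⊕ f(Y) for all X, Y ∈ Ω; (iii) for every n ∈ supp Ω the mapping f restricted to Ω_n has a unique fixed point X_{*n}. Let d = gcd{n : n ∈ supp Ω}. Then there exists X_* ∈ S^{d×d} such that X_{*n} = ⊕_{α=1}^{n/d} X_* for every n ∈ supp Ω. -/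
namespace NCPaper

variable {S : Type*}

/-- Congruence for entries of size-indexed matrices along an equality of sizes. -/
lemma mat_congr (Xst : ∀ n : ℕ, Matrix (Fin n) (Fin n) S) {a b : ℕ} (h : a = b)
    {i j : ℕ} (hi : i < a) (hj : j < a) (hi' : i < b) (hj' : j < b) :
    Xst a ⟨i, hi⟩ ⟨j, hj⟩ = Xst b ⟨i, hi'⟩ ⟨j, hj'⟩ := by subst h; rfl

/-- **Theorem A, part 1.** A size- and direct-sum-respecting self-mapping of a direct-sum-closed
subset of the nc space having a unique fixed point `Xst n` at every level `n` of the support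
has all its fixed points of the form `⊕_{α=1}^{n/d} Xs` for a single `d × d` matrix `Xs`,
where `d` is the gcd of the support. -/
theorem fixed_point_theorem_part1 {S : Type*} (O : S)
    (Ω : ∀ n : ℕ, Set (Matrix (Fin n) (Fin n) S)) (hΩ0 : Ω 0 = ∅)
    (hdir : RespectsDSums O Ω) (hne : (supp Ω).Nonempty)
    (f : ∀ n : ℕ, Matrix (Fin n) (Fin n) S → Matrix (Fin n) (Fin n) S)
    (hmaps : ∀ n ∈ supp Ω, ∀ X ∈ Ω n, f n X ∈ Ω n)
    (hsums : ∀ ⦃n m : ℕ⦄ (X : Matrix (Fin n) (Fin n) S) (Y : Matrix (Fin m) (Fin m) S),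
      X ∈ Ω n → Y ∈ Ω m → f (n + m) (dSum O X Y) = dSum O (f n X) (f m Y))
    (Xst : ∀ n : ℕ, Matrix (Fin n) (Fin n) S)
    (hfix : ∀ n ∈ supp Ω, Xst n ∈ Ω n ∧ f n (Xst n) = Xst n ∧
      ∀ Y ∈ Ω n, f n Y = Y → Y = Xst n)
    (d : ℕ) (hdvd : ∀ n ∈ supp Ω, d ∣ n)
    (hgcd : ∀ e : ℕ, (∀ n ∈ supp Ω, e ∣ n) → e ∣ d) :
    ∃ Xs : Matrix (Fin d) (Fin d) S, ∀ n, ∀ hn : n ∈ supp Ω,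
      Xst n = castMat (Nat.div_mul_cancel (hdvd n hn)) (repSum O (n / d) Xs) := by
  obtain ⟨n₀, hn₀⟩ := hne
  have hn₀pos : 0 < n₀ := hn₀.1
  have hd0 : 0 < d := by
    rcases hdvd n₀ hn₀ with ⟨k, hk⟩
    rcases Nat.eq_zero_or_pos d with rfl | h
    · simp at hk; omega
    · exact h
  -- support is closed under addition
  have hadd_mem : ∀ {n m : ℕ}, n ∈ supp Ω → m ∈ supp Ω → n + m ∈ supp Ω := by
    intro n m hn hm
    obtain ⟨X, hX⟩ := hn.2; obtain ⟨Y, hY⟩ := hm.2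
    exact ⟨by have := hn.1; omega, ⟨dSum O X Y, hdir X Y hX hY⟩⟩
  -- additivity of the fixed points
  have hXadd : ∀ {n m : ℕ}, n ∈ supp Ω → m ∈ supp Ω →
      Xst (n + m) = dSum O (Xst n) (Xst m) := by
    intro n m hn hm
    have hZ : dSum O (Xst n) (Xst m) ∈ Ω (n + m) :=
      hdir _ _ (hfix n hn).1 (hfix m hm).1
    have hf : f (n + m) (dSum O (Xst n) (Xst m)) = dSum O (Xst n) (Xst m) := by
      rw [hsums _ _ (hfix n hn).1 (hfix m hm).1, (hfix n hn).2.1, (hfix m hm).2.1]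
    exact ((hfix (n + m) (hadd_mem hn hm)).2.2 _ hZ hf).symm
  -- support closed under positive multiples
  have hmul_mem : ∀ (k : ℕ), 0 < k → ∀ {n : ℕ}, n ∈ supp Ω → k * n ∈ supp Ω := by
    intro k hk
    induction k with
    | zero => omega
    | succ k ih =>
      intro n hn
      rcases Nat.eq_zero_or_pos k with rfl | hk'
      · simpa using hn
      · rw [Nat.succ_mul]; exact hadd_mem (ih hk' hn) hn
  -- corner of a direct-sum fixed point
  have hcorner : ∀ {n m : ℕ}, n ∈ supp Ω → m ∈ supp Ω → ∀ {i j : ℕ}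
      (hi : i < n) (hj : j < n) (hi' : i < n + m) (hj' : j < n + m),
      Xst (n + m) ⟨i, hi'⟩ ⟨j, hj'⟩ = Xst n ⟨i, hi⟩ ⟨j, hj⟩ := by
    intro n m hn hm i j hi hj hi' hj'
    rw [hXadd hn hm]
    simp [dSum, hi, hj]
  -- tail of a direct-sum fixed point
  have htail : ∀ {n m : ℕ}, n ∈ supp Ω → m ∈ supp Ω → ∀ {i j : ℕ}
      (hi : i < m) (hj : j < m) (hi' : i + n < n + m) (hj' : j + n < n + m),
      Xst (n + m) ⟨i + n, hi'⟩ ⟨j + n, hj'⟩ = Xst m ⟨i, hi⟩ ⟨j, hj⟩ := by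
    intro n m hn hm i j hi hj hi' hj'
    rw [hXadd hn hm]
    have h1 : ¬ (i + n < n) := by omega
    have h2 : ¬ (j + n < n) := by omega
    simp [dSum, h1, h2, Nat.add_sub_cancel]
  -- crossing entries of a direct-sum fixed point vanish
  have hcross : ∀ {n m : ℕ}, n ∈ supp Ω → m ∈ supp Ω → ∀ {i j : ℕ},
      ((i < n ∧ n ≤ j) ∨ (j < n ∧ n ≤ i)) → ∀ (hi' : i < n + m) (hj' : j < n + m),
      Xst (n + m) ⟨i, hi'⟩ ⟨j, hj'⟩ = O := by
    intro n m hn hm i j hij hi' hj'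
    rw [hXadd hn hm]
    rcases hij with ⟨h1, h2⟩ | ⟨h1, h2⟩
    · have h2' : ¬ (j < n) := by omega
      simp [dSum, h1, h2']
    · have h2' : ¬ (i < n) := by omega
      simp [dSum, h1, h2']
  -- consistency: fixed points at different levels agree on common corners
  have hcons : ∀ {n m : ℕ}, n ∈ supp Ω → m ∈ supp Ω → ∀ {i j : ℕ}
      (hi : i < n) (hj : j < n) (hi' : i < m) (hj' : j < m),
      Xst n ⟨i, hi⟩ ⟨j, hj⟩ = Xst m ⟨i, hi'⟩ ⟨j, hj'⟩ := by
    intro n m hn hm i j hi hj hi' hj'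
    have h1 := hcorner hn hm hi hj (by omega) (by omega)
    have h2 := hcorner hm hn hi' hj' (by omega) (by omega)
    have h3 := mat_congr Xst (Nat.add_comm n m) (show i < n + m by omega)
      (show j < n + m by omega) (show i < m + n by omega) (show j < m + n by omega)
    rw [← h1, h3, h2]
  -- the "infinite matrix" of entries
  have hlt : ∀ i j : ℕ, i < (max i j + 1) * n₀ :=
    fun i j => Nat.lt_of_lt_of_le (by omega) (Nat.le_mul_of_pos_right _ hn₀pos)
  have hlt2 : ∀ i j : ℕ, j < (max i j + 1) * n₀ :=
    fun i j => Nat.lt_of_lt_of_le (by omega) (Nat.le_mul_of_pos_right _ hn₀pos)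
  have hMmem : ∀ i j : ℕ, (max i j + 1) * n₀ ∈ supp Ω :=
    fun i j => hmul_mem _ (by omega) hn₀
  let E : ℕ → ℕ → S := fun i j =>
    Xst ((max i j + 1) * n₀) ⟨i, hlt i j⟩ ⟨j, hlt2 i j⟩
  have hEeq : ∀ (i j n : ℕ) (hn : n ∈ supp Ω) (hi : i < n) (hj : j < n),
      E i j = Xst n ⟨i, hi⟩ ⟨j, hj⟩ := by
    intro i j n hn hi hj
    exact hcons (hMmem i j) hn (hlt i j) (hlt2 i j) hi hj
  -- shift invariance by elements of the support
  have hshift : ∀ (n : ℕ), n ∈ supp Ω → ∀ i j : ℕ, E (i + n) (j + n) = E i j := by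
    intro n hn i j
    have hmM := hMmem i j
    have hiM := hlt i j
    have hjM := hlt2 i j
    calc E (i + n) (j + n)
        = Xst (n + (max i j + 1) * n₀) ⟨i + n, by omega⟩ ⟨j + n, by omega⟩ :=
          hEeq _ _ _ (hadd_mem hn hmM) (by omega) (by omega)
      _ = Xst ((max i j + 1) * n₀) ⟨i, hiM⟩ ⟨j, hjM⟩ := htail hn hmM hiM hjM _ _
      _ = E i j := (hEeq _ _ _ hmM hiM hjM).symm
  -- crossing entries vanish
  have hcrossO : ∀ (n : ℕ), n ∈ supp Ω → ∀ i j : ℕ,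
      ((i < n ∧ n ≤ j) ∨ (j < n ∧ n ≤ i)) → E i j = O := by
    intro n hn i j hij
    have hmM := hMmem i j
    have hiM := hlt i j
    have hjM := hlt2 i j
    have hi' : i < n + (max i j + 1) * n₀ := by omega
    have hj' : j < n + (max i j + 1) * n₀ := by omega
    rw [hEeq i j _ (hadd_mem hn hmM) hi' hj']
    exact hcross hn hmM hij hi' hj'
  -- there exist A, B ∈ supp with A = B + d
  have hAB : ∃ A B : ℕ, A ∈ supp Ω ∧ B ∈ supp Ω ∧ A = B + d := by
    have hadd0 : ∀ {a a' : ℕ}, (a ∈ supp Ω ∨ a = 0) → (a' ∈ supp Ω ∨ a' = 0) →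
        (a + a' ∈ supp Ω ∨ a + a' = 0) := by
      rintro a a' (h | rfl) (h' | rfl)
      · exact Or.inl (hadd_mem h h')
      · exact Or.inl (by simpa using h)
      · exact Or.inl (by simpa using h')
      · exact Or.inr rfl
    let G : AddSubgroup ℤ :=
      { carrier := {x | ∃ a b : ℕ, (a ∈ supp Ω ∨ a = 0) ∧ (b ∈ supp Ω ∨ b = 0) ∧
          x = (a : ℤ) - b}
        zero_mem' := ⟨0, 0, Or.inr rfl, Or.inr rfl, by simp⟩
        add_mem' := by
          rintro x y ⟨a, b, ha, hb, rfl⟩ ⟨a', b', ha', hb', rfl⟩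
          exact ⟨a + a', b + b', hadd0 ha ha', hadd0 hb hb', by push_cast; ring⟩
        neg_mem' := by
          rintro x ⟨a, b, ha, hb, rfl⟩
          exact ⟨b, a, hb, ha, by ring⟩ }
    obtain ⟨g, hg⟩ := Int.subgroup_cyclic G
    have hsuppG : ∀ n ∈ supp Ω, (n : ℤ) ∈ G :=
      fun n hn => ⟨n, 0, Or.inl hn, Or.inr rfl, by simp⟩
    have hgnat : ∀ n ∈ supp Ω, g.natAbs ∣ n := by
      intro n hn
      have h1 : (n : ℤ) ∈ AddSubgroup.closure {g} := by rw [← hg]; exact hsuppG n hn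
      obtain ⟨k, hk⟩ := AddSubgroup.mem_closure_singleton.mp h1
      have : g ∣ (n : ℤ) := ⟨k, by rw [← hk, zsmul_eq_mul, Int.cast_id, mul_comm]⟩
      have := Int.natAbs_dvd_natAbs.mpr this
      simpa using this
    have h1 : g.natAbs ∣ d := hgcd _ hgnat
    have hgG : g ∈ G := by
      rw [hg]; exact AddSubgroup.subset_closure rfl
    obtain ⟨a, b, ha, hb, hab⟩ := hgG
    have hda : (d : ℤ) ∣ (a : ℤ) := by
      rcases ha with ha | rfl
      · exact Int.natCast_dvd_natCast.mpr (hdvd a ha)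
      · simp
    have hdb : (d : ℤ) ∣ (b : ℤ) := by
      rcases hb with hb | rfl
      · exact Int.natCast_dvd_natCast.mpr (hdvd b hb)
      · simp
    have h2 : (d : ℤ) ∣ g := hab ▸ dvd_sub hda hdb
    have h2' : d ∣ g.natAbs := Int.natCast_dvd_natCast.mp (Int.dvd_natAbs.mpr h2)
    have hgd : g.natAbs = d := Nat.dvd_antisymm h1 h2'
    have hdG : (d : ℤ) ∈ G := by
      rcases Int.natAbs_eq g with h | h
      · have : (d : ℤ) = g := by rw [h, hgd]
        rw [this]; exact (by rw [hg]; exact AddSubgroup.subset_closure rfl)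
      · have : (d : ℤ) = -g := by rw [h, hgd]; ring
        rw [this]; exact neg_mem (by rw [hg]; exact AddSubgroup.subset_closure rfl)
    obtain ⟨a', b', ha', hb', hab'⟩ := hdG
    have hAeq : a' = b' + d := by omega
    have hmem : ∀ {c : ℕ}, (c ∈ supp Ω ∨ c = 0) → c + n₀ ∈ supp Ω := by
      rintro c (h | rfl)
      · exact hadd_mem h hn₀
      · simpa using hn₀
    exact ⟨a' + n₀, b' + n₀, hmem ha', hmem hb', by omega⟩
  obtain ⟨A, B, hA, hB, hABd⟩ := hAB
  -- shift invariance by d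
  have hdshift : ∀ i j : ℕ, E (i + d) (j + d) = E i j := by
    intro i j
    have h1 := hshift B hB (i + d) (j + d)
    have h2 := hshift A hA i j
    rw [← h1, show i + d + B = i + A by omega, show j + d + B = j + A by omega]
    exact h2
  have hsd : ∀ (s i j : ℕ), E (i + s * d) (j + s * d) = E i j := by
    intro s
    induction s with
    | zero => simp
    | succ s ih =>
      intro i j
      rw [show i + (s + 1) * d = (i + d) + s * d by ring,
        show j + (s + 1) * d = (j + d) + s * d by ring, ih, hdshift]
  -- block vanishing
  have hblk : ∀ i j : ℕ, i / d < j / d → E i j = O ∧ E j i = O := by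
    intro i j hij
    set e := n₀ / d with he
    have hed : e * d = n₀ := Nat.div_mul_cancel (hdvd n₀ hn₀)
    have he1 : 0 < e := by
      rcases Nat.eq_zero_or_pos e with h0 | h0
      · rw [h0] at hed; simp at hed; omega
      · exact h0
    set t := i / d + 1 with ht
    set s := (t + 1) * e - t with hs
    have hts : t + s = (t + 1) * e := by
      have : t + 1 ≤ (t + 1) * e := Nat.le_mul_of_pos_right _ he1
      omega
    have htd : t * d = (i / d) * d + d := by rw [ht, Nat.succ_mul]
    have hi1 : i < t * d := by
      have h1 := Nat.mod_add_div' i d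
      have h2 : i % d < d := Nat.mod_lt i hd0
      omega
    have hj1 : t * d ≤ j := by
      have h1 : t ≤ j / d := by omega
      have h2 : t * d ≤ (j / d) * d := Nat.mul_le_mul_right d h1
      have h3 : (j / d) * d ≤ j := Nat.div_mul_le_self j d
      omega
    have hq : (t + 1) * n₀ ∈ supp Ω := hmul_mem (t + 1) (Nat.succ_pos t) hn₀
    have key : (t + s) * d = (t + 1) * n₀ := by rw [hts, ← hed]; ring
    have hexp : (t + s) * d = t * d + s * d := by ring
    have h5 : i + s * d < (t + 1) * n₀ := by rw [← key, hexp]; omega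
    have h6 : (t + 1) * n₀ ≤ j + s * d := by rw [← key, hexp]; omega
    constructor
    · rw [← hsd s i j]
      exact hcrossO _ hq _ _ (Or.inl ⟨h5, h6⟩)
    · rw [← hsd s j i]
      exact hcrossO _ hq _ _ (Or.inr ⟨h5, h6⟩)
  -- conclusion
  refine ⟨fun a b => E a.1 b.1, ?_⟩
  intro n hn
  funext i j
  have hE : Xst n i j = E i.1 j.1 := (hEeq i.1 j.1 n hn i.isLt j.isLt).symm
  show Xst n i j = castMat _ (repSum O (n / d) (fun a b => E a.1 b.1)) i j
  simp only [castMat, repSum, Fin.coe_cast]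
  rw [hE]
  split_ifs with h
  · show E i.1 j.1 = E (i.1 % d) (j.1 % d)
    conv_lhs => rw [← Nat.mod_add_div' i.1 d, ← Nat.mod_add_div' j.1 d]
    rw [h]
    exact hsd (j.1 / d) _ _
  · rcases Nat.lt_or_ge (i.1 / d) (j.1 / d) with h' | h'
    · exact (hblk _ _ h').1
    · have h'' : j.1 / d < i.1 / d := by omega
      exact (hblk _ _ h'').2

end NCPaper
end

section
/- Let R be a unital ring, M a bimodule over R, O = 0 ∈ M, let Ω ⊆ M_nc respect direct sums of matrices with supp Ω nonempty, and let f : Ω → Ω be a nc function (f respects matrix sizes, direct sums, and intertwinings) such that for every n ∈ supp Ω the mapping f restricted to Ω_n has a unique fixed point X_{*n}. Let d = gcd{n : n ∈ supp Ω}, and let X_* ∈ M^{d×d} be the matrix with X_{*n} = ⊕_{α=1}^{n/d} X_* for every n ∈ supp Ω. Then there exist a set Ω̃ ⊆ M_nc respecting direct sums with Ω̃ ⊇ Ω and supp Ω̃ = {kd : k ∈ ℕ, k ≥ 1}, and a nc function f̃ : Ω̃ → Ω̃ (respecting matrix sizes, direct sums, and intertwinings) such that f̃ restricted to Ω equals f,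 and for every n ∈ supp Ω̃ the mapping f̃ restricted to Ω̃_n has a unique fixed point, namely ⊕_{α=1}^{n/d} X_*. -/
namespace NCPaper

variable {S : Type*}

/-- Left action of a matrix over the ring `R` on a matrix over the bimodule `M`. -/
def lAct (R : Type*) {M : Type*} [Ring R] [AddCommGroup M] [Module R M]
    {n m p : ℕ} (T : Matrix (Fin n) (Fin m) R) (Y : Matrix (Fin m) (Fin p) M) :
    Matrix (Fin n) (Fin p) M := fun i j => ∑ k, T i k • Y k j

/-- Right action of a matrix over the ring `R` on a matrix over the bimodule `M`
(the right `R`-module structure on `M` is given by a module structure over `Rᵐᵒᵖ`). -/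
def rAct (R : Type*) {M : Type*} [Ring R] [AddCommGroup M] [Module Rᵐᵒᵖ M]
    {n m p : ℕ} (X : Matrix (Fin n) (Fin m) M) (T : Matrix (Fin m) (Fin p) R) :
    Matrix (Fin n) (Fin p) M := fun i j => ∑ k, MulOpposite.op (T k j) • X i k

/-- A size- and direct-sum-respecting mapping respects intertwinings (so is a nc function):
`XT = TY` implies `f(X)T = Tf(Y)`. -/
def RespectsIntertwinings (R : Type*) {M : Type*} [Ring R] [AddCommGroup M]
    [Module R M] [Module Rᵐᵒᵖ M]
    (Ω : ∀ n : ℕ, Set (Matrix (Fin n) (Fin n) M))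
    (f : ∀ n : ℕ, Matrix (Fin n) (Fin n) M → Matrix (Fin n) (Fin n) M) : Prop :=
  ∀ ⦃n m : ℕ⦄ (X : Matrix (Fin n) (Fin n) M) (Y : Matrix (Fin m) (Fin m) M)
    (T : Matrix (Fin n) (Fin m) R), X ∈ Ω n → Y ∈ Ω m →
    rAct R X T = lAct R T Y → rAct R (f n X) T = lAct R T (f m Y)

section Aux

variable {S : Type*}

lemma dSum_cc (O : S) {n m : ℕ} (X : Matrix (Fin n) (Fin n) S) (Y : Matrix (Fin m) (Fin m) S)
    (i j : Fin n) : dSum O X Y (Fin.castAdd m i) (Fin.castAdd m j) = X i j := by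
  simp [dSum, i.isLt, j.isLt]

lemma dSum_cn (O : S) {n m : ℕ} (X : Matrix (Fin n) (Fin n) S) (Y : Matrix (Fin m) (Fin m) S)
    (i : Fin n) (j : Fin m) : dSum O X Y (Fin.castAdd m i) (Fin.natAdd n j) = O := by
  simp [dSum, i.isLt]

lemma dSum_nc (O : S) {n m : ℕ} (X : Matrix (Fin n) (Fin n) S) (Y : Matrix (Fin m) (Fin m) S)
    (i : Fin m) (j : Fin n) : dSum O X Y (Fin.natAdd n i) (Fin.castAdd m j) = O := by
  simp [dSum, j.isLt]

lemma dSum_nn (O : S) {n m : ℕ} (X : Matrix (Fin n) (Fin n) S) (Y : Matrix (Fin m) (Fin m) S)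
    (i j : Fin m) : dSum O X Y (Fin.natAdd n i) (Fin.natAdd n j) = Y i j := by
  simp [dSum]

lemma dSum_inj {O : S} {n m : ℕ} {X X' : Matrix (Fin n) (Fin n) S}
    {Y Y' : Matrix (Fin m) (Fin m) S} (h : dSum O X Y = dSum O X' Y') : X = X' ∧ Y = Y' := by
  constructor
  · funext i j
    have := congrFun (congrFun h (Fin.castAdd m i)) (Fin.castAdd m j)
    rwa [dSum_cc, dSum_cc] at this
  · funext i j
    have := congrFun (congrFun h (Fin.natAdd n i)) (Fin.natAdd n j)
    rwa [dSum_nn, dSum_nn] at this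

/-- the block pattern `⊕ Xs` at any size, defined entrywise. -/
def XP (O : S) {d : ℕ} (hd : 0 < d) (Xs : Matrix (Fin d) (Fin d) S) (n : ℕ) :
    Matrix (Fin n) (Fin n) S := fun i j =>
  if (i : ℕ) / d = (j : ℕ) / d then
    Xs ⟨(i : ℕ) % d, Nat.mod_lt _ hd⟩ ⟨(j : ℕ) % d, Nat.mod_lt _ hd⟩ else O

lemma castMat_repSum {O : S} {d k n : ℕ} (hd : 0 < d) (h : k * d = n)
    (Xs : Matrix (Fin d) (Fin d) S) : castMat h (repSum O k Xs) = XP O hd Xs n := by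
  funext i j
  simp only [castMat, repSum, XP, Fin.coe_cast]

lemma castMat_XP {O : S} {d n m : ℕ} (hd : 0 < d) (h : n = m) (Xs : Matrix (Fin d) (Fin d) S) :
    castMat h (XP O hd Xs n) = XP O hd Xs m := by
  funext i j
  simp only [castMat, XP, Fin.coe_cast]

lemma XP_d {O : S} {d : ℕ} (hd : 0 < d) (Xs : Matrix (Fin d) (Fin d) S) :
    XP O hd Xs d = Xs := by
  funext i j
  simp only [XP, Nat.div_eq_of_lt i.isLt, Nat.div_eq_of_lt j.isLt, if_true]
  congr 1 <;> exact Fin.ext (Nat.mod_eq_of_lt (Fin.isLt _))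

lemma XP_apply_lt {O : S} {d n : ℕ} (hd : 0 < d) (Xs : Matrix (Fin d) (Fin d) S)
    {i j : Fin n} (hi : (i : ℕ) < d) (hj : (j : ℕ) < d) :
    XP O hd Xs n i j = Xs ⟨i, hi⟩ ⟨j, hj⟩ := by
  simp only [XP, Nat.div_eq_of_lt hi, Nat.div_eq_of_lt hj, if_true]
  congr 1 <;> exact Fin.ext (Nat.mod_eq_of_lt (by assumption))

lemma XP_apply_ne {O : S} {d n : ℕ} (hd : 0 < d) (Xs : Matrix (Fin d) (Fin d) S)
    {i j : Fin n} (hij : (i : ℕ) / d ≠ (j : ℕ) / d) :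
    XP O hd Xs n i j = O := by
  simp only [XP, hij, if_false]

lemma XP_dSum {O : S} {d n₁ n₂ : ℕ} (hd : 0 < d) (Xs : Matrix (Fin d) (Fin d) S)
    (h1 : d ∣ n₁) :
    dSum O (XP O hd Xs n₁) (XP O hd Xs n₂) = XP O hd Xs (n₁ + n₂) := by
  obtain ⟨a, rfl⟩ := h1
  funext i j
  rcases lt_or_ge (i : ℕ) (d * a) with hi | hi
  · rcases lt_or_ge (j : ℕ) (d * a) with hj | hj
    · have : dSum O (XP O hd Xs (d*a)) (XP O hd Xs n₂) i j
          = XP O hd Xs (d*a) ⟨i, hi⟩ ⟨j, hj⟩ := by simp [dSum, hi, hj]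
      rw [this]
      simp only [XP]
    · have : dSum O (XP O hd Xs (d*a)) (XP O hd Xs n₂) i j = O := by
        simp [dSum, hi, Nat.not_lt.mpr hj]
      rw [this, XP_apply_ne]
      have h1 : (i : ℕ) / d < a := Nat.div_lt_of_lt_mul (by omega)
      have h2 : a ≤ (j : ℕ) / d := (Nat.le_div_iff_mul_le hd).mpr (by rw [Nat.mul_comm]; exact hj)
      omega
  · rcases lt_or_ge (j : ℕ) (d * a) with hj | hj
    · have : dSum O (XP O hd Xs (d*a)) (XP O hd Xs n₂) i j = O := by
        simp [dSum, Nat.not_lt.mpr hi, hj]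
      rw [this, XP_apply_ne]
      have h1 : (j : ℕ) / d < a := Nat.div_lt_of_lt_mul (by omega)
      have h2 : a ≤ (i : ℕ) / d := (Nat.le_div_iff_mul_le hd).mpr (by rw [Nat.mul_comm]; exact hi)
      omega
    · have : dSum O (XP O hd Xs (d*a)) (XP O hd Xs n₂) i j
          = XP O hd Xs n₂ ⟨(i:ℕ) - d*a, by have := i.isLt; omega⟩
              ⟨(j:ℕ) - d*a, by have := j.isLt; omega⟩ := by
        simp [dSum, Nat.not_lt.mpr hi, Nat.not_lt.mpr hj]
      rw [this]
      obtain ⟨ri, hri⟩ : ∃ r, (i : ℕ) = d * a + r := ⟨(i:ℕ) - d*a, by omega⟩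
      obtain ⟨rj, hrj⟩ : ∃ r, (j : ℕ) = d * a + r := ⟨(j:ℕ) - d*a, by omega⟩
      simp only [XP, hri, hrj, Nat.add_sub_cancel_left, Nat.mul_add_div hd, Nat.mul_add_mod]
      split_ifs with h h' <;> first | rfl | omega

end Aux
section Aux2
set_option linter.unusedSectionVars false

variable {R M : Type*} [Ring R] [AddCommGroup M] [Module R M] [Module Rᵐᵒᵖ M]

lemma rAct_one {n m : ℕ} (X : Matrix (Fin n) (Fin m) M) : rAct R X (1 : Matrix (Fin m) (Fin m) R) = X := by
  funext i j
  simp only [rAct, Matrix.one_apply]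
  rw [Finset.sum_eq_single j]
  · simp
  · intro b _ hb
    simp [hb]
  · simp

lemma lAct_one {n m : ℕ} (Y : Matrix (Fin n) (Fin m) M) : lAct R (1 : Matrix (Fin n) (Fin n) R) Y = Y := by
  funext i j
  simp only [lAct, Matrix.one_apply]
  rw [Finset.sum_eq_single i]
  · simp
  · intro b _ hb
    simp [Ne.symm hb]
  · simp

lemma sum_dite_lt {β : Type*} [AddCommMonoid β] {a b : ℕ} (hab : a ≤ b) (g : Fin a → β) :
    (∑ c : Fin b, if h : (c : ℕ) < a then g ⟨c, h⟩ else 0) = ∑ v : Fin a, g v := by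
  set g' : ℕ → β := fun x => if h : x < a then g ⟨x, h⟩ else 0 with hg'
  have h1 : (∑ c : Fin b, if h : (c : ℕ) < a then g ⟨c, h⟩ else 0) = ∑ x ∈ Finset.range b, g' x := by
    rw [Finset.sum_range fun x => g' x]
  have h2 : (∑ v : Fin a, g v) = ∑ x ∈ Finset.range a, g' x := by
    rw [Finset.sum_range fun x => g' x]
    apply Finset.sum_congr rfl
    intro x _
    simp [hg', x.isLt]
  rw [h1, h2]
  symm
  apply Finset.sum_subset (Finset.range_subset_range.mpr hab)
  intro x _ hx
  simp only [Finset.mem_range, not_lt] at hx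
  simp [hg', Nat.not_lt.mpr hx]

/-- The inductive closure: `Frel n X Y` means `X` decomposes as an ordered direct sum of
`Ω`-elements and copies of `Xs`, and `Y` is the result of applying `f` blockwise. -/
inductive Frel (Ω : ∀ n : ℕ, Set (Matrix (Fin n) (Fin n) M))
    (f : ∀ n : ℕ, Matrix (Fin n) (Fin n) M → Matrix (Fin n) (Fin n) M)
    (d : ℕ) (Xs : Matrix (Fin d) (Fin d) M) :
    ∀ n : ℕ, Matrix (Fin n) (Fin n) M → Matrix (Fin n) (Fin n) M → Prop
  | base {n : ℕ} {X : Matrix (Fin n) (Fin n) M} (hX : X ∈ Ω n) : Frel Ω f d Xs n X (f n X)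
  | xs : Frel Ω f d Xs d Xs Xs
  | sum {n m : ℕ} {X X' : Matrix (Fin n) (Fin n) M} {Y Y' : Matrix (Fin m) (Fin m) M}
      (hX : Frel Ω f d Xs n X X') (hY : Frel Ω f d Xs m Y Y') :
      Frel Ω f d Xs (n + m) (dSum 0 X Y) (dSum 0 X' Y')

lemma Frel.cast {Ω : ∀ n : ℕ, Set (Matrix (Fin n) (Fin n) M)}
    {f : ∀ n : ℕ, Matrix (Fin n) (Fin n) M → Matrix (Fin n) (Fin n) M}
    {d : ℕ} {Xs : Matrix (Fin d) (Fin d) M} {n m : ℕ} (h : n = m)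
    {X Y : Matrix (Fin n) (Fin n) M} (hf : Frel Ω f d Xs n X Y) :
    Frel Ω f d Xs m (castMat h X) (castMat h Y) := by
  subst h
  have : ∀ Z : Matrix (Fin n) (Fin n) M, castMat rfl Z = Z := fun Z => rfl
  rw [this, this]
  exact hf

end Aux2
section Aux3
set_option linter.unusedSectionVars false

variable {R M : Type*} [Ring R] [AddCommGroup M] [Module R M] [Module Rᵐᵒᵖ M]

lemma colSplit {n m₁ m₂ : ℕ} (A A' : Matrix (Fin n) (Fin n) M)
    (Y₁ Y₁' : Matrix (Fin m₁) (Fin m₁) M) (Y₂ Y₂' : Matrix (Fin m₂) (Fin m₂) M)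
    (ih1 : ∀ T : Matrix (Fin n) (Fin m₁) R, rAct R A T = lAct R T Y₁ → rAct R A' T = lAct R T Y₁')
    (ih2 : ∀ T : Matrix (Fin n) (Fin m₂) R, rAct R A T = lAct R T Y₂ → rAct R A' T = lAct R T Y₂')
    (T : Matrix (Fin n) (Fin (m₁ + m₂)) R)
    (hT : rAct R A T = lAct R T (dSum 0 Y₁ Y₂)) :
    rAct R A' T = lAct R T (dSum 0 Y₁' Y₂') := by
  set T₁ : Matrix (Fin n) (Fin m₁) R := fun i k => T i (Fin.castAdd m₂ k) with hT₁
  set T₂ : Matrix (Fin n) (Fin m₂) R := fun i k => T i (Fin.natAdd m₁ k) with hT₂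
  have e1 : ∀ (B₁ : Matrix (Fin m₁) (Fin m₁) M) (B₂ : Matrix (Fin m₂) (Fin m₂) M)
      (i : Fin n) (k : Fin m₁),
      lAct R T (dSum 0 B₁ B₂) i (Fin.castAdd m₂ k) = lAct R T₁ B₁ i k := by
    intro B₁ B₂ i k
    simp only [lAct, Fin.sum_univ_add, dSum_cc, dSum_nc, smul_zero,
      Finset.sum_const_zero, add_zero]
    rfl
  have e2 : ∀ (B₁ : Matrix (Fin m₁) (Fin m₁) M) (B₂ : Matrix (Fin m₂) (Fin m₂) M)
      (i : Fin n) (k : Fin m₂),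
      lAct R T (dSum 0 B₁ B₂) i (Fin.natAdd m₁ k) = lAct R T₂ B₂ i k := by
    intro B₁ B₂ i k
    simp only [lAct, Fin.sum_univ_add, dSum_cn, dSum_nn, smul_zero,
      Finset.sum_const_zero, zero_add]
    rfl
  have hr1 : ∀ (X : Matrix (Fin n) (Fin n) M) (i : Fin n) (k : Fin m₁),
      rAct R X T i (Fin.castAdd m₂ k) = rAct R X T₁ i k := fun _ _ _ => rfl
  have hr2 : ∀ (X : Matrix (Fin n) (Fin n) M) (i : Fin n) (k : Fin m₂),
      rAct R X T i (Fin.natAdd m₁ k) = rAct R X T₂ i k := fun _ _ _ => rfl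
  have g1 : rAct R A' T₁ = lAct R T₁ Y₁' := by
    apply ih1
    funext i k
    rw [← hr1 A i k, hT, e1]
  have g2 : rAct R A' T₂ = lAct R T₂ Y₂' := by
    apply ih2
    funext i k
    rw [← hr2 A i k, hT, e2]
  funext i j
  refine Fin.addCases (fun k => ?_) (fun k => ?_) j
  · calc rAct R A' T i (Fin.castAdd m₂ k) = rAct R A' T₁ i k := rfl
      _ = lAct R T₁ Y₁' i k := by rw [g1]
      _ = lAct R T (dSum 0 Y₁' Y₂') i (Fin.castAdd m₂ k) := (e1 Y₁' Y₂' i k).symm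
  · calc rAct R A' T i (Fin.natAdd m₁ k) = rAct R A' T₂ i k := rfl
      _ = lAct R T₂ Y₂' i k := by rw [g2]
      _ = lAct R T (dSum 0 Y₁' Y₂') i (Fin.natAdd m₁ k) := (e2 Y₁' Y₂' i k).symm

lemma rowSplit {n₁ n₂ m : ℕ} (X₁ X₁' : Matrix (Fin n₁) (Fin n₁) M)
    (X₂ X₂' : Matrix (Fin n₂) (Fin n₂) M) (Y Y' : Matrix (Fin m) (Fin m) M)
    (ih1 : ∀ T : Matrix (Fin n₁) (Fin m) R, rAct R X₁ T = lAct R T Y → rAct R X₁' T = lAct R T Y')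
    (ih2 : ∀ T : Matrix (Fin n₂) (Fin m) R, rAct R X₂ T = lAct R T Y → rAct R X₂' T = lAct R T Y')
    (T : Matrix (Fin (n₁ + n₂)) (Fin m) R)
    (hT : rAct R (dSum 0 X₁ X₂) T = lAct R T Y) :
    rAct R (dSum 0 X₁' X₂') T = lAct R T Y' := by
  set T₁ : Matrix (Fin n₁) (Fin m) R := fun k j => T (Fin.castAdd n₂ k) j with hT₁
  set T₂ : Matrix (Fin n₂) (Fin m) R := fun k j => T (Fin.natAdd n₁ k) j with hT₂
  have e1 : ∀ (B₁ : Matrix (Fin n₁) (Fin n₁) M) (B₂ : Matrix (Fin n₂) (Fin n₂) M)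
      (i : Fin n₁) (j : Fin m),
      rAct R (dSum 0 B₁ B₂) T (Fin.castAdd n₂ i) j = rAct R B₁ T₁ i j := by
    intro B₁ B₂ i j
    simp only [rAct, Fin.sum_univ_add, dSum_cc, dSum_cn, smul_zero,
      Finset.sum_const_zero, add_zero]
    rfl
  have e2 : ∀ (B₁ : Matrix (Fin n₁) (Fin n₁) M) (B₂ : Matrix (Fin n₂) (Fin n₂) M)
      (i : Fin n₂) (j : Fin m),
      rAct R (dSum 0 B₁ B₂) T (Fin.natAdd n₁ i) j = rAct R B₂ T₂ i j := by
    intro B₁ B₂ i j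
    simp only [rAct, Fin.sum_univ_add, dSum_nc, dSum_nn, smul_zero,
      Finset.sum_const_zero, zero_add]
    rfl
  have hl1 : ∀ (Z : Matrix (Fin m) (Fin m) M) (i : Fin n₁) (j : Fin m),
      lAct R T Z (Fin.castAdd n₂ i) j = lAct R T₁ Z i j := fun _ _ _ => rfl
  have hl2 : ∀ (Z : Matrix (Fin m) (Fin m) M) (i : Fin n₂) (j : Fin m),
      lAct R T Z (Fin.natAdd n₁ i) j = lAct R T₂ Z i j := fun _ _ _ => rfl
  have g1 : rAct R X₁' T₁ = lAct R T₁ Y' := by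
    apply ih1
    funext i j
    rw [← e1 X₁ X₂ i j, hT, hl1]
  have g2 : rAct R X₂' T₂ = lAct R T₂ Y' := by
    apply ih2
    funext i j
    rw [← e2 X₁ X₂ i j, hT, hl2]
  funext i j
  refine Fin.addCases (fun k => ?_) (fun k => ?_) i
  · calc rAct R (dSum 0 X₁' X₂') T (Fin.castAdd n₂ k) j = rAct R X₁' T₁ k j := e1 X₁' X₂' k j
      _ = lAct R T₁ Y' k j := by rw [g1]
      _ = lAct R T Y' (Fin.castAdd n₂ k) j := (hl1 Y' k j).symm
  · calc rAct R (dSum 0 X₁' X₂') T (Fin.natAdd n₁ k) j = rAct R X₂' T₂ k j := e2 X₁' X₂' k j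
      _ = lAct R T₂ Y' k j := by rw [g2]
      _ = lAct R T Y' (Fin.natAdd n₁ k) j := (hl2 Y' k j).symm

end Aux3
section Aux4
set_option linter.unusedSectionVars false

variable {R M : Type*} [Ring R] [AddCommGroup M] [Module R M] [Module Rᵐᵒᵖ M]

lemma baseXs {d n0 : ℕ} (hd : 0 < d) (hdn0 : d ≤ n0)
    (Ω : ∀ n : ℕ, Set (Matrix (Fin n) (Fin n) M))
    (f : ∀ n : ℕ, Matrix (Fin n) (Fin n) M → Matrix (Fin n) (Fin n) M)
    (Xs : Matrix (Fin d) (Fin d) M)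
    (hint : RespectsIntertwinings R Ω f)
    (hX0 : XP (0:M) hd Xs n0 ∈ Ω n0)
    (hfix0 : f n0 (XP (0:M) hd Xs n0) = XP (0:M) hd Xs n0)
    {a : ℕ} {A : Matrix (Fin a) (Fin a) M} (hA : A ∈ Ω a)
    (T : Matrix (Fin a) (Fin d) R) (hT : rAct R A T = lAct R T Xs) :
    rAct R (f a A) T = lAct R T Xs := by
  set X0 := XP (0:M) hd Xs n0 with hX0def
  set T' : Matrix (Fin a) (Fin n0) R := fun i c => if h : (c:ℕ) < d then T i ⟨c, h⟩ else 0
    with hT'def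
  have hTT' : ∀ (Z : Matrix (Fin a) (Fin a) M) (i : Fin a) (j : Fin d),
      rAct R Z T' i (Fin.castLE hdn0 j) = rAct R Z T i j := by
    intro Z i j
    apply Finset.sum_congr rfl
    intro k _
    have h1 : T' k (Fin.castLE hdn0 j) = T k j := by
      simp only [hT'def, Fin.coe_castLE, j.isLt, dif_pos, Fin.eta]
    rw [h1]
  have rA : ∀ (Z : Matrix (Fin a) (Fin a) M) (i : Fin a) (c : Fin n0),
      rAct R Z T' i c = if h : (c:ℕ) < d then rAct R Z T i ⟨c, h⟩ else 0 := by
    intro Z i c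
    by_cases h : (c:ℕ) < d
    · rw [dif_pos h]
      apply Finset.sum_congr rfl
      intro k _
      rw [show T' k c = T k ⟨c, h⟩ from by simp only [hT'def, dif_pos h]]
    · rw [dif_neg h]
      have : ∀ k : Fin a, MulOpposite.op (T' k c) • Z i k = 0 := by
        intro k
        rw [show T' k c = 0 from by simp only [hT'def, dif_neg h]]
        simp
      simp only [rAct, this, Finset.sum_const_zero]
  have lA : ∀ (i : Fin a) (c : Fin n0),
      lAct R T' X0 i c = ∑ v : Fin d, T i v • X0 (Fin.castLE hdn0 v) c := by
    intro i c
    calc lAct R T' X0 i c = ∑ c' : Fin n0, T' i c' • X0 c' c := rfl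
      _ = ∑ c' : Fin n0, (if h : (c':ℕ) < d then
            T i ⟨(c':ℕ), h⟩ • X0 (Fin.castLE hdn0 ⟨(c':ℕ), h⟩) c else 0) := by
          apply Finset.sum_congr rfl
          intro c' _
          by_cases h : (c':ℕ) < d
          · rw [dif_pos h, show T' i c' = T i ⟨(c':ℕ), h⟩ from by simp only [hT'def, dif_pos h]]
            congr 1
          · rw [dif_neg h, show T' i c' = 0 from by simp only [hT'def, dif_neg h], zero_smul]
      _ = ∑ v : Fin d, T i v • X0 (Fin.castLE hdn0 v) c :=
          sum_dite_lt hdn0 (fun v => T i v • X0 (Fin.castLE hdn0 v) c)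
  have claim1 : rAct R A T' = lAct R T' X0 := by
    funext i c
    rw [rA, lA]
    by_cases h : (c:ℕ) < d
    · rw [dif_pos h, hT]
      have : ∀ v : Fin d, X0 (Fin.castLE hdn0 v) c = Xs v ⟨(c:ℕ), h⟩ := by
        intro v
        rw [hX0def, XP_apply_lt hd Xs (by simpa using v.isLt) h]
        congr 1
      simp only [this]
      rfl
    · rw [dif_neg h]
      have : ∀ v : Fin d, X0 (Fin.castLE hdn0 v) c = 0 := by
        intro v
        rw [hX0def]
        apply XP_apply_ne
        have h1 : ((Fin.castLE hdn0 v : Fin n0) : ℕ) / d = 0 := Nat.div_eq_of_lt (by simpa using v.isLt)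
        have h2 : 0 < (c:ℕ) / d := Nat.div_pos (le_of_not_gt h) hd
        omega
      simp [this]
  have claim2 : rAct R (f a A) T' = lAct R T' X0 := by
    have := hint A X0 T' hA hX0 claim1
    rwa [hfix0] at this
  funext i j
  calc rAct R (f a A) T i j = rAct R (f a A) T' i (Fin.castLE hdn0 j) := (hTT' _ i j).symm
    _ = lAct R T' X0 i (Fin.castLE hdn0 j) := by rw [claim2]
    _ = rAct R A T' i (Fin.castLE hdn0 j) := by rw [claim1]
    _ = rAct R A T i j := hTT' _ i j
    _ = lAct R T Xs i j := by rw [hT]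

lemma xsBase {d n0 : ℕ} (hd : 0 < d) (hdn0 : d ≤ n0)
    (Ω : ∀ n : ℕ, Set (Matrix (Fin n) (Fin n) M))
    (f : ∀ n : ℕ, Matrix (Fin n) (Fin n) M → Matrix (Fin n) (Fin n) M)
    (Xs : Matrix (Fin d) (Fin d) M)
    (hint : RespectsIntertwinings R Ω f)
    (hX0 : XP (0:M) hd Xs n0 ∈ Ω n0)
    (hfix0 : f n0 (XP (0:M) hd Xs n0) = XP (0:M) hd Xs n0)
    {b : ℕ} {B : Matrix (Fin b) (Fin b) M} (hB : B ∈ Ω b)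
    (T : Matrix (Fin d) (Fin b) R) (hT : rAct R Xs T = lAct R T B) :
    rAct R Xs T = lAct R T (f b B) := by
  set X0 := XP (0:M) hd Xs n0 with hX0def
  set T' : Matrix (Fin n0) (Fin b) R := fun c j => if h : (c:ℕ) < d then T ⟨c, h⟩ j else 0
    with hT'def
  have hTT' : ∀ (Z : Matrix (Fin b) (Fin b) M) (c : Fin d) (j : Fin b),
      lAct R T' Z (Fin.castLE hdn0 c) j = lAct R T Z c j := by
    intro Z c j
    apply Finset.sum_congr rfl
    intro k _
    have h1 : T' (Fin.castLE hdn0 c) k = T c k := by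
      simp only [hT'def, Fin.coe_castLE, c.isLt, dif_pos, Fin.eta]
    rw [h1]
  have lA : ∀ (Z : Matrix (Fin b) (Fin b) M) (c : Fin n0) (j : Fin b),
      lAct R T' Z c j = if h : (c:ℕ) < d then lAct R T Z ⟨c, h⟩ j else 0 := by
    intro Z c j
    by_cases h : (c:ℕ) < d
    · rw [dif_pos h]
      apply Finset.sum_congr rfl
      intro k _
      rw [show T' c k = T ⟨c, h⟩ k from by simp only [hT'def, dif_pos h]]
    · rw [dif_neg h]
      have : ∀ k : Fin b, T' c k • Z k j = 0 := by
        intro k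
        rw [show T' c k = 0 from by simp only [hT'def, dif_neg h], zero_smul]
      simp only [lAct, this, Finset.sum_const_zero]
  have rA : ∀ (c : Fin n0) (j : Fin b),
      rAct R X0 T' c j = ∑ v : Fin d, MulOpposite.op (T v j) • X0 c (Fin.castLE hdn0 v) := by
    intro c j
    calc rAct R X0 T' c j = ∑ c' : Fin n0, MulOpposite.op (T' c' j) • X0 c c' := rfl
      _ = ∑ c' : Fin n0, (if h : (c':ℕ) < d then
            MulOpposite.op (T ⟨(c':ℕ), h⟩ j) • X0 c (Fin.castLE hdn0 ⟨(c':ℕ), h⟩) else 0) := by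
          apply Finset.sum_congr rfl
          intro c' _
          by_cases h : (c':ℕ) < d
          · rw [dif_pos h, show T' c' j = T ⟨(c':ℕ), h⟩ j from by simp only [hT'def, dif_pos h]]
            congr 1
          · rw [dif_neg h, show T' c' j = 0 from by simp only [hT'def, dif_neg h]]
            simp
      _ = ∑ v : Fin d, MulOpposite.op (T v j) • X0 c (Fin.castLE hdn0 v) :=
          sum_dite_lt hdn0 (fun v => MulOpposite.op (T v j) • X0 c (Fin.castLE hdn0 v))
  have claim1 : rAct R X0 T' = lAct R T' B := by
    funext c j
    rw [rA, lA]
    by_cases h : (c:ℕ) < d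
    · rw [dif_pos h, ← hT]
      have : ∀ v : Fin d, X0 c (Fin.castLE hdn0 v) = Xs ⟨(c:ℕ), h⟩ v := by
        intro v
        rw [hX0def, XP_apply_lt hd Xs h (by simpa using v.isLt)]
        congr 1
      simp only [this]
      rfl
    · rw [dif_neg h]
      have : ∀ v : Fin d, X0 c (Fin.castLE hdn0 v) = 0 := by
        intro v
        rw [hX0def]
        apply XP_apply_ne
        have h1 : ((Fin.castLE hdn0 v : Fin n0) : ℕ) / d = 0 := Nat.div_eq_of_lt (by simpa using v.isLt)
        have h2 : 0 < (c:ℕ) / d := Nat.div_pos (le_of_not_gt h) hd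
        omega
      simp [this]
  have claim2 : rAct R X0 T' = lAct R T' (f b B) := by
    have := hint X0 B T' hX0 hB claim1
    rwa [hfix0] at this
  funext c j
  calc rAct R Xs T c j = lAct R T B c j := by rw [hT]
    _ = lAct R T' B (Fin.castLE hdn0 c) j := (hTT' _ c j).symm
    _ = rAct R X0 T' (Fin.castLE hdn0 c) j := by rw [claim1]
    _ = lAct R T' (f b B) (Fin.castLE hdn0 c) j := by rw [claim2]
    _ = lAct R T (f b B) c j := hTT' _ c j

end Aux4
section Aux5
set_option linter.unusedSectionVars false

variable {R M : Type*} [Ring R] [AddCommGroup M] [Module R M] [Module Rᵐᵒᵖ M]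

lemma key {d n0 : ℕ} (hd : 0 < d) (hdn0 : d ≤ n0)
    (Ω : ∀ n : ℕ, Set (Matrix (Fin n) (Fin n) M))
    (f : ∀ n : ℕ, Matrix (Fin n) (Fin n) M → Matrix (Fin n) (Fin n) M)
    (Xs : Matrix (Fin d) (Fin d) M)
    (hint : RespectsIntertwinings R Ω f)
    (hX0 : XP (0:M) hd Xs n0 ∈ Ω n0)
    (hfix0 : f n0 (XP (0:M) hd Xs n0) = XP (0:M) hd Xs n0)
    {n : ℕ} {X X' : Matrix (Fin n) (Fin n) M} (h1 : Frel Ω f d Xs n X X') :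
    ∀ {m : ℕ} {Y Y' : Matrix (Fin m) (Fin m) M}, Frel Ω f d Xs m Y Y' →
      ∀ T : Matrix (Fin n) (Fin m) R, rAct R X T = lAct R T Y → rAct R X' T = lAct R T Y' := by
  induction h1 with
  | @base a A hA =>
    intro m Y Y' h2
    induction h2 with
    | base hB => intro T hT; exact hint _ _ T hA hB hT
    | xs => intro T hT; exact baseXs hd hdn0 Ω f Xs hint hX0 hfix0 hA T hT
    | sum hY1 hY2 ih1 ih2 =>
      intro T hT
      exact colSplit A (f a A) _ _ _ _ ih1 ih2 T hT
  | xs =>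
    intro m Y Y' h2
    induction h2 with
    | base hB => intro T hT; exact xsBase hd hdn0 Ω f Xs hint hX0 hfix0 hB T hT
    | xs => intro T hT; exact hT
    | sum hY1 hY2 ih1 ih2 =>
      intro T hT
      exact colSplit Xs Xs _ _ _ _ ih1 ih2 T hT
  | @sum n1 n2 X1 X1' X2 X2' hX1 hX2 ih1 ih2 =>
    intro m Y Y' h2 T hT
    exact rowSplit X1 X1' X2 X2' Y Y' (fun T h => ih1 h2 T h) (fun T h => ih2 h2 T h) T hT

end Aux5
section Aux6
set_option linter.unusedSectionVars false

variable {R M : Type*} [Ring R] [AddCommGroup M] [Module R M] [Module Rᵐᵒᵖ M]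
variable {Ω : ∀ n : ℕ, Set (Matrix (Fin n) (Fin n) M)}
variable {f : ∀ n : ℕ, Matrix (Fin n) (Fin n) M → Matrix (Fin n) (Fin n) M}
variable {d : ℕ} {Xs : Matrix (Fin d) (Fin d) M}

lemma mem_supp_of_mem {n : ℕ} {X : Matrix (Fin n) (Fin n) M} (hΩ0 : Ω 0 = ∅)
    (hX : X ∈ Ω n) : n ∈ supp Ω := by
  refine ⟨Nat.pos_of_ne_zero ?_, ⟨X, hX⟩⟩
  rintro rfl
  rw [hΩ0] at hX
  exact hX

lemma frel_dvd (hΩ0 : Ω 0 = ∅) (hdvd : ∀ n ∈ supp Ω, d ∣ n)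
    {n : ℕ} {X Y : Matrix (Fin n) (Fin n) M} (h : Frel Ω f d Xs n X Y) : d ∣ n := by
  induction h with
  | base hX => exact hdvd _ (mem_supp_of_mem hΩ0 hX)
  | xs => exact dvd_rfl
  | sum h1 h2 ih1 ih2 => exact Nat.dvd_add ih1 ih2

lemma frel_next (hΩ0 : Ω 0 = ∅) (hmaps : ∀ n ∈ supp Ω, ∀ X ∈ Ω n, f n X ∈ Ω n)
    {n : ℕ} {X Y : Matrix (Fin n) (Fin n) M} (h : Frel Ω f d Xs n X Y) :
    ∃ W, Frel Ω f d Xs n Y W := by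
  induction h with
  | @base a A hA => exact ⟨f a (f a A), .base (hmaps a (mem_supp_of_mem hΩ0 hA) _ hA)⟩
  | xs => exact ⟨Xs, .xs⟩
  | sum h1 h2 ih1 ih2 =>
    obtain ⟨W1, hW1⟩ := ih1
    obtain ⟨W2, hW2⟩ := ih2
    exact ⟨dSum 0 W1 W2, hW1.sum hW2⟩

lemma frel_XP (hd : 0 < d) : ∀ k : ℕ, 1 ≤ k →
    Frel Ω f d Xs (k * d) (XP (0:M) hd Xs (k * d)) (XP (0:M) hd Xs (k * d)) := by
  intro k
  induction k with
  | zero => omega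
  | succ k ih =>
    intro _
    rcases Nat.eq_zero_or_pos k with rfl | hk
    · have h : d = 1 * d := (one_mul d).symm
      have hx := Frel.cast (Ω := Ω) (f := f) h (Frel.xs (Xs := Xs))
      rwa [show castMat h Xs = XP (0:M) hd Xs (1 * d) from by
        conv_lhs => rw [← XP_d (O := (0:M)) hd Xs]
        rw [castMat_XP]] at hx
    · have hx : Frel Ω f d Xs d (XP (0:M) hd Xs d) (XP (0:M) hd Xs d) := by
        rw [XP_d hd Xs]; exact .xs
      have hsum := (ih hk).sum hx
      rw [XP_dSum hd Xs (dvd_mul_left d k)] at hsum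
      have h2 : k * d + d = (k + 1) * d := by ring
      have := Frel.cast (Xs := Xs) h2 hsum
      rwa [castMat_XP] at this

lemma frel_XP' (hd : 0 < d) {n : ℕ} (hpos : 0 < n) (hdn : d ∣ n) :
    Frel Ω f d Xs n (XP (0:M) hd Xs n) (XP (0:M) hd Xs n) := by
  obtain ⟨k, rfl⟩ := hdn
  have hk : 1 ≤ k := by
    rcases Nat.eq_zero_or_pos k with rfl | hk
    · omega
    · exact hk
  have h : k * d = d * k := Nat.mul_comm k d
  have := Frel.cast h (frel_XP (Ω := Ω) (f := f) (Xs := Xs) hd k hk)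
  rwa [castMat_XP] at this

end Aux6
section Aux7
set_option linter.unusedSectionVars false

variable {R M : Type*} [Ring R] [AddCommGroup M] [Module R M] [Module Rᵐᵒᵖ M]
variable {Ω : ∀ n : ℕ, Set (Matrix (Fin n) (Fin n) M)}
variable {f : ∀ n : ℕ, Matrix (Fin n) (Fin n) M → Matrix (Fin n) (Fin n) M}
variable {d : ℕ} {Xs : Matrix (Fin d) (Fin d) M}

lemma frel_fixed (hΩ0 : Ω 0 = ∅) (hdvd : ∀ n ∈ supp Ω, d ∣ n) (hd : 0 < d)
    (Xst : ∀ n : ℕ, Matrix (Fin n) (Fin n) M)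
    (hfix : ∀ n ∈ supp Ω, Xst n ∈ Ω n ∧ f n (Xst n) = Xst n ∧
      ∀ Y ∈ Ω n, f n Y = Y → Y = Xst n)
    (hXs : ∀ n, ∀ hn : n ∈ supp Ω,
      Xst n = castMat (Nat.div_mul_cancel (hdvd n hn)) (repSum 0 (n / d) Xs))
    {n : ℕ} {Z W : Matrix (Fin n) (Fin n) M} (h : Frel Ω f d Xs n Z W) :
    W = Z → Z = XP (0:M) hd Xs n := by
  induction h with
  | @base a A hA =>
    intro hfa
    have hs := mem_supp_of_mem hΩ0 hA
    have hu := (hfix a hs).2.2 A hA hfa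
    rw [hu, hXs a hs, castMat_repSum hd]
  | xs => intro _; exact (XP_d hd Xs).symm
  | @sum n1 n2 X X' Y Y' h1 h2 ih1 ih2 =>
    intro heq
    obtain ⟨e1, e2⟩ := dSum_inj heq
    rw [ih1 e1, ih2 e2, XP_dSum hd Xs (frel_dvd hΩ0 hdvd h1)]

end Aux7
/-- **Theorem A, part 2.** A nc function `f` on a direct-sum-closed subset `Ω` of the nc space
over a bimodule `M`, with a unique fixed point at every level of the support, extends to a nc
function `ft` on a nc set `Ωt ⊇ Ω` whose support is all positive multiples of
`d = gcd (supp Ω)`, with unique fixed point `⊕_{α=1}^{n/d} Xs` at every level. -/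
theorem fixed_point_theorem_part2 {R M : Type*} [Ring R] [AddCommGroup M]
    [Module R M] [Module Rᵐᵒᵖ M] [SMulCommClass R Rᵐᵒᵖ M]
    (Ω : ∀ n : ℕ, Set (Matrix (Fin n) (Fin n) M)) (hΩ0 : Ω 0 = ∅)
    (hdir : RespectsDSums (0 : M) Ω) (hne : (supp Ω).Nonempty)
    (f : ∀ n : ℕ, Matrix (Fin n) (Fin n) M → Matrix (Fin n) (Fin n) M)
    (hmaps : ∀ n ∈ supp Ω, ∀ X ∈ Ω n, f n X ∈ Ω n)
    (hsums : ∀ ⦃n m : ℕ⦄ (X : Matrix (Fin n) (Fin n) M) (Y : Matrix (Fin m) (Fin m) M),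
      X ∈ Ω n → Y ∈ Ω m → f (n + m) (dSum 0 X Y) = dSum 0 (f n X) (f m Y))
    (hint : RespectsIntertwinings R Ω f)
    (Xst : ∀ n : ℕ, Matrix (Fin n) (Fin n) M)
    (hfix : ∀ n ∈ supp Ω, Xst n ∈ Ω n ∧ f n (Xst n) = Xst n ∧
      ∀ Y ∈ Ω n, f n Y = Y → Y = Xst n)
    (d : ℕ) (hdvd : ∀ n ∈ supp Ω, d ∣ n)
    (hgcd : ∀ e : ℕ, (∀ n ∈ supp Ω, e ∣ n) → e ∣ d)
    (Xs : Matrix (Fin d) (Fin d) M)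
    (hXs : ∀ n, ∀ hn : n ∈ supp Ω,
      Xst n = castMat (Nat.div_mul_cancel (hdvd n hn)) (repSum 0 (n / d) Xs)) :
    ∃ (Ωt : ∀ n : ℕ, Set (Matrix (Fin n) (Fin n) M))
      (ft : ∀ n : ℕ, Matrix (Fin n) (Fin n) M → Matrix (Fin n) (Fin n) M),
      Ωt 0 = ∅ ∧ (∀ n, Ω n ⊆ Ωt n) ∧ RespectsDSums (0 : M) Ωt ∧
      supp Ωt = {n : ℕ | 0 < n ∧ d ∣ n} ∧
      (∀ n ∈ supp Ωt, ∀ X ∈ Ωt n, ft n X ∈ Ωt n) ∧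
      (∀ ⦃n m : ℕ⦄ (X : Matrix (Fin n) (Fin n) M) (Y : Matrix (Fin m) (Fin m) M),
        X ∈ Ωt n → Y ∈ Ωt m → ft (n + m) (dSum 0 X Y) = dSum 0 (ft n X) (ft m Y)) ∧
      RespectsIntertwinings R Ωt ft ∧
      (∀ n, ∀ X ∈ Ω n, ft n X = f n X) ∧
      (∀ n : ℕ, ∀ hn : 0 < n ∧ d ∣ n,
        castMat (Nat.div_mul_cancel hn.2) (repSum 0 (n / d) Xs) ∈ Ωt n ∧
        ft n (castMat (Nat.div_mul_cancel hn.2) (repSum 0 (n / d) Xs)) =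
          castMat (Nat.div_mul_cancel hn.2) (repSum 0 (n / d) Xs) ∧
        ∀ Y ∈ Ωt n, ft n Y = Y →
          Y = castMat (Nat.div_mul_cancel hn.2) (repSum 0 (n / d) Xs)) := by
  classical
  obtain ⟨n0, hn0⟩ := hne
  have hd : 0 < d := by
    rcases Nat.eq_zero_or_pos d with rfl | h
    · obtain ⟨k, hk⟩ := hdvd n0 hn0
      have := hn0.1
      omega
    · exact h
  have hdn0 : d ≤ n0 := Nat.le_of_dvd hn0.1 (hdvd n0 hn0)
  have hXP0 : Xst n0 = XP (0:M) hd Xs n0 := by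
    rw [hXs n0 hn0, castMat_repSum hd]
  have hX0 : XP (0:M) hd Xs n0 ∈ Ω n0 := hXP0 ▸ (hfix n0 hn0).1
  have hfix0 : f n0 (XP (0:M) hd Xs n0) = XP (0:M) hd Xs n0 := by
    rw [← hXP0]
    exact (hfix n0 hn0).2.1
  have K : ∀ {n : ℕ} {X X' : Matrix (Fin n) (Fin n) M}, Frel Ω f d Xs n X X' →
      ∀ {m : ℕ} {Y Y' : Matrix (Fin m) (Fin m) M}, Frel Ω f d Xs m Y Y' →
      ∀ T : Matrix (Fin n) (Fin m) R, rAct R X T = lAct R T Y → rAct R X' T = lAct R T Y' :=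
    fun h1 => key hd hdn0 Ω f Xs hint hX0 hfix0 h1
  have funiq : ∀ {n : ℕ} {Z W W' : Matrix (Fin n) (Fin n) M},
      Frel Ω f d Xs n Z W → Frel Ω f d Xs n Z W' → W = W' := by
    intro n Z W W' h1 h2
    have := K h1 h2 (1 : Matrix (Fin n) (Fin n) R) (by rw [rAct_one, lAct_one])
    rwa [rAct_one, lAct_one] at this
  have ft_eq : ∀ {n : ℕ} {Z W : Matrix (Fin n) (Fin n) M}, Frel Ω f d Xs n Z W →
      (if h : ∃ W', Frel Ω f d Xs n Z W' then h.choose else Z) = W := by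
    intro n Z W h
    rw [dif_pos ⟨W, h⟩]
    exact funiq (Exists.choose_spec (⟨W, h⟩ : ∃ W', Frel Ω f d Xs n Z W')) h
  have ft_spec : ∀ {n : ℕ} {Z : Matrix (Fin n) (Fin n) M}, (∃ W, Frel Ω f d Xs n Z W) →
      Frel Ω f d Xs n Z (if h : ∃ W, Frel Ω f d Xs n Z W then h.choose else Z) := by
    intro n Z h
    rw [dif_pos h]
    exact h.choose_spec
  refine ⟨fun n => {Z | 0 < n ∧ ∃ W, Frel Ω f d Xs n Z W},
    fun n Z => if h : ∃ W, Frel Ω f d Xs n Z W then h.choose else Z,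
    ?_, ?_, ?_, ?_, ?_, ?_, ?_, ?_, ?_⟩
  · ext Z
    simp
  · intro n Z hZ
    exact ⟨(mem_supp_of_mem hΩ0 hZ).1, f n Z, .base hZ⟩
  · intro n m X Y hX hY
    obtain ⟨hn, W1, h1⟩ := hX
    obtain ⟨hm, W2, h2⟩ := hY
    exact ⟨by omega, _, h1.sum h2⟩
  · ext n
    simp only [supp, Set.Nonempty, Set.mem_setOf_eq]
    constructor
    · rintro ⟨hpos, Z, hZpos, W, hW⟩
      exact ⟨hpos, frel_dvd hΩ0 hdvd hW⟩
    · rintro ⟨hpos, hdn⟩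
      exact ⟨hpos, XP (0:M) hd Xs n, hpos, _, frel_XP' hd hpos hdn⟩
  · intro n hn X hX
    obtain ⟨hpos, hex⟩ := hX
    exact ⟨hpos, frel_next hΩ0 hmaps (ft_spec hex)⟩
  · intro n m X Y hX hY
    exact ft_eq ((ft_spec hX.2).sum (ft_spec hY.2))
  · intro n m X Y T hX hY hT
    exact K (ft_spec hX.2) (ft_spec hY.2) T hT
  · intro n X hX
    exact ft_eq (.base hX)
  · intro n hn
    have hZn : castMat (Nat.div_mul_cancel hn.2) (repSum 0 (n / d) Xs) = XP (0:M) hd Xs n :=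
      castMat_repSum hd _ Xs
    rw [hZn]
    refine ⟨⟨hn.1, _, frel_XP' hd hn.1 hn.2⟩, ft_eq (frel_XP' hd hn.1 hn.2), ?_⟩
    intro Y hY hftY
    have h2 := ft_spec hY.2
    rw [show (if h : ∃ W, Frel Ω f d Xs n Y W then h.choose else Y) = Y from hftY] at h2
    exact frel_fixed hΩ0 hdvd hd Xst hfix hXs h2 rfl

end NCPaper
end

section
/- There exist a set Ω ⊆ (ℤ/2ℤ)_nc respecting direct sums of matrices with supp Ω = {2n + 5m : n, m nonnegative integers, not both zero} (so that gcd{n : n ∈ supp Ω} = 1) and a mapping f : Ω → Ω with f(Ω_n) ⊆ Ω_n for all n ∈ supp Ω, respecting direct sums, and having a unique fixed point in Ω_n for every n ∈ supp Ω, such that there do NOT exist a set Ω̃ ⊆ (ℤ/2ℤ)_nc respecting direct sums with Ω̃ ⊇ Ω and supp Ω̃ = ℕ, a mapping f̃ : Ω̃ → Ω̃ with f̃(Ω̃_n) ⊆ Ω̃_n for all n, respecting direct sums, with f̃ restricted to Ω equal to f, and an element X_* ∈ (ℤ/2ℤ)^{1×1} such that for every n ∈ ℕ the mapping f̃ restricted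 to Ω̃_n has a unique fixed point equal to ⊕_{α=1}^n X_*. -/
namespace NCPaper

variable {S : Type*}

/- ## Auxiliary infrastructure for the counterexample -/


/-- Infinite-matrix model: functions `ℕ → ℕ → ZMod 2`. -/
abbrev E := ℕ → ℕ → ZMod 2

def up (t : ℕ) : E := fun p q => if p = t ∧ q = t + 1 then 1 else 0
def dwn (t : ℕ) : E := fun p q => if p = t + 1 ∧ q = t then 1 else 0
def Yat : E := fun p q => if (p = 0 ∧ q = 1) ∨ (p = 4 ∧ q = 3) then 1 else 0

/-- Block append: `a` occupies `[0,k)²`, `W` is shifted by `k`. -/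
def app (k : ℕ) (a W : E) : E := fun p q =>
  if p < k ∧ q < k then a p q
  else if k ≤ p ∧ k ≤ q then W (p - k) (q - k) else 0

/-- The self-map on the infinite model. -/
def fE (W : E) : E := fun p q =>
  if q = p + 1 then
    (if W (p+1) p = 1 ∧ ¬(3 ≤ p ∧ W (p-3) (p-2) = 1) then 1 else 0)
  else if p = q + 1 then
    (if W q (q+1) = 1 ∧ ¬(W (q+4) (q+3) = 1) then 1 else 0)
  else 0

/-- Words over the atoms `0₂, up, dwn, 0₅, Yat`. -/
inductive Wd : ℕ → E → Prop
  | atom2 {a : E} (h : a = 0 ∨ a = up 0 ∨ a = dwn 0) : Wd 2 a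
  | atom5 {a : E} (h : a = 0 ∨ a = Yat) : Wd 5 a
  | app2 {a : E} {n : ℕ} {W : E} (h : a = 0 ∨ a = up 0 ∨ a = dwn 0) (hW : Wd n W) :
      Wd (2 + n) (app 2 a W)
  | app5 {a : E} {n : ℕ} {W : E} (h : a = 0 ∨ a = Yat) (hW : Wd n W) :
      Wd (5 + n) (app 5 a W)

/- ### evaluation lemmas -/

lemma app_lo (k p q : ℕ) (a W : E) (h : p < k) (h' : q < k) : app k a W p q = a p q := by
  simp only [app]; rw [if_pos ⟨h, h'⟩]

lemma app_hi (k p q : ℕ) (a W : E) : app k a W (k + p) (k + q) = W p q := by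
  simp only [app]
  rw [if_neg (by omega), if_pos ⟨Nat.le_add_right _ _, Nat.le_add_right _ _⟩,
    Nat.add_sub_cancel_left, Nat.add_sub_cancel_left]

lemma app_out (k p q : ℕ) (a W : E) (h : ¬(p < k ∧ q < k)) (h' : ¬(k ≤ p ∧ k ≤ q)) :
    app k a W p q = 0 := by
  simp only [app]; rw [if_neg h, if_neg h']

lemma fE_up_eval (W : E) (p : ℕ) :
    fE W p (p + 1)
      = if W (p+1) p = 1 ∧ ¬(3 ≤ p ∧ W (p-3) (p-2) = 1) then 1 else 0 := by
  simp only [fE]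
  rw [if_pos trivial]

lemma fE_dn_eval (W : E) (q : ℕ) :
    fE W (q + 1) q = if W q (q+1) = 1 ∧ ¬(W (q+4) (q+3) = 1) then 1 else 0 := by
  simp only [fE]
  rw [if_neg (by omega), if_pos trivial]

lemma fE_other (W : E) {p q : ℕ} (h : q ≠ p + 1) (h' : p ≠ q + 1) : fE W p q = 0 := by
  simp only [fE]; rw [if_neg h, if_neg h']

lemma fE_zero : fE (0 : E) = 0 := by
  funext p q
  simp only [fE, Pi.zero_apply]
  split_ifs <;> simp_all

lemma fE_up0 : fE (up 0) = dwn 0 := by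
  funext p q
  simp only [fE, up, dwn]
  split_ifs <;> simp_all <;> omega

lemma fE_dwn0 : fE (dwn 0) = up 0 := by
  funext p q
  simp only [fE, up, dwn]
  split_ifs <;> simp_all <;> omega

lemma fE_Yat : fE Yat = 0 := by
  funext p q
  simp only [fE, Yat, Pi.zero_apply]
  split_ifs <;> simp_all <;> omega


/- ### the two boundary lemmas -/

lemma bapp2 {a W : E} (ha12 : a 1 2 = 0) (ha43 : a 4 3 = 0) (h21 : W 2 1 = 0) :
    fE (app 2 a W) = app 2 (fE a) (fE W) := by
  funext p q
  by_cases hq : q = p + 1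
  · subst hq
    rw [fE_up_eval]
    rcases Nat.lt_or_ge p 5 with h5 | h5
    · interval_cases p <;> norm_num [fE, app, h21, ha12, ha43]
    · obtain ⟨r, rfl⟩ := Nat.exists_eq_add_of_le h5
      have E3 : 5 + r - 3 = 2 + r := by omega
      have E4 : 5 + r - 2 = 2 + (r + 1) := by omega
      have E1 : 5 + r + 1 = 2 + (r + 4) := by omega
      have E2 : 5 + r = 2 + (r + 3) := by omega
      rw [E3, E4, E1, E2, app_hi 2 (r+4) (r+3) a W, app_hi 2 r (r+1) a W,
        app_hi 2 (r+3) (r+4) (fE a) (fE W),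
        show r + 4 = r + 3 + 1 from rfl, fE_up_eval W (r+3),
        show r + 3 - 3 = r from by omega, show r + 3 - 2 = r + 1 from by omega]
      simp [show (3:ℕ) ≤ 2 + (r + 3) from by omega, show (3:ℕ) ≤ r + 3 from by omega]
  · by_cases hp : p = q + 1
    · subst hp
      rw [fE_dn_eval]
      rcases Nat.lt_or_ge q 2 with h2 | h2
      · interval_cases q <;> norm_num [fE, app, h21, ha12, ha43]
      · obtain ⟨r, rfl⟩ := Nat.exists_eq_add_of_le h2
        rw [show 2 + r + 4 = 2 + (r + 4) from rfl, show 2 + r + 3 = 2 + (r + 3) from rfl,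
          show 2 + r + 1 = 2 + (r + 1) from rfl,
          app_hi 2 r (r+1) a W, app_hi 2 (r+4) (r+3) a W,
          app_hi 2 (r+1) r (fE a) (fE W), fE_dn_eval W r]
    · rw [fE_other (app 2 a W) hq hp]
      by_cases h1 : p < 2 ∧ q < 2
      · rw [app_lo 2 p q (fE a) (fE W) h1.1 h1.2, fE_other a hq hp]
      · by_cases h2 : 2 ≤ p ∧ 2 ≤ q
        · obtain ⟨p', rfl⟩ := Nat.exists_eq_add_of_le h2.1
          obtain ⟨q', rfl⟩ := Nat.exists_eq_add_of_le h2.2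
          rw [app_hi 2 p' q' (fE a) (fE W), fE_other W (by omega) (by omega)]
        · rw [app_out 2 p q (fE a) (fE W) h1 h2]

lemma bapp5 {b W : E} (hb12 : b 1 2 = 0) (hb23 : b 2 3 = 0) (hb34 : b 3 4 = 0) :
    fE (app 5 b W) = app 5 (fE b) (fE W) := by
  funext p q
  by_cases hq : q = p + 1
  · subst hq
    rw [fE_up_eval]
    rcases Nat.lt_or_ge p 8 with h8 | h8
    · interval_cases p <;> norm_num [fE, app, hb12, hb23, hb34]
    · obtain ⟨r, rfl⟩ := Nat.exists_eq_add_of_le h8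
      have E3 : 8 + r - 3 = 5 + r := by omega
      have E4 : 8 + r - 2 = 5 + (r + 1) := by omega
      have E1 : 8 + r + 1 = 5 + (r + 4) := by omega
      have E2 : 8 + r = 5 + (r + 3) := by omega
      rw [E3, E4, E1, E2, app_hi 5 (r+4) (r+3) b W, app_hi 5 r (r+1) b W,
        app_hi 5 (r+3) (r+4) (fE b) (fE W),
        show r + 4 = r + 3 + 1 from rfl, fE_up_eval W (r+3),
        show r + 3 - 3 = r from by omega, show r + 3 - 2 = r + 1 from by omega]
      simp [show (3:ℕ) ≤ 5 + (r + 3) from by omega, show (3:ℕ) ≤ r + 3 from by omega]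
  · by_cases hp : p = q + 1
    · subst hp
      rw [fE_dn_eval]
      rcases Nat.lt_or_ge q 5 with h5 | h5
      · interval_cases q <;> norm_num [fE, app, hb12, hb23, hb34]
      · obtain ⟨r, rfl⟩ := Nat.exists_eq_add_of_le h5
        rw [show 5 + r + 4 = 5 + (r + 4) from rfl, show 5 + r + 3 = 5 + (r + 3) from rfl,
          show 5 + r + 1 = 5 + (r + 1) from rfl,
          app_hi 5 r (r+1) b W, app_hi 5 (r+4) (r+3) b W,
          app_hi 5 (r+1) r (fE b) (fE W), fE_dn_eval W r]
    · rw [fE_other (app 5 b W) hq hp]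
      by_cases h1 : p < 5 ∧ q < 5
      · rw [app_lo 5 p q (fE b) (fE W) h1.1 h1.2, fE_other b hq hp]
      · by_cases h2 : 5 ≤ p ∧ 5 ≤ q
        · obtain ⟨p', rfl⟩ := Nat.exists_eq_add_of_le h2.1
          obtain ⟨q', rfl⟩ := Nat.exists_eq_add_of_le h2.2
          rw [app_hi 5 p' q' (fE b) (fE W), fE_other W (by omega) (by omega)]
        · rw [app_out 5 p q (fE b) (fE W) h1 h2]


/- ### atom facts -/

lemma atom2_facts {a : E} (h : a = 0 ∨ a = up 0 ∨ a = dwn 0) :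
    a 1 2 = 0 ∧ a 4 3 = 0 ∧ a 2 1 = 0 := by
  rcases h with rfl | rfl | rfl <;> simp [up, dwn]

lemma atom5_facts {b : E} (h : b = 0 ∨ b = Yat) :
    b 1 2 = 0 ∧ b 2 3 = 0 ∧ b 3 4 = 0 ∧ b 2 1 = 0 := by
  rcases h with rfl | rfl <;> simp [Yat]

lemma fE_atom2 {a : E} (h : a = 0 ∨ a = up 0 ∨ a = dwn 0) :
    fE a = 0 ∨ fE a = up 0 ∨ fE a = dwn 0 := by
  rcases h with rfl | rfl | rfl
  · exact Or.inl fE_zero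
  · exact Or.inr (Or.inr fE_up0)
  · exact Or.inr (Or.inl fE_dwn0)

lemma fE_atom5 {b : E} (h : b = 0 ∨ b = Yat) : fE b = 0 ∨ fE b = Yat := by
  rcases h with rfl | rfl
  · exact Or.inl fE_zero
  · exact Or.inl fE_Yat

/- ### structural lemmas about words -/

lemma wd_21 {n : ℕ} {W : E} (h : Wd n W) : W 2 1 = 0 := by
  induction h with
  | atom2 h => exact (atom2_facts h).2.2
  | atom5 h => exact (atom5_facts h).2.2.2
  | app2 h hW ih => rw [app_out 2 2 1 _ _ (by omega) (by omega)]
  | app5 h hW ih => rw [app_lo 5 2 1 _ _ (by omega) (by omega)]; exact (atom5_facts h).2.2.2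

lemma app_zero (k : ℕ) : app k (0 : E) (0 : E) = 0 := by
  funext p q
  simp only [app, Pi.zero_apply]
  split_ifs <;> rfl

lemma app_assoc (k j : ℕ) (a X W : E) :
    app (k + j) (app k a X) W = app k a (app j X W) := by
  funext p q
  simp only [app]
  split_ifs <;> first
    | rfl
    | omega
    | (congr 1 <;> omega)

lemma wd_app {n : ℕ} {X : E} (hX : Wd n X) : ∀ {m : ℕ} {Y : E}, Wd m Y → Wd (n + m) (app n X Y) := by
  induction hX with
  | @atom2 a h => intro m Y hY; exact Wd.app2 h hY
  | @atom5 a h => intro m Y hY; exact Wd.app5 h hY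
  | @app2 a n' W h hW ih =>
      intro m Y hY
      rw [app_assoc 2 n' a W Y, Nat.add_assoc]
      exact Wd.app2 h (ih hY)
  | @app5 a n' W h hW ih =>
      intro m Y hY
      rw [app_assoc 5 n' a W Y, Nat.add_assoc]
      exact Wd.app5 h (ih hY)

lemma wd_sizes {n : ℕ} {W : E} (h : Wd n W) : ∃ a b : ℕ, n = 2 * a + 5 * b ∧ 0 < a + b := by
  induction h with
  | atom2 h => exact ⟨1, 0, by norm_num, by norm_num⟩
  | atom5 h => exact ⟨0, 1, by norm_num, by norm_num⟩
  | app2 h hW ih => obtain ⟨a, b, h1, h2⟩ := ih; exact ⟨a + 1, b, by omega, by omega⟩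
  | app5 h hW ih => obtain ⟨a, b, h1, h2⟩ := ih; exact ⟨a, b + 1, by omega, by omega⟩

lemma wd_zero : ∀ a b : ℕ, 0 < a + b → Wd (2 * a + 5 * b) (0 : E) := by
  have h2 : ∀ {n : ℕ}, Wd n (0 : E) → Wd (2 + n) (0 : E) := by
    intro n h
    have := Wd.app2 (Or.inl rfl) h
    rwa [app_zero 2] at this
  have h5 : ∀ {n : ℕ}, Wd n (0 : E) → Wd (5 + n) (0 : E) := by
    intro n h
    have := Wd.app5 (Or.inl rfl) h
    rwa [app_zero 5] at this
  intro a
  induction a with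
  | zero =>
      intro b hb
      induction b with
      | zero => omega
      | succ b ihb =>
          rcases Nat.eq_zero_or_pos b with rfl | hbpos
          · exact Wd.atom5 (Or.inl rfl)
          · have := ihb (by omega)
            have h' := h5 this
            rwa [show 2 * 0 + 5 * (b + 1) = 5 + (2 * 0 + 5 * b) from by ring] 
  | succ a iha =>
      intro b hb
      rcases Nat.eq_zero_or_pos (a + b) with h0 | hpos
      · have ha : a = 0 := by omega
        have hbz : b = 0 := by omega
        subst ha; subst hbz
        exact Wd.atom2 (Or.inl rfl)
      · have := iha b hpos
        have h' := h2 this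
        rwa [show 2 * (a + 1) + 5 * b = 2 + (2 * a + 5 * b) from by ring]

lemma wd_fE {n : ℕ} {W : E} (h : Wd n W) : Wd n (fE W) := by
  induction h with
  | atom2 h =>
      exact Wd.atom2 (fE_atom2 h)
  | atom5 h =>
      exact Wd.atom5 (fE_atom5 h)
  | @app2 a n' W h hW ih =>
      obtain ⟨h12, h43, -⟩ := atom2_facts h
      rw [bapp2 h12 h43 (wd_21 hW)]
      exact Wd.app2 (fE_atom2 h) ih
  | @app5 b n' W h hW ih =>
      obtain ⟨h12, h23, h34, -⟩ := atom5_facts h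
      rw [bapp5 h12 h23 h34]
      exact Wd.app5 (fE_atom5 h) ih

lemma wd_mul {n : ℕ} {X : E} (hX : Wd n X) :
    ∀ {m : ℕ} {Y : E}, Wd m Y → fE (app n X Y) = app n (fE X) (fE Y) := by
  induction hX with
  | @atom2 a h =>
      intro m Y hY
      obtain ⟨h12, h43, -⟩ := atom2_facts h
      exact bapp2 h12 h43 (wd_21 hY)
  | @atom5 b h =>
      intro m Y hY
      obtain ⟨h12, h23, h34, -⟩ := atom5_facts h
      exact bapp5 h12 h23 h34
  | @app2 a n' W h hW ih =>
      intro m Y hY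
      obtain ⟨h12, h43, -⟩ := atom2_facts h
      rw [app_assoc 2 n' a W Y, bapp2 h12 h43 (wd_21 (wd_app hW hY)),
        bapp2 h12 h43 (wd_21 hW), app_assoc 2 n' (fE a) (fE W) (fE Y), ih hY]
  | @app5 b n' W h hW ih =>
      intro m Y hY
      obtain ⟨h12, h23, h34, -⟩ := atom5_facts h
      rw [app_assoc 5 n' b W Y, bapp5 h12 h23 h34,
        bapp5 h12 h23 h34, app_assoc 5 n' (fE b) (fE W) (fE Y), ih hY]

/- ### extraction from app equalities, and fixed points -/

lemma app_eq_tail {k : ℕ} {x y U V : E} (h : app k x U = app k y V) : U = V := by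
  funext p q
  have := congrFun (congrFun h (k + p)) (k + q)
  rwa [app_hi, app_hi] at this

lemma app_eq_head {k : ℕ} {x y U V : E} (h : app k x U = app k y V)
    {p q : ℕ} (hp : p < k) (hq : q < k) : x p q = y p q := by
  have := congrFun (congrFun h p) q
  rwa [app_lo k p q _ _ hp hq, app_lo k p q _ _ hp hq] at this

lemma wd_fix {n : ℕ} {W : E} (h : Wd n W) (hf : fE W = W) : W = 0 := by
  induction h with
  | @atom2 a h =>
      rcases h with rfl | rfl | rfl
      · rfl
      · rw [fE_up0] at hf
        have := congrFun (congrFun hf 0) 1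
        simp [up, dwn] at this
      · rw [fE_dwn0] at hf
        have := congrFun (congrFun hf 1) 0
        simp [up, dwn] at this
  | @atom5 a h =>
      rcases h with rfl | rfl
      · rfl
      · rw [fE_Yat] at hf
        have := congrFun (congrFun hf 0) 1
        simp [Yat] at this
  | @app2 a n' W h hW ih =>
      obtain ⟨h12, h43, -⟩ := atom2_facts h
      rw [bapp2 h12 h43 (wd_21 hW)] at hf
      have htail := app_eq_tail hf
      have hW0 := ih htail
      subst hW0
      rcases h with rfl | rfl | rfl
      · exact app_zero 2
      · rw [fE_up0] at hf
        have := app_eq_head hf (p := 0) (q := 1) (by omega) (by omega)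
        simp [up, dwn] at this
      · rw [fE_dwn0] at hf
        have := app_eq_head hf (p := 1) (q := 0) (by omega) (by omega)
        simp [up, dwn] at this
  | @app5 b n' W h hW ih =>
      obtain ⟨h12, h23, h34, -⟩ := atom5_facts h
      rw [bapp5 h12 h23 h34] at hf
      have htail := app_eq_tail hf
      have hW0 := ih htail
      subst hW0
      rcases h with rfl | rfl
      · exact app_zero 5
      · rw [fE_Yat] at hf
        have := app_eq_head hf (p := 0) (q := 1) (by omega) (by omega)
        simp [Yat] at this



/- ### passing between finite matrices and the infinite model -/

def emb {n : ℕ} (M : Matrix (Fin n) (Fin n) (ZMod 2)) : E := fun p q =>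
  if h : p < n ∧ q < n then M ⟨p, h.1⟩ ⟨q, h.2⟩ else 0

def res (n : ℕ) (W : E) : Matrix (Fin n) (Fin n) (ZMod 2) := fun i j => W i.val j.val

def Sup (n : ℕ) (W : E) : Prop := ∀ p q : ℕ, n ≤ p ∨ n ≤ q → W p q = 0

lemma emb_sup {n : ℕ} (M : Matrix (Fin n) (Fin n) (ZMod 2)) : Sup n (emb M) := by
  intro p q h
  simp only [emb]
  rw [dif_neg (by omega)]

lemma fE_sup {n : ℕ} {W : E} (h : Sup n W) : Sup n (fE W) := by
  intro p q hpq
  by_cases h1 : q = p + 1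
  · subst h1
    rw [fE_up_eval]
    simp [h (p+1) p (by omega)]
  · by_cases h2 : p = q + 1
    · subst h2
      rw [fE_dn_eval]
      simp [h q (q+1) (by omega)]
    · exact fE_other _ h1 h2

lemma res_emb {n : ℕ} (M : Matrix (Fin n) (Fin n) (ZMod 2)) : res n (emb M) = M := by
  funext i j
  simp only [res, emb]
  rw [dif_pos ⟨i.isLt, j.isLt⟩]

lemma emb_res {n : ℕ} {W : E} (h : Sup n W) : emb (res n W) = W := by
  funext p q
  simp only [emb, res]
  by_cases hc : p < n ∧ q < n
  · rw [dif_pos hc]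
  · rw [dif_neg hc]
    exact (h p q (by omega)).symm

lemma emb_inj {n : ℕ} {M N : Matrix (Fin n) (Fin n) (ZMod 2)} (h : emb M = emb N) : M = N := by
  rw [← res_emb M, h, res_emb]

lemma emb_zero {n : ℕ} : emb (0 : Matrix (Fin n) (Fin n) (ZMod 2)) = 0 := by
  funext p q
  simp only [emb]
  split_ifs <;> simp

lemma res_zero (n : ℕ) : res n (0 : E) = 0 := rfl

lemma emb_dSum {n m : ℕ} (X : Matrix (Fin n) (Fin n) (ZMod 2))
    (Y : Matrix (Fin m) (Fin m) (ZMod 2)) :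
    emb (dSum (0 : ZMod 2) X Y) = app n (emb X) (emb Y) := by
  funext p q
  simp only [emb, app, dSum]
  split_ifs <;> first | rfl | omega | simp_all | (exfalso; omega)

/- ### the set `Ω` and the map `f` -/

def OmegaSet : ∀ n : ℕ, Set (Matrix (Fin n) (Fin n) (ZMod 2)) := fun n => {M | Wd n (emb M)}

def fMap : ∀ n : ℕ, Matrix (Fin n) (Fin n) (ZMod 2) → Matrix (Fin n) (Fin n) (ZMod 2) :=
  fun n M => res n (fE (emb M))

lemma emb_fMap {n : ℕ} (M : Matrix (Fin n) (Fin n) (ZMod 2)) :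
    emb (fMap n M) = fE (emb M) :=
  emb_res (fE_sup (emb_sup M))

lemma fMap_zero (n : ℕ) : fMap n 0 = 0 := by
  show res n (fE (emb 0)) = 0
  rw [emb_zero, fE_zero, res_zero]

/- ### the concrete small matrices -/

def MA : Matrix (Fin 2) (Fin 2) (ZMod 2) := res 2 (up 0)
def MB : Matrix (Fin 2) (Fin 2) (ZMod 2) := res 2 (dwn 0)
def MY : Matrix (Fin 5) (Fin 5) (ZMod 2) := res 5 Yat

lemma sup_up0 : Sup 2 (up 0) := by
  intro p q h
  simp only [up]
  rw [if_neg (by omega)]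

lemma sup_dwn0 : Sup 2 (dwn 0) := by
  intro p q h
  simp only [dwn]
  rw [if_neg (by omega)]

lemma sup_Yat : Sup 5 Yat := by
  intro p q h
  simp only [Yat]
  rw [if_neg (by omega)]

lemma embMA : emb MA = up 0 := emb_res sup_up0
lemma embMB : emb MB = dwn 0 := emb_res sup_dwn0
lemma embMY : emb MY = Yat := emb_res sup_Yat

lemma memMA : MA ∈ OmegaSet 2 := by
  show Wd 2 (emb MA)
  rw [embMA]
  exact Wd.atom2 (Or.inr (Or.inl rfl))

lemma memMB : MB ∈ OmegaSet 2 := by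
  show Wd 2 (emb MB)
  rw [embMB]
  exact Wd.atom2 (Or.inr (Or.inr rfl))

lemma memMY : MY ∈ OmegaSet 5 := by
  show Wd 5 (emb MY)
  rw [embMY]
  exact Wd.atom5 (Or.inr rfl)

lemma mem0two : (0 : Matrix (Fin 2) (Fin 2) (ZMod 2)) ∈ OmegaSet 2 := by
  show Wd 2 (emb 0)
  rw [emb_zero]
  exact Wd.atom2 (Or.inl rfl)

lemma fMA : fMap 2 MA = MB := by
  show res 2 (fE (emb MA)) = MB
  rw [embMA, fE_up0]
  rfl

lemma fMB : fMap 2 MB = MA := by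
  show res 2 (fE (emb MB)) = MA
  rw [embMB, fE_dwn0]
  rfl

lemma fMY : fMap 5 MY = 0 := by
  show res 5 (fE (emb MY)) = 0
  rw [embMY, fE_Yat, res_zero]

set_option maxHeartbeats 1000000

/-- **Counterexample.** There is a direct-sum-closed subset `Ω` of the nc space over `ℤ/2ℤ`
with support `{2a + 5b : a, b ≥ 0 not both zero}` (whose gcd is 1) and a size- and
direct-sum-respecting self-mapping `f` with a unique fixed point at every level of the support,
which admits no size- and direct-sum-respecting extension `ft` to a direct-sum-closed
`Ωt ⊇ Ω` with full support whose unique fixed point at level `n` is `⊕_{α=1}^n Xs`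
for a fixed `1 × 1` matrix `Xs`. -/
theorem no_extension_without_similarity :
    ∃ (Ω : ∀ n : ℕ, Set (Matrix (Fin n) (Fin n) (ZMod 2)))
      (f : ∀ n : ℕ, Matrix (Fin n) (Fin n) (ZMod 2) → Matrix (Fin n) (Fin n) (ZMod 2)),
      Ω 0 = ∅ ∧ RespectsDSums (0 : ZMod 2) Ω ∧
      supp Ω = {k : ℕ | ∃ a b : ℕ, k = 2 * a + 5 * b ∧ 0 < a + b} ∧
      (∀ n ∈ supp Ω, ∀ X ∈ Ω n, f n X ∈ Ω n) ∧
      (∀ ⦃n m : ℕ⦄ (X : Matrix (Fin n) (Fin n) (ZMod 2)) (Y : Matrix (Fin m) (Fin m) (ZMod 2)),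
        X ∈ Ω n → Y ∈ Ω m → f (n + m) (dSum 0 X Y) = dSum 0 (f n X) (f m Y)) ∧
      (∀ n ∈ supp Ω, ∃! X : Matrix (Fin n) (Fin n) (ZMod 2), X ∈ Ω n ∧ f n X = X) ∧
      ¬ ∃ (Ωt : ∀ n : ℕ, Set (Matrix (Fin n) (Fin n) (ZMod 2)))
          (ft : ∀ n : ℕ, Matrix (Fin n) (Fin n) (ZMod 2) → Matrix (Fin n) (Fin n) (ZMod 2))
          (Xs : Matrix (Fin 1) (Fin 1) (ZMod 2)),
          Ωt 0 = ∅ ∧ (∀ n, Ω n ⊆ Ωt n) ∧ RespectsDSums (0 : ZMod 2) Ωt ∧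
          supp Ωt = {n : ℕ | 0 < n} ∧
          (∀ n ∈ supp Ωt, ∀ X ∈ Ωt n, ft n X ∈ Ωt n) ∧
          (∀ ⦃n m : ℕ⦄ (X : Matrix (Fin n) (Fin n) (ZMod 2))
            (Y : Matrix (Fin m) (Fin m) (ZMod 2)),
            X ∈ Ωt n → Y ∈ Ωt m → ft (n + m) (dSum 0 X Y) = dSum 0 (ft n X) (ft m Y)) ∧
          (∀ n, ∀ X ∈ Ω n, ft n X = f n X) ∧
          (∀ n : ℕ, 0 < n →
            castMat (Nat.mul_one n) (repSum 0 n Xs) ∈ Ωt n ∧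
            ft n (castMat (Nat.mul_one n) (repSum 0 n Xs)) =
              castMat (Nat.mul_one n) (repSum 0 n Xs) ∧
            ∀ Y ∈ Ωt n, ft n Y = Y → Y = castMat (Nat.mul_one n) (repSum 0 n Xs)) := by
  refine ⟨OmegaSet, fMap, ?_, ?_, ?_, ?_, ?_, ?_, ?_⟩
  · -- Ω 0 = ∅
    apply Set.eq_empty_iff_forall_notMem.2
    intro M hM
    obtain ⟨a, b, h1, h2⟩ := wd_sizes hM
    omega
  · -- respects direct sums
    intro n m X Y hX hY
    show Wd (n + m) (emb (dSum 0 X Y))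
    rw [emb_dSum]
    exact wd_app hX hY
  · -- support
    ext k
    constructor
    · rintro ⟨hk, M, hM⟩
      exact wd_sizes hM
    · rintro ⟨a, b, rfl, hab⟩
      refine ⟨by omega, ⟨0, ?_⟩⟩
      show Wd _ (emb 0)
      rw [emb_zero]
      exact wd_zero a b hab
  · -- f maps each level into itself
    intro n _ X hX
    show Wd n (emb (fMap n X))
    rw [emb_fMap]
    exact wd_fE hX
  · -- f respects direct sums
    intro n m X Y hX hY
    apply emb_inj
    rw [emb_fMap, emb_dSum, emb_dSum, emb_fMap, emb_fMap]
    exact wd_mul hX hY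
  · -- unique fixed points
    intro n hn
    obtain ⟨hk, M, hM⟩ := hn
    obtain ⟨a, b, rfl, hab⟩ := wd_sizes hM
    refine ⟨0, ⟨?_, fMap_zero _⟩, ?_⟩
    · show Wd _ (emb 0)
      rw [emb_zero]
      exact wd_zero a b hab
    · rintro X ⟨hX1, hX2⟩
      have h1 : fE (emb X) = emb X := by
        have h2 := congrArg emb hX2
        rwa [emb_fMap] at h2
      apply emb_inj
      rw [wd_fix hX1 h1, emb_zero]
  · -- no extension
    rintro ⟨Ωt, ft, Xs, h0t, hsub, hdst, hsuppt, hmapt, hdsumt, hextt, hfixt⟩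
    -- the 1×1 matrix must be the zero matrix
    have hz2 : ft 2 0 = 0 := by
      rw [hextt 2 0 mem0two]
      exact fMap_zero 2
    have h2 : (0 : Matrix (Fin 2) (Fin 2) (ZMod 2)) = castMat (Nat.mul_one 2) (repSum 0 2 Xs) :=
      (hfixt 2 (by norm_num)).2.2 0 (hsub 2 mem0two) hz2
    have hXs00 : Xs 0 0 = 0 := by
      have e1 : castMat (Nat.mul_one 2) (repSum (0 : ZMod 2) 2 Xs) 0 0 = Xs 0 0 := rfl
      rw [← e1, ← h2]
      rfl
    have hS1 : castMat (Nat.mul_one 1) (repSum (0 : ZMod 2) 1 Xs) = 0 := by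
      funext i j
      have hi : i = 0 := Subsingleton.elim _ _
      have hj : j = 0 := Subsingleton.elim _ _
      subst hi; subst hj
      have e1 : castMat (Nat.mul_one 1) (repSum (0 : ZMod 2) 1 Xs) 0 0 = Xs 0 0 := rfl
      rw [e1, hXs00]
      rfl
    have hS1m : castMat (Nat.mul_one 1) (repSum (0 : ZMod 2) 1 Xs) ∈ Ωt 1 :=
      (hfixt 1 one_pos).1
    have hS1f : ft 1 (castMat (Nat.mul_one 1) (repSum (0 : ZMod 2) 1 Xs)) =
        castMat (Nat.mul_one 1) (repSum (0 : ZMod 2) 1 Xs) := (hfixt 1 one_pos).2.1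
    have hAm : MA ∈ Ωt 2 := hsub 2 memMA
    have hBm : MB ∈ Ωt 2 := hsub 2 memMB
    have hftY : ft 5 MY = 0 := by
      rw [hextt 5 MY memMY]
      exact fMY
    set S1 := castMat (Nat.mul_one 1) (repSum (0 : ZMod 2) 1 Xs) with hS1def
    have m3 : dSum (0 : ZMod 2) MA S1 ∈ Ωt (2 + 1) := hdst MA S1 hAm hS1m
    have e3 : ft (2 + 1) (dSum (0 : ZMod 2) MA S1) = dSum (0 : ZMod 2) MB S1 := by
      rw [hdsumt MA S1 hAm hS1m, hextt 2 MA memMA, fMA, hS1f]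
    have e5 : ft (2 + 1 + 2) (dSum (0 : ZMod 2) (dSum (0 : ZMod 2) MA S1) MB) =
        dSum (0 : ZMod 2) (dSum (0 : ZMod 2) MB S1) MA := by
      rw [hdsumt (dSum (0 : ZMod 2) MA S1) MB m3 hBm, e3, hextt 2 MB memMB, fMB]
    have eY : dSum (0 : ZMod 2) (dSum (0 : ZMod 2) MA S1) MB = MY := by
      rw [hS1]
      decide
    rw [eY] at e5
    have efin : (0 : Matrix (Fin 5) (Fin 5) (ZMod 2)) =
        dSum (0 : ZMod 2) (dSum (0 : ZMod 2) MB S1) MA := by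
      rw [← e5]
      exact hftY.symm
    rw [hS1] at efin
    exact absurd efin (by decide)


end NCPaper
end

section
/- Let S be a set containing a distinguished element O, let Ω ⊆ S_nc respect direct sums of matrices with supp Ω nonempty, and suppose that for every n ∈ supp Ω, Ω_n is a complete metric space with respect to a metric ρ_n. Let f : Ω → Ω satisfy: (i) f(Ω_n) ⊆ Ω_n for every n ∈ supp Ω; (ii) f respects direct sums; (iii) for every n ∈ supp Ω there exists c_n with 0 ≤ c_n < 1 such that ρ_n(f(X), f(Y)) ≤ c_n ρ_n(X, Y) for all X, Y ∈ Ω_n. Let d = gcd{n : n ∈ supp Ω}. Then there exists X_* ∈ S^{d×d} such that for every n ∈ supp Ω the mapping f restricted to Ω_n has a unique fixed point, namely X_{*n} = ⊕_{α=1}^{n/d} X_*. -/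
namespace NCPaper

variable {S : Type*}

/-- `ρ` is a metric on the subset `s`. -/
def IsMetricOn {A : Type*} (ρ : A → A → ℝ) (s : Set A) : Prop :=
  (∀ x ∈ s, ∀ y ∈ s, (ρ x y = 0 ↔ x = y)) ∧
  (∀ x ∈ s, ∀ y ∈ s, ρ x y = ρ y x) ∧
  (∀ x ∈ s, ∀ y ∈ s, ∀ z ∈ s, ρ x z ≤ ρ x y + ρ y z)

/-- The subset `s` is complete with respect to `ρ`: every Cauchy sequence in `s`
converges to a point of `s`. -/
def IsCompleteOn {A : Type*} (ρ : A → A → ℝ) (s : Set A) : Prop :=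
  ∀ u : ℕ → A, (∀ j, u j ∈ s) →
    (∀ ε > (0 : ℝ), ∃ N : ℕ, ∀ j ≥ N, ∀ k ≥ N, ρ (u j) (u k) < ε) →
    ∃ L ∈ s, ∀ ε > (0 : ℝ), ∃ N : ℕ, ∀ j ≥ N, ρ (u j) L < ε

/-- The subset `s` is closed in the ambient set `t` with respect to `ρ`: any point of `t` that
is a `ρ`-limit of a sequence from `s` belongs to `s`. -/
def IsClosedIn {A : Type*} (ρ : A → A → ℝ) (s t : Set A) : Prop :=
  ∀ u : ℕ → A, (∀ j, u j ∈ s) → ∀ L ∈ t,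
    (∀ ε > (0 : ℝ), ∃ N : ℕ, ∀ j ≥ N, ρ (u j) L < ε) → L ∈ s

theorem banach_abstract {A : Type*} {ρ : A → A → ℝ} {s : Set A}
    (hm : IsMetricOn ρ s) (hcom : IsCompleteOn ρ s) (hs : s.Nonempty)
    (g : A → A) (hg : ∀ x ∈ s, g x ∈ s)
    {c : ℝ} (hc0 : 0 ≤ c) (hc1 : c < 1)
    (hlip : ∀ x ∈ s, ∀ y ∈ s, ρ (g x) (g y) ≤ c * ρ x y) :
    ∃ X ∈ s, g X = X ∧ ∀ Y ∈ s, g Y = Y → Y = X := by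
  obtain ⟨heq, hsymm, htri⟩ := hm
  letI : MetricSpace s :=
    { dist := fun x y => ρ x y
      dist_self := fun x => (heq x x.2 x x.2).2 rfl
      dist_comm := fun x y => hsymm x x.2 y y.2
      dist_triangle := fun x y z => htri x x.2 y y.2 z z.2
      eq_of_dist_eq_zero := fun {x y} h => Subtype.ext ((heq x x.2 y y.2).1 h) }
  haveI : Nonempty s := ⟨⟨hs.choose, hs.choose_spec⟩⟩
  haveI : CompleteSpace s := by
    apply Metric.complete_of_cauchySeq_tendsto
    intro u hu
    rw [Metric.cauchySeq_iff] at hu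
    obtain ⟨L, hLs, hL⟩ := hcom (fun j => u j) (fun j => (u j).2) (by
      intro ε hε
      obtain ⟨N, hN⟩ := hu ε hε
      exact ⟨N, fun j hj k hk => hN j hj k hk⟩)
    refine ⟨⟨L, hLs⟩, Metric.tendsto_atTop.2 ?_⟩
    intro ε hε
    obtain ⟨N, hN⟩ := hL ε hε
    exact ⟨N, fun j hj => hN j hj⟩
  set G : s → s := fun x => ⟨g x, hg x x.2⟩ with hG
  have hcontr : ContractingWith c.toNNReal G := by
    constructor
    · exact_mod_cast (by simpa [Real.toNNReal_lt_one] using hc1 : c.toNNReal < 1)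
    · apply LipschitzWith.of_dist_le_mul
      intro x y
      rw [Real.coe_toNNReal c hc0]
      exact hlip x x.2 y y.2
  set XF : s := ContractingWith.fixedPoint G hcontr with hXF
  refine ⟨XF.1, XF.2, ?_, ?_⟩
  · exact congrArg Subtype.val (hcontr.fixedPoint_isFixedPt)
  · intro Y hY hfY
    have := hcontr.fixedPoint_unique (x := ⟨Y, hY⟩) (Subtype.ext hfY)
    exact congrArg Subtype.val this

theorem exists_step_aux (T : Set ℕ) (hT : T.Nonempty) (hpos : ∀ n ∈ T, 0 < n)
    (hadd : ∀ m n, m ∈ T → n ∈ T → m + n ∈ T) (d : ℕ)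
    (hdvd : ∀ n ∈ T, d ∣ n) (hgcd : ∀ e : ℕ, (∀ n ∈ T, e ∣ n) → e ∣ d) :
    ∃ m, m ∈ T ∧ m + d ∈ T := by
  obtain ⟨n0, hn0⟩ := hT
  have hd0 : 0 < d := by
    rcases Nat.eq_zero_or_pos d with h | h
    · exfalso
      have h2 := hdvd n0 hn0
      have h3 := hpos n0 hn0
      subst h
      omega
    · exact h
  set Sset : Set ℤ := ((↑) : ℕ → ℤ) '' T with hSset
  set H : AddSubgroup ℤ := AddSubgroup.closure Sset with hH
  obtain ⟨g, hg⟩ := Int.subgroup_cyclic H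
  have hdg : (d : ℤ) ∣ g := by
    have hgH : g ∈ H := by
      rw [hg]; exact AddSubgroup.subset_closure rfl
    have hle : H ≤ AddSubgroup.zmultiples (d : ℤ) := by
      rw [hH]
      apply AddSubgroup.closure_le _ |>.2
      rintro x ⟨n, hn, rfl⟩
      obtain ⟨k, hk⟩ := hdvd n hn
      exact ⟨k, by push_cast [hk]; simp [smul_eq_mul]; ring⟩
    obtain ⟨k, hk⟩ := hle hgH
    exact ⟨k, by rw [← hk]; simp [smul_eq_mul]; ring⟩
  have hgd : g.natAbs ∣ d := by
    apply hgcd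
    intro n hn
    have hnH : (n : ℤ) ∈ H := AddSubgroup.subset_closure ⟨n, hn, rfl⟩
    rw [hg, AddSubgroup.mem_closure_singleton] at hnH
    obtain ⟨k, hk⟩ := hnH
    have hgdvd : g ∣ (n : ℤ) := ⟨k, by rw [← hk]; simp [smul_eq_mul]; ring⟩
    have := Int.natAbs_dvd_natAbs.2 hgdvd
    simpa using this
  have hdabs : (d : ℤ).natAbs ∣ g.natAbs := Int.natAbs_dvd_natAbs.2 hdg
  rw [Int.natAbs_natCast] at hdabs
  have hdg' : d = g.natAbs := Nat.dvd_antisymm hdabs hgd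
  have hdH : (d : ℤ) ∈ H := by
    have hgH : g ∈ H := by rw [hg]; exact AddSubgroup.subset_closure rfl
    rcases Int.natAbs_eq g with h | h
    · rw [hdg', ← h]; exact hgH
    · rw [hdg']
      have : -g ∈ H := neg_mem hgH
      rwa [show ((g.natAbs : ℤ)) = -g by omega]
  set P : AddSubgroup ℤ :=
    { carrier := {x | ∃ a b : ℕ, (a ∈ T ∨ a = 0) ∧ (b ∈ T ∨ b = 0) ∧ x = (a : ℤ) - b}
      zero_mem' := ⟨0, 0, Or.inr rfl, Or.inr rfl, by simp⟩
      add_mem' := by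
        rintro x y ⟨a, b, ha, hb, rfl⟩ ⟨a', b', ha', hb', rfl⟩
        refine ⟨a + a', b + b', ?_, ?_, by push_cast; ring⟩
        · rcases ha with ha | ha <;> rcases ha' with ha' | ha'
          · exact Or.inl (hadd _ _ ha ha')
          · subst ha'; simpa using Or.inl ha
          · subst ha; simpa using Or.inl ha'
          · subst ha; subst ha'; simp
        · rcases hb with hb | hb <;> rcases hb' with hb' | hb'
          · exact Or.inl (hadd _ _ hb hb')
          · subst hb'; simpa using Or.inl hb
          · subst hb; simpa using Or.inl hb'
          · subst hb; subst hb'; simp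
      neg_mem' := by
        rintro x ⟨a, b, ha, hb, rfl⟩
        exact ⟨b, a, hb, ha, by ring⟩ } with hP
  have hHP : H ≤ P := by
    rw [hH]
    apply AddSubgroup.closure_le _ |>.2
    rintro x ⟨n, hn, rfl⟩
    exact ⟨n, 0, Or.inl hn, Or.inr rfl, by simp⟩
  obtain ⟨a, b, ha, hb, hab⟩ := hHP hdH
  have haval : a = b + d := by omega
  have haT : a ∈ T := by
    rcases ha with h | h
    · exact h
    · exfalso; omega
  rcases hb with hb | hb
  · exact ⟨b, hb, haval ▸ haT⟩
  · subst hb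
    have hdT : d ∈ T := by simpa [haval] using haT
    exact ⟨d, hdT, hadd _ _ hdT hdT⟩

/-- **Theorem B, part 1 (nc Banach fixed point theorem).** If each level `Ω n` of a
direct-sum-closed subset of the nc space is a complete metric space, and a size- and
direct-sum-respecting self-mapping `f` is a strict contraction on each level, then there is a
single `d × d` matrix `Xs` (`d = gcd (supp Ω)`) such that `⊕_{α=1}^{n/d} Xs` is the
unique fixed point of `f` at every level `n` of the support. -/
theorem nc_contractive_mapping_theorem_part1 {S : Type*} (O : S)
    (Ω : ∀ n : ℕ, Set (Matrix (Fin n) (Fin n) S)) (hΩ0 : Ω 0 = ∅)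
    (hdir : RespectsDSums O Ω) (hne : (supp Ω).Nonempty)
    (ρ : ∀ n : ℕ, Matrix (Fin n) (Fin n) S → Matrix (Fin n) (Fin n) S → ℝ)
    (hmetric : ∀ n ∈ supp Ω, IsMetricOn (ρ n) (Ω n))
    (hcomplete : ∀ n ∈ supp Ω, IsCompleteOn (ρ n) (Ω n))
    (f : ∀ n : ℕ, Matrix (Fin n) (Fin n) S → Matrix (Fin n) (Fin n) S)
    (hmaps : ∀ n ∈ supp Ω, ∀ X ∈ Ω n, f n X ∈ Ω n)
    (hsums : ∀ ⦃n m : ℕ⦄ (X : Matrix (Fin n) (Fin n) S) (Y : Matrix (Fin m) (Fin m) S),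
      X ∈ Ω n → Y ∈ Ω m → f (n + m) (dSum O X Y) = dSum O (f n X) (f m Y))
    (hcontr : ∀ n ∈ supp Ω, ∃ c : ℝ, 0 ≤ c ∧ c < 1 ∧
      ∀ X ∈ Ω n, ∀ Y ∈ Ω n, ρ n (f n X) (f n Y) ≤ c * ρ n X Y)
    (d : ℕ) (hdvd : ∀ n ∈ supp Ω, d ∣ n)
    (hgcd : ∀ e : ℕ, (∀ n ∈ supp Ω, e ∣ n) → e ∣ d) :
    ∃ Xs : Matrix (Fin d) (Fin d) S, ∀ n, ∀ hn : n ∈ supp Ω,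
      castMat (Nat.div_mul_cancel (hdvd n hn)) (repSum O (n / d) Xs) ∈ Ω n ∧
      f n (castMat (Nat.div_mul_cancel (hdvd n hn)) (repSum O (n / d) Xs)) =
        castMat (Nat.div_mul_cancel (hdvd n hn)) (repSum O (n / d) Xs) ∧
      ∀ Y ∈ Ω n, f n Y = Y →
        Y = castMat (Nat.div_mul_cancel (hdvd n hn)) (repSum O (n / d) Xs) := by
  classical
  -- fixed points at every level of the support
  have banach' : ∀ n : ℕ, ∃ X : Matrix (Fin n) (Fin n) S, n ∈ supp Ω →
      (X ∈ Ω n ∧ f n X = X ∧ ∀ Y ∈ Ω n, f n Y = Y → Y = X) := by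
    intro n
    by_cases hn : n ∈ supp Ω
    · obtain ⟨c, hc0, hc1, hlip⟩ := hcontr n hn
      obtain ⟨X, hX1, hX2, hX3⟩ := banach_abstract (hmetric n hn) (hcomplete n hn)
        hn.2 (f n) (hmaps n hn) hc0 hc1 hlip
      exact ⟨X, fun _ => ⟨hX1, hX2, hX3⟩⟩
    · exact ⟨fun _ _ => O, fun h => absurd h hn⟩
  choose A hA using banach'
  -- supp is closed under addition
  have haddcl : ∀ m n, m ∈ supp Ω → n ∈ supp Ω → m + n ∈ supp Ω := by
    intro m n hm hn
    obtain ⟨X, hX⟩ := hm.2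
    obtain ⟨Y, hY⟩ := hn.2
    have := hm.1
    have := hn.1
    exact ⟨by omega, ⟨dSum O X Y, hdir X Y hX hY⟩⟩
  -- fixed point at level n+m is the direct sum of fixed points
  have hAsum : ∀ n m, n ∈ supp Ω → m ∈ supp Ω →
      A (n + m) = dSum O (A n) (A m) := by
    intro n m hn hm
    have hnm := haddcl n m hn hm
    have hmem : dSum O (A n) (A m) ∈ Ω (n + m) :=
      hdir _ _ ((hA n hn).1) ((hA m hm).1)
    have hfix : f (n + m) (dSum O (A n) (A m)) = dSum O (A n) (A m) := by
      rw [hsums _ _ ((hA n hn).1) ((hA m hm).1), (hA n hn).2.1, (hA m hm).2.1]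
    exact ((hA (n + m) hnm).2.2 _ hmem hfix).symm
  -- entry-level array
  set At : ∀ _ : ℕ, ℕ → ℕ → S := fun n i j =>
    if h : i < n ∧ j < n then A n ⟨i, h.1⟩ ⟨j, h.2⟩ else O with hAt
  have L1 : ∀ n m, n ∈ supp Ω → m ∈ supp Ω → ∀ i j, i < n → j < n →
      At (n + m) i j = At n i j := by
    intro n m hn hm i j hi hj
    have hi' : i < n + m := by omega
    have hj' : j < n + m := by omega
    simp only [hAt, dif_pos (And.intro hi' hj'), dif_pos (And.intro hi hj)]
    rw [hAsum n m hn hm]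
    simp [dSum, hi, hj]
  have L2 : ∀ n m, n ∈ supp Ω → m ∈ supp Ω → ∀ i j, i < m → j < m →
      At (n + m) (n + i) (n + j) = At m i j := by
    intro n m hn hm i j hi hj
    have hi' : n + i < n + m := by omega
    have hj' : n + j < n + m := by omega
    simp only [hAt, dif_pos (And.intro hi' hj'), dif_pos (And.intro hi hj)]
    rw [hAsum n m hn hm]
    simp [dSum]
  have L3 : ∀ n m, n ∈ supp Ω → m ∈ supp Ω → ∀ i j, i < n → n ≤ j → j < n + m →
      At (n + m) i j = O ∧ At (n + m) j i = O := by
    intro n m hn hm i j hi hj1 hj2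
    have hi' : i < n + m := by omega
    constructor
    · simp only [hAt, dif_pos (And.intro hi' hj2)]
      rw [hAsum n m hn hm]
      simp [dSum, hi, Nat.not_lt.2 hj1]
    · simp only [hAt, dif_pos (And.intro hj2 hi')]
      rw [hAsum n m hn hm]
      simp [dSum, hi, Nat.not_lt.2 hj1]
  have compat : ∀ n m, n ∈ supp Ω → m ∈ supp Ω → ∀ i j, i < n → j < n → i < m → j < m →
      At n i j = At m i j := by
    intro n m hn hm i j hin hjn him hjm
    rw [← L1 n m hn hm i j hin hjn, ← L1 m n hm hn i j him hjm, Nat.add_comm n m]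
  obtain ⟨n0, hn0⟩ := hne
  have hn0pos : 0 < n0 := hn0.1
  have hmul : ∀ k, 0 < k → k * n0 ∈ supp Ω := by
    intro k hk
    induction k with
    | zero => omega
    | succ k ih =>
      rcases Nat.eq_zero_or_pos k with h | h
      · subst h; simpa using hn0
      · have := haddcl (k * n0) n0 (ih h) hn0
        simpa [Nat.succ_mul] using this
  set ν : ℕ → ℕ → ℕ := fun i j => (max i j + 1) * n0 with hν
  have hνlt : ∀ i j, i < ν i j ∧ j < ν i j ∧ ν i j ∈ supp Ω := by
    intro i j
    have h1 : max i j + 1 ≤ (max i j + 1) * n0 := Nat.le_mul_of_pos_right _ hn0pos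
    refine ⟨?_, ?_, hmul _ (by omega)⟩
    · show i < (max i j + 1) * n0
      omega
    · show j < (max i j + 1) * n0
      omega
  set E : ℕ → ℕ → S := fun i j => At (ν i j) i j with hE
  have hEeq : ∀ n, n ∈ supp Ω → ∀ i j, i < n → j < n → At n i j = E i j := by
    intro n hn i j hi hj
    exact compat n (ν i j) hn (hνlt i j).2.2 i j hi hj (hνlt i j).1 (hνlt i j).2.1
  have hshift : ∀ m, m ∈ supp Ω → ∀ i j, E (m + i) (m + j) = E i j := by
    intro m hm i j
    obtain ⟨hi, hj, hνs⟩ := hνlt i j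
    have h1 : At (m + ν i j) (m + i) (m + j) = E (m + i) (m + j) :=
      hEeq _ (haddcl m (ν i j) hm hνs) _ _ (by omega) (by omega)
    have h2 : At (m + ν i j) (m + i) (m + j) = At (ν i j) i j :=
      L2 m (ν i j) hm hνs i j hi hj
    rw [← h1, h2]
  have hcut : ∀ m, m ∈ supp Ω → ∀ i j, i < m → m ≤ j → E i j = O ∧ E j i = O := by
    intro m hm i j hi hj
    obtain ⟨_, hjν, hνs⟩ := hνlt j j
    have hlt : j < m + ν j j := by omega
    have h3 := L3 m (ν j j) hm hνs i j hi hj hlt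
    have e1 : At (m + ν j j) i j = E i j :=
      hEeq _ (haddcl m (ν j j) hm hνs) _ _ (by omega) hlt
    have e2 : At (m + ν j j) j i = E j i :=
      hEeq _ (haddcl m (ν j j) hm hνs) _ _ hlt (by omega)
    exact ⟨by rw [← e1]; exact h3.1, by rw [← e2]; exact h3.2⟩
  have hd0 : 0 < d := by
    have h2 := hdvd n0 hn0
    have h3 := hn0pos
    rcases Nat.eq_zero_or_pos d with h | h
    · subst h; omega
    · exact h
  obtain ⟨mb, hmb, hmbd⟩ := exists_step_aux (supp Ω) ⟨n0, hn0⟩ (fun n hn => hn.1)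
    (fun a b ha hb => haddcl a b ha hb) d hdvd hgcd
  have hdshift : ∀ i j, E (d + i) (d + j) = E i j := by
    intro i j
    have h1 : E ((mb + d) + i) ((mb + d) + j) = E i j := hshift _ hmbd i j
    have h2 : E (mb + (d + i)) (mb + (d + j)) = E (d + i) (d + j) := hshift _ hmb _ _
    rw [← h2, ← h1]
    ring_nf
  have htshift : ∀ t i j, E (t * d + i) (t * d + j) = E i j := by
    intro t
    induction t with
    | zero => simp
    | succ t ih =>
      intro i j
      have e1 : (t + 1) * d + i = t * d + (d + i) := by ring
      have e2 : (t + 1) * d + j = t * d + (d + j) := by ring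
      rw [e1, e2, ih (d + i) (d + j), hdshift]
  have hmod : ∀ i j, i / d = j / d → E i j = E (i % d) (j % d) := by
    intro i j hij
    have e1 : i = (i / d) * d + i % d := (Nat.div_add_mod' i d).symm
    have e2 : j = (i / d) * d + j % d := by rw [hij]; exact (Nat.div_add_mod' j d).symm
    calc E i j = E ((i / d) * d + i % d) ((i / d) * d + j % d) := by rw [← e1, ← e2]
      _ = E (i % d) (j % d) := htshift _ _ _
  -- off-diagonal blocks vanish
  have hoffdh : ∀ i j, i / d < j / d → E i j = O ∧ E j i = O := by
    intro i j hij
    obtain ⟨k, hk⟩ : ∃ k, k = i / d + 1 := ⟨_, rfl⟩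
    have hik : i < k * d := by
      have h1 : k * d = i / d * d + d := by rw [hk]; ring
      have h2 : i / d * d + i % d = i := Nat.div_add_mod' i d
      have h3 : i % d < d := Nat.mod_lt _ hd0
      omega
    have hkj : k * d ≤ j := by
      have h1 : k ≤ j / d := by omega
      have h2 : k * d ≤ j / d * d := Nat.mul_le_mul_right _ h1
      have h3 : j / d * d ≤ j := Nat.div_mul_le_self j d
      omega
    obtain ⟨q', hq'⟩ : ∃ q', n0 / d = q' + 1 := by
      have : 0 < n0 / d := Nat.div_pos (Nat.le_of_dvd hn0pos (hdvd n0 hn0)) hd0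
      exact ⟨n0 / d - 1, by omega⟩
    have hqd : (q' + 1) * d = n0 := by
      rw [← hq']; exact Nat.div_mul_cancel (hdvd n0 hn0)
    obtain ⟨t, ht⟩ : ∃ t, t = k * q' := ⟨_, rfl⟩
    have hc : t * d + k * d = k * n0 := by
      rw [ht, ← hqd]; ring
    have hkpos : 0 < k := by rw [hk]; exact Nat.succ_pos _
    have hkn0 : k * n0 ∈ supp Ω := hmul k hkpos
    have harg1 : t * d + i < k * n0 := by omega
    have harg2 : k * n0 ≤ t * d + j := by omega
    have hcut' := hcut (k * n0) hkn0 (t * d + i) (t * d + j) harg1 harg2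
    constructor
    · rw [← htshift t i j]; exact hcut'.1
    · rw [← htshift t j i]; exact hcut'.2
  have hoffd : ∀ i j, i / d ≠ j / d → E i j = O := by
    intro i j hij
    rcases Nat.lt_or_ge (i / d) (j / d) with h | h
    · exact (hoffdh i j h).1
    · have : j / d < i / d := by omega
      exact (hoffdh j i this).2
  -- the d × d core
  refine ⟨fun a b => E a b, ?_⟩
  intro n hn
  have hkd : n / d * d = n := Nat.div_mul_cancel (hdvd n hn)
  have key : castMat hkd (repSum O (n / d) (fun a b => E (a : ℕ) (b : ℕ))) = A n := by
    funext i j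
    have hin : (i : ℕ) < n := i.isLt
    have hjn : (j : ℕ) < n := j.isLt
    have hAij : A n i j = E i j := by
      have h1 : At n i j = E i j := hEeq n hn _ _ hin hjn
      rw [← h1]
      simp only [hAt, dif_pos (And.intro hin hjn)]
    simp only [castMat, repSum]
    by_cases hij : (i : ℕ) / d = (j : ℕ) / d
    · simp only [Fin.coe_cast, hij, if_true, if_pos]
      rw [hAij, hmod _ _ hij]
    · simp only [Fin.coe_cast, if_neg hij]
      rw [hAij, hoffd _ _ hij]
  rw [key]
  exact ⟨(hA n hn).1, (hA n hn).2.1, (hA n hn).2.2⟩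


end NCPaper
end

section
/- Let S be a set containing a distinguished element O, let Ω ⊆ S_nc respect direct sums of matrices with supp Ω nonempty, and suppose Ω_n is a complete metric space with respect to a metric ρ_n for every n ∈ supp Ω. Let Ω^j = ∐_{n ∈ supp Ω} Ω^j_n ⊆ Ω, j = 1, 2, …, be a sequence of sets such that: (i) each Ω^j respects direct sums of matrices; (ii) each Ω^j_n is a nonempty closed subset of Ω_n for every n ∈ supp Ω; (iii) Ω^1 ⊇ Ω^2 ⊇ ⋯; (iv) diam Ω^j_n := sup{ρ_n(X,Y) : X, Y ∈ Ω^j_n} → 0 as j → ∞, for every n ∈ supp Ω. Let d = gcd{n : n ∈ supp Ω}. Then there exists a unique X_* ∈ S^{d×d} such that ∩_{j=1}^∞ Ω^j = { ⊕_{α=1}^{n/d} X_* : n ∈ supp Ω }. -/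
namespace NCPaper

variable {S : Type*}

theorem dSum_ll (O : S) {n m : ℕ} (X : Matrix (Fin n) (Fin n) S) (Y : Matrix (Fin m) (Fin m) S)
    (i j : ℕ) (hi : i < n) (hj : j < n) (hi' : i < n + m) (hj' : j < n + m) :
    dSum O X Y ⟨i, hi'⟩ ⟨j, hj'⟩ = X ⟨i, hi⟩ ⟨j, hj⟩ := by
  simp only [dSum, dif_pos hi, dif_pos hj]

theorem dSum_rr (O : S) {n m : ℕ} (X : Matrix (Fin n) (Fin n) S) (Y : Matrix (Fin m) (Fin m) S)
    (i j : ℕ) (hi : n ≤ i) (hj : n ≤ j) (hi' : i < n + m) (hj' : j < n + m) :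
    dSum O X Y ⟨i, hi'⟩ ⟨j, hj'⟩ = Y ⟨i - n, by omega⟩ ⟨j - n, by omega⟩ := by
  simp only [dSum, dif_neg (by omega : ¬ i < n), dif_neg (by omega : ¬ j < n)]

theorem dSum_lr (O : S) {n m : ℕ} (X : Matrix (Fin n) (Fin n) S) (Y : Matrix (Fin m) (Fin m) S)
    (i j : ℕ) (hi : i < n) (hj : n ≤ j) (hi' : i < n + m) (hj' : j < n + m) :
    dSum O X Y ⟨i, hi'⟩ ⟨j, hj'⟩ = O := by
  simp only [dSum, dif_pos hi, dif_neg (by omega : ¬ j < n)]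

theorem dSum_lr' (O : S) {n m : ℕ} (X : Matrix (Fin n) (Fin n) S) (Y : Matrix (Fin m) (Fin m) S)
    (i j : ℕ) (hi : n ≤ i) (hj : j < n) (hi' : i < n + m) (hj' : j < n + m) :
    dSum O X Y ⟨i, hi'⟩ ⟨j, hj'⟩ = O := by
  simp only [dSum, dif_neg (by omega : ¬ i < n), dif_pos hj]

theorem castMat_entry {a b : ℕ} (h : a = b) (X : Matrix (Fin a) (Fin a) S) (i j : ℕ)
    (hi : i < b) (hj : j < b) (hi' : i < a) (hj' : j < a) :
    castMat h X ⟨i, hi⟩ ⟨j, hj⟩ = X ⟨i, hi'⟩ ⟨j, hj'⟩ := by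
  subst h; rfl

theorem mat_congr_s6 {N : ℕ} (M : Matrix (Fin N) (Fin N) S) {a b a' b' : ℕ} (pa : a < N)
    (pb : b < N) (pa' : a' < N) (pb' : b' < N) (h1 : a = a') (h2 : b = b') :
    M ⟨a, pa⟩ ⟨b, pb⟩ = M ⟨a', pa'⟩ ⟨b', pb'⟩ := by
  subst h1; subst h2; rfl

theorem repSum_corner (O : S) {d : ℕ} (k : ℕ) (X : Matrix (Fin d) (Fin d) S)
    (p q : Fin d) (hp : (p : ℕ) < k * d) (hq : (q : ℕ) < k * d) :
    repSum O k X ⟨(p : ℕ), hp⟩ ⟨(q : ℕ), hq⟩ = X p q := by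
  have h0 : (p : ℕ) / d = (q : ℕ) / d := by
    rw [Nat.div_eq_of_lt p.isLt, Nat.div_eq_of_lt q.isLt]
  simp only [repSum, if_pos h0]
  congr 1 <;> exact Fin.ext (by simp [Nat.mod_eq_of_lt, p.isLt, q.isLt])

/-- **The principle of nested nc sets.** Given a nested sequence `Ωj` of direct-sum-closed
subsets of a direct-sum-closed `Ω` (whose levels are complete metric spaces), with nonempty
closed levels and levelwise diameters tending to `0`, the intersection of the `Ωj` consists
exactly of the matrices `⊕_{α=1}^{n/d} Xs`, `n ∈ supp Ω`, for a unique `d × d` matrix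
`Xs` (`d = gcd (supp Ω)`). -/
theorem nested_nc_sets {S : Type*} (O : S)
    (Ω : ∀ n : ℕ, Set (Matrix (Fin n) (Fin n) S)) (hΩ0 : Ω 0 = ∅)
    (hdir : RespectsDSums O Ω) (hne : (supp Ω).Nonempty)
    (ρ : ∀ n : ℕ, Matrix (Fin n) (Fin n) S → Matrix (Fin n) (Fin n) S → ℝ)
    (hmetric : ∀ n ∈ supp Ω, IsMetricOn (ρ n) (Ω n))
    (hcomplete : ∀ n ∈ supp Ω, IsCompleteOn (ρ n) (Ω n))
    (Ωj : ℕ → ∀ n : ℕ, Set (Matrix (Fin n) (Fin n) S))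
    (hsub : ∀ j n, Ωj j n ⊆ Ω n)
    (hdirj : ∀ j, RespectsDSums O (Ωj j))
    (hnonempty : ∀ j, ∀ n ∈ supp Ω, (Ωj j n).Nonempty)
    (hclosed : ∀ j, ∀ n ∈ supp Ω, IsClosedIn (ρ n) (Ωj j n) (Ω n))
    (hnested : ∀ j n, Ωj (j + 1) n ⊆ Ωj j n)
    (hdiam : ∀ n ∈ supp Ω, ∀ ε > (0 : ℝ), ∃ J : ℕ, ∀ j ≥ J,
      ∀ X ∈ Ωj j n, ∀ Y ∈ Ωj j n, ρ n X Y ≤ ε)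
    (d : ℕ) (hdvd : ∀ n ∈ supp Ω, d ∣ n)
    (hgcd : ∀ e : ℕ, (∀ n ∈ supp Ω, e ∣ n) → e ∣ d) :
    ∃! Xs : Matrix (Fin d) (Fin d) S, ∀ (n : ℕ) (X : Matrix (Fin n) (Fin n) S),
      (∀ j, X ∈ Ωj j n) ↔ ∃ hn : n ∈ supp Ω,
        X = castMat (Nat.div_mul_cancel (hdvd n hn)) (repSum O (n / d) Xs) := by
  classical
  obtain ⟨n₀, hn₀⟩ := hne
  have hd0 : 0 < d := Nat.pos_of_dvd_of_pos (hdvd n₀ hn₀) hn₀.1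
  -- supp is closed under addition
  have hGadd : ∀ {n m : ℕ}, n ∈ supp Ω → m ∈ supp Ω → n + m ∈ supp Ω := by
    intro n m hn hm
    obtain ⟨X, hX⟩ := hn.2
    obtain ⟨Y, hY⟩ := hm.2
    exact ⟨by have := hn.1; omega, ⟨dSum O X Y, hdir X Y hX hY⟩⟩
  -- positive multiples of supp elements stay in supp
  have hmulmem : ∀ {n : ℕ}, n ∈ supp Ω → ∀ k : ℕ, 0 < k → k * n ∈ supp Ω := by
    intro n hn k hk
    induction k with
    | zero => omega
    | succ k ih =>
      rcases Nat.eq_zero_or_pos k with rfl | hk'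
      · simpa using hn
      · have h := hGadd (ih hk') hn
        have e : k * n + n = (k + 1) * n := by ring
        rwa [e] at h
  -- Ωj is antitone in j
  have hmono : ∀ (j m n : ℕ), Ωj (j + m) n ⊆ Ωj j n := by
    intro j m n
    induction m with
    | zero => exact fun X h => h
    | succ m ih => exact fun X hX => ih (hnested (j + m) n hX)
  have hmono' : ∀ {j k : ℕ}, j ≤ k → ∀ n, Ωj k n ⊆ Ωj j n := by
    intro j k hjk n
    obtain ⟨m, rfl⟩ := Nat.exists_eq_add_of_le hjk
    exact hmono j m n
  -- nonnegativity of the metric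
  have hnonneg : ∀ n, n ∈ supp Ω → ∀ X ∈ Ω n, ∀ Y ∈ Ω n, 0 ≤ ρ n X Y := by
    intro n hn X hX Y hY
    obtain ⟨hid, hsym, htri⟩ := hmetric n hn
    have h1 : ρ n X X = 0 := (hid X hX X hX).2 rfl
    have h2 := htri X hX Y hY X hX
    have h3 := hsym X hX Y hY
    linarith
  -- uniqueness of points in the intersection
  have hcapuniq : ∀ n, n ∈ supp Ω → ∀ X Y : Matrix (Fin n) (Fin n) S,
      (∀ j, X ∈ Ωj j n) → (∀ j, Y ∈ Ωj j n) → X = Y := by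
    intro n hn X Y hX hY
    have hXΩ : X ∈ Ω n := hsub 0 n (hX 0)
    have hYΩ : Y ∈ Ω n := hsub 0 n (hY 0)
    have hle : ∀ ε > (0 : ℝ), ρ n X Y ≤ ε := by
      intro ε hε
      obtain ⟨J, hJ⟩ := hdiam n hn ε hε
      exact hJ J le_rfl X (hX J) Y (hY J)
    have hge := hnonneg n hn X hXΩ Y hYΩ
    have h0 : ρ n X Y = 0 := by
      by_contra h
      have hpos : 0 < ρ n X Y := lt_of_le_of_ne hge (Ne.symm h)
      have := hle (ρ n X Y / 2) (by linarith)
      linarith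
    exact ((hmetric n hn).1 X hXΩ Y hYΩ).1 h0
  -- existence of points in the intersection
  have hcapex : ∀ n, n ∈ supp Ω → ∃ X : Matrix (Fin n) (Fin n) S, ∀ j, X ∈ Ωj j n := by
    intro n hn
    choose u hu using fun j => hnonempty j n hn
    have hcauchy : ∀ ε > (0 : ℝ), ∃ N, ∀ j ≥ N, ∀ k ≥ N, ρ n (u j) (u k) < ε := by
      intro ε hε
      obtain ⟨J, hJ⟩ := hdiam n hn (ε / 2) (by linarith)
      refine ⟨J, fun j hj k hk => ?_⟩
      have h1 : u j ∈ Ωj J n := hmono' hj n (hu j)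
      have h2 : u k ∈ Ωj J n := hmono' hk n (hu k)
      have := hJ J le_rfl (u j) h1 (u k) h2
      linarith
    obtain ⟨L, hLΩ, hLlim⟩ := hcomplete n hn u (fun j => hsub j n (hu j)) hcauchy
    refine ⟨L, fun j₀ => ?_⟩
    refine hclosed j₀ n hn (fun k => u (k + j₀))
      (fun k => hmono' (by omega) n (hu (k + j₀))) L hLΩ ?_
    intro ε hε
    obtain ⟨N, hN⟩ := hLlim ε hε
    exact ⟨N, fun k hk => hN (k + j₀) (by omega)⟩
  -- the canonical point L n
  have hLex : ∃ L : ∀ n : ℕ, Matrix (Fin n) (Fin n) S,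
      ∀ n, n ∈ supp Ω → ∀ j, L n ∈ Ωj j n := by
    choose f hf using hcapex
    refine ⟨fun n => if h : n ∈ supp Ω then f n h else fun _ _ => O, fun n hn j => ?_⟩
    show (if h : n ∈ supp Ω then f n h else fun _ _ => O) ∈ Ωj j n
    convert hf n hn j using 1; exact dif_pos hn
  obtain ⟨L, hL⟩ := hLex
  -- direct sum relations
  have hLadd : ∀ n m, n ∈ supp Ω → m ∈ supp Ω → L (n + m) = dSum O (L n) (L m) :=
    fun n m hn hm => hcapuniq (n + m) (hGadd hn hm) _ _ (hL _ (hGadd hn hm))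
      (fun j => hdirj j (L n) (L m) (hL n hn j) (hL m hm j))
  have hcastmem : ∀ {a b : ℕ} (h : a = b) (X : Matrix (Fin a) (Fin a) S) (j : ℕ),
      X ∈ Ωj j a → castMat h X ∈ Ωj j b := by
    intro a b h X j hX
    subst h
    exact hX
  have hLadd' : ∀ n m, n ∈ supp Ω → m ∈ supp Ω →
      L (n + m) = castMat (add_comm m n) (dSum O (L m) (L n)) := by
    intro n m hn hm
    refine hcapuniq (n + m) (hGadd hn hm) _ _ (hL _ (hGadd hn hm)) (fun j => ?_)
    exact hcastmem (add_comm m n) _ j (hdirj j (L m) (L n) (hL m hm j) (hL n hn j))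
  -- two-level comparison
  have h2lvl : ∀ N M, N ∈ supp Ω → M ∈ supp Ω → ∀ (i j : ℕ)
      (h1 : i < N) (h2 : j < N) (h3 : i < M) (h4 : j < M),
      L N ⟨i, h1⟩ ⟨j, h2⟩ = L M ⟨i, h3⟩ ⟨j, h4⟩ := by
    intro N M hN hM i j h1 h2 h3 h4
    have hiNM : i < N + M := by omega
    have hjNM : j < N + M := by omega
    have e1 : L (N + M) ⟨i, hiNM⟩ ⟨j, hjNM⟩ = L N ⟨i, h1⟩ ⟨j, h2⟩ := by
      rw [hLadd N M hN hM]
      exact dSum_ll O (L N) (L M) i j h1 h2 hiNM hjNM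
    have e2 : L (N + M) ⟨i, hiNM⟩ ⟨j, hjNM⟩ = L M ⟨i, h3⟩ ⟨j, h4⟩ := by
      rw [hLadd' N M hN hM]
      rw [castMat_entry (add_comm M N) _ i j hiNM hjNM (by omega) (by omega)]
      exact dSum_ll O (L M) (L N) i j h3 h4 (by omega) (by omega)
    exact e1.symm.trans e2
  -- arbitrarily large elements of supp
  have hbig : ∀ i j : ℕ, ∃ N, N ∈ supp Ω ∧ i < N ∧ j < N := by
    intro i j
    refine ⟨(max i j + 1) * n₀, hmulmem hn₀ _ (by omega), ?_, ?_⟩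
    · have h1 : max i j + 1 ≤ (max i j + 1) * n₀ := Nat.le_mul_of_pos_right _ hn₀.1
      omega
    · have h1 : max i j + 1 ≤ (max i j + 1) * n₀ := Nat.le_mul_of_pos_right _ hn₀.1
      omega
  -- the global entry function F
  have hFex : ∀ i j : ℕ, ∃ s : S, ∀ N, N ∈ supp Ω → ∀ (hi : i < N) (hj : j < N),
      L N ⟨i, hi⟩ ⟨j, hj⟩ = s := by
    intro i j
    obtain ⟨N₀, hN₀, hiN₀, hjN₀⟩ := hbig i j
    exact ⟨L N₀ ⟨i, hiN₀⟩ ⟨j, hjN₀⟩,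
      fun N hN hi hj => h2lvl N N₀ hN hN₀ i j hi hj hiN₀ hjN₀⟩
  choose F hF using hFex
  -- shift property
  have hFshift : ∀ n, n ∈ supp Ω → ∀ i j : ℕ, F (i + n) (j + n) = F i j := by
    intro n hn i j
    obtain ⟨N, hN, hiN, hjN⟩ := hbig i j
    have hmem : n + N ∈ supp Ω := hGadd hn hN
    have h1 : L (n + N) ⟨i + n, by omega⟩ ⟨j + n, by omega⟩ = F (i + n) (j + n) :=
      hF (i + n) (j + n) (n + N) hmem (by omega) (by omega)
    rw [hLadd n N hn hN] at h1
    rw [dSum_rr O (L n) (L N) (i + n) (j + n) (by omega) (by omega) (by omega) (by omega)] at h1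
    rw [mat_congr_s6 (L N) (by omega) (by omega) hiN hjN (by omega) (by omega)] at h1
    rw [hF i j N hN hiN hjN] at h1
    exact h1.symm
  -- vanishing property
  have hFzero : ∀ n, n ∈ supp Ω → ∀ i j : ℕ, i < n → n ≤ j → F i j = O ∧ F j i = O := by
    intro n hn i j hi hj
    obtain ⟨N, hN, hiN, hjN⟩ := hbig i j
    have hmem : n + N ∈ supp Ω := hGadd hn hN
    constructor
    · have h1 : L (n + N) ⟨i, by omega⟩ ⟨j, by omega⟩ = F i j :=
        hF i j (n + N) hmem (by omega) (by omega)
      rw [hLadd n N hn hN] at h1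
      rw [dSum_lr O (L n) (L N) i j hi hj (by omega) (by omega)] at h1
      exact h1.symm
    · have h1 : L (n + N) ⟨j, by omega⟩ ⟨i, by omega⟩ = F j i :=
        hF j i (n + N) hmem (by omega) (by omega)
      rw [hLadd n N hn hN] at h1
      rw [dSum_lr' O (L n) (L N) j i hj hi (by omega) (by omega)] at h1
      exact h1.symm
  -- Bezout: find a with a, a + d ∈ supp Ω
  have hconsec : ∃ a, a ∈ supp Ω ∧ a + d ∈ supp Ω := by
    set s : Set ℤ := (fun n : ℕ => (n : ℤ)) '' supp Ω with hs
    obtain ⟨g, hg⟩ := Int.subgroup_cyclic (AddSubgroup.closure s)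
    have hdvdH : ∀ x ∈ AddSubgroup.closure s, (d : ℤ) ∣ x := by
      intro x hx
      induction hx using AddSubgroup.closure_induction with
      | mem x hx =>
        obtain ⟨n, hn, rfl⟩ := hx
        exact Int.natCast_dvd_natCast.mpr (hdvd n hn)
      | zero => exact dvd_zero _
      | add x y hx hy ihx ihy => exact dvd_add ihx ihy
      | neg x hx ihx => exact dvd_neg.mpr ihx
    have hrepr : ∀ x ∈ AddSubgroup.closure s, ∃ p q : ℕ,
        (p ∈ supp Ω ∨ p = 0) ∧ (q ∈ supp Ω ∨ q = 0) ∧ x = (p : ℤ) - q := by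
      intro x hx
      induction hx using AddSubgroup.closure_induction with
      | mem x hx =>
        obtain ⟨n, hn, rfl⟩ := hx
        exact ⟨n, 0, Or.inl hn, Or.inr rfl, by simp⟩
      | zero => exact ⟨0, 0, Or.inr rfl, Or.inr rfl, by simp⟩
      | add x y hx hy ihx ihy =>
        obtain ⟨p, q, hp, hq, rfl⟩ := ihx
        obtain ⟨p', q', hp', hq', rfl⟩ := ihy
        refine ⟨p + p', q + q', ?_, ?_, by push_cast; ring⟩
        · rcases hp with hp | rfl
          · rcases hp' with hp' | rfl
            · exact Or.inl (hGadd hp hp')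
            · simpa using Or.inl hp
          · simpa using hp'
        · rcases hq with hq | rfl
          · rcases hq' with hq' | rfl
            · exact Or.inl (hGadd hq hq')
            · simpa using Or.inl hq
          · simpa using hq'
      | neg x hx ihx =>
        obtain ⟨p, q, hp, hq, rfl⟩ := ihx
        exact ⟨q, p, hq, hp, by ring⟩
    have hgH : g ∈ AddSubgroup.closure s := by
      rw [hg]
      exact AddSubgroup.subset_closure rfl
    have hdg : (d : ℤ) ∣ g := hdvdH g hgH
    have hgn : ∀ n, n ∈ supp Ω → g.natAbs ∣ n := by
      intro n hn
      have h1 : (n : ℤ) ∈ AddSubgroup.closure s := AddSubgroup.subset_closure ⟨n, hn, rfl⟩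
      rw [hg] at h1
      obtain ⟨z, hz⟩ := AddSubgroup.mem_closure_singleton.mp h1
      have : g ∣ (n : ℤ) := Dvd.intro_left z (by rw [← hz]; simp [zsmul_eq_mul])
      have h2 := Int.natAbs_dvd_natAbs.mpr this
      simpa using h2
    have hgd : g.natAbs ∣ d := hgcd g.natAbs hgn
    have hdg' : d ∣ g.natAbs := by
      have := Int.natAbs_dvd_natAbs.mpr hdg
      simpa using this
    have habs : g.natAbs = d := Nat.dvd_antisymm hgd hdg'
    have hdH : (d : ℤ) ∈ AddSubgroup.closure s := by
      rcases Int.natAbs_eq g with h | h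
      · rw [← habs, ← h]; exact hgH
      · rw [← habs]
        have : -g ∈ AddSubgroup.closure s := neg_mem hgH
        rwa [← neg_eq_iff_eq_neg.mpr h]
    obtain ⟨p, q, hp, hq, hpq⟩ := hrepr (d : ℤ) hdH
    have hpqd : p = q + d := by omega
    have hp' : p ∈ supp Ω := by
      rcases hp with hp | rfl
      · exact hp
      · exfalso; omega
    rcases hq with hq | rfl
    · exact ⟨q, hq, hpqd ▸ hp'⟩
    · have hpd : p = d := by omega
      rw [hpd] at hp'
      exact ⟨d, hp', hGadd hp' hp'⟩
  -- d-shift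
  have hFd : ∀ i j : ℕ, F (i + d) (j + d) = F i j := by
    intro i j
    obtain ⟨a, ha, had⟩ := hconsec
    have h1 := hFshift a ha (i + d) (j + d)
    have h2 := hFshift (a + d) had i j
    have e1 : i + d + a = i + (a + d) := by ring
    have e2 : j + d + a = j + (a + d) := by ring
    rw [e1, e2] at h1
    exact h1.symm.trans h2
  have hFt : ∀ t i j : ℕ, F (i + t * d) (j + t * d) = F i j := by
    intro t
    induction t with
    | zero => simp
    | succ t ih =>
      intro i j
      have e1 : i + (t + 1) * d = i + d + t * d := by ring
      have e2 : j + (t + 1) * d = j + d + t * d := by ring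
      rw [e1, e2, ih, hFd]
  -- d-vanishing
  have hFdzero : ∀ i j : ℕ, i < d → d ≤ j → F i j = O ∧ F j i = O := by
    intro i j hi hj
    obtain ⟨a, ha, had⟩ := hconsec
    have h1 := hFshift a ha i j
    have h2 := hFshift a ha j i
    have hz := hFzero (a + d) had (i + a) (j + a) (by omega) (by omega)
    exact ⟨h1 ▸ hz.1, h2 ▸ hz.2⟩
  -- the block structure of F
  have hFform : ∀ i j : ℕ, F i j = if i / d = j / d then F (i % d) (j % d) else O := by
    intro i j
    rcases lt_trichotomy (i / d) (j / d) with h | h | h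
    · rw [if_neg (by omega)]
      have hub : (i / d) * d ≤ (j / d) * d := Nat.mul_le_mul_right _ (by omega)
      have hub2 : (j / d) * d ≤ j := Nat.div_mul_le_self j d
      have e1 : i % d + (i / d) * d = i := Nat.mod_add_div' i d
      have e2 : (j - (i / d) * d) + (i / d) * d = j := by omega
      have h3 := hFt (i / d) (i % d) (j - (i / d) * d)
      rw [e1, e2] at h3
      rw [h3]
      refine (hFdzero (i % d) (j - (i / d) * d) (Nat.mod_lt _ hd0) ?_).1
      have hub3 : (i / d + 1) * d ≤ (j / d) * d := Nat.mul_le_mul_right _ (by omega)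
      have e3 : (i / d + 1) * d = (i / d) * d + d := by ring
      omega
    · rw [if_pos h]
      have e1 : i % d + (i / d) * d = i := Nat.mod_add_div' i d
      have e2 : j % d + (i / d) * d = j := by rw [h]; exact Nat.mod_add_div' j d
      have h3 := hFt (i / d) (i % d) (j % d)
      rw [e1, e2] at h3
      exact h3
    · rw [if_neg (by omega)]
      have hub : (j / d) * d ≤ (i / d) * d := Nat.mul_le_mul_right _ (by omega)
      have hub2 : (i / d) * d ≤ i := Nat.div_mul_le_self i d
      have e1 : (i - (j / d) * d) + (j / d) * d = i := by omega
      have e2 : j % d + (j / d) * d = j := Nat.mod_add_div' j d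
      have h3 := hFt (j / d) (i - (j / d) * d) (j % d)
      rw [e1, e2] at h3
      rw [h3]
      refine (hFdzero (j % d) (i - (j / d) * d) (Nat.mod_lt _ hd0) ?_).2
      have hub3 : (j / d + 1) * d ≤ (i / d) * d := Nat.mul_le_mul_right _ (by omega)
      have e3 : (j / d + 1) * d = (j / d) * d + d := by ring
      omega
  -- the candidate d × d matrix
  set Xs : Matrix (Fin d) (Fin d) S := fun p q => F p q with hXs
  -- L n is the repeated direct sum of Xs
  have hrep : ∀ n (hn : n ∈ supp Ω),
      L n = castMat (Nat.div_mul_cancel (hdvd n hn)) (repSum O (n / d) Xs) := by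
    intro n hn
    funext i j
    have hL' : L n i j = F i j := by
      have h := hF (i : ℕ) (j : ℕ) n hn i.isLt j.isLt
      simpa using h
    rw [hL', hFform]
    show _ = repSum O (n / d) Xs (Fin.cast _ i) (Fin.cast _ j)
    simp only [repSum, Fin.coe_cast, hXs]
  have hXsmem : ∀ n (hn : n ∈ supp Ω) (j : ℕ),
      castMat (Nat.div_mul_cancel (hdvd n hn)) (repSum O (n / d) Xs) ∈ Ωj j n := by
    intro n hn j
    rw [← hrep n hn]
    exact hL n hn j
  refine ⟨Xs, ?_, ?_⟩
  · intro n X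
    constructor
    · intro hX
      have hnΩ : X ∈ Ω n := hsub 0 n (hX 0)
      have hn : n ∈ supp Ω := by
        rcases Nat.eq_zero_or_pos n with rfl | hpos
        · rw [hΩ0] at hnΩ; exact absurd hnΩ (Set.notMem_empty X)
        · exact ⟨hpos, ⟨X, hnΩ⟩⟩
      exact ⟨hn, (hcapuniq n hn X (L n) hX (hL n hn)).trans (hrep n hn)⟩
    · rintro ⟨hn, rfl⟩
      exact hXsmem n hn
  · intro Xs' hXs'
    obtain ⟨hn₀', heq⟩ := (hXs' n₀ (L n₀)).1 (hL n₀ hn₀)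
    have heq2 := hrep n₀ hn₀
    have hdn : d ≤ n₀ := Nat.le_of_dvd hn₀.1 (hdvd n₀ hn₀)
    funext p q
    have hp : (p : ℕ) < n₀ := lt_of_lt_of_le p.isLt hdn
    have hq : (q : ℕ) < n₀ := lt_of_lt_of_le q.isLt hdn
    have hkey := congrFun (congrFun (heq.symm.trans heq2) ⟨(p : ℕ), hp⟩) ⟨(q : ℕ), hq⟩
    have hdiv : n₀ / d * d = n₀ := Nat.div_mul_cancel (hdvd n₀ hn₀)
    rw [castMat_entry _ _ _ _ hp hq (by omega) (by omega),
        castMat_entry _ _ _ _ hp hq (by omega) (by omega)] at hkey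
    rw [repSum_corner O _ Xs' p q (by omega) (by omega),
        repSum_corner O _ Xs p q (by omega) (by omega)] at hkey
    exact hkey


end NCPaper
end

section
/- Let V be an operator space over 𝔽 (𝔽 = ℝ or ℂ). For X ∈ V^{n×n} and Y ∈ V^{m×m}, define ρ(X,Y) := ‖⊕_{α=1}^m X − ⊕_{β=1}^n Y‖_{nm}. Then: (a) ρ extends the norm-induced metrics: if n = m then ρ(X,Y) = ‖X − Y‖_n; (b) ρ is a pseudometric on V_nc: ρ(X,X) = 0, ρ(X,Y) = ρ(Y,X), and ρ(X,Z) ≤ ρ(X,Y) + ρ(Y,Z) for all X ∈ V^{n×n}, Y ∈ V^{m×m}, Z ∈ V^{p×p}; (c) ρ(X,Y) = 0 if and only if X ∼ Y, i.e., if and only if there exist p ≥ 1 dividing both n and m and Z ∈ V^{p×p} with X = ⊕_{α=1}^{n/p} Z and Y = ⊕_{β=1}^{m/p} Z. -/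
namespace NCPaper

variable {S : Type*}

/-- The (2,2) operator norm of a rectangular matrix over `ℝ` or `ℂ`. -/
noncomputable def l2opNorm {𝔽 : Type*} [RCLike 𝔽] {n m : ℕ}
    (S : Matrix (Fin n) (Fin m) 𝔽) : ℝ :=
  ‖LinearMap.toContinuousLinearMap (Matrix.toEuclideanLin S)‖

/-- Left action of a scalar matrix on a matrix over the vector space `V`. -/
def sLAct {𝔽 V : Type*} [RCLike 𝔽] [AddCommGroup V] [Module 𝔽 V] {n m p : ℕ}
    (T : Matrix (Fin n) (Fin m) 𝔽) (Y : Matrix (Fin m) (Fin p) V) :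
    Matrix (Fin n) (Fin p) V := fun i j => ∑ k, T i k • Y k j

/-- Right action of a scalar matrix on a matrix over the vector space `V`. -/
def sRAct {𝔽 V : Type*} [RCLike 𝔽] [AddCommGroup V] [Module 𝔽 V] {n m p : ℕ}
    (X : Matrix (Fin n) (Fin m) V) (T : Matrix (Fin m) (Fin p) 𝔽) :
    Matrix (Fin n) (Fin p) V := fun i j => ∑ k, T k j • X i k

/-- Two-sided action `S X T` of scalar matrices on a matrix over `V`. -/
def sAct {𝔽 V : Type*} [RCLike 𝔽] [AddCommGroup V] [Module 𝔽 V] {n : ℕ}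
    (S : Matrix (Fin n) (Fin n) 𝔽) (X : Matrix (Fin n) (Fin n) V)
    (T : Matrix (Fin n) (Fin n) 𝔽) : Matrix (Fin n) (Fin n) V :=
  fun i j => ∑ k, ∑ l, (S i k * T l j) • X k l

/-- `V` together with the norms `N n` on the matrix levels is an operator space over
`𝔽 = ℝ` or `𝔽 = ℂ`: each `N n` is a Banach-space norm, direct sums have the max norm,
and `‖S X T‖_n ≤ ‖S‖ ‖X‖_n ‖T‖` for scalar matrices `S, T` with the (2,2) operator norm. -/
structure IsOperatorSpace (𝔽 : Type*) [RCLike 𝔽] (V : Type*) [AddCommGroup V] [Module 𝔽 V]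
    (N : ∀ n : ℕ, Matrix (Fin n) (Fin n) V → ℝ) : Prop where
  eq_zero_iff : ∀ (n : ℕ) (X : Matrix (Fin n) (Fin n) V), N n X = 0 ↔ X = 0
  add_le : ∀ (n : ℕ) (X Y : Matrix (Fin n) (Fin n) V), N n (X + Y) ≤ N n X + N n Y
  smul_eq : ∀ (n : ℕ) (c : 𝔽) (X : Matrix (Fin n) (Fin n) V), N n (c • X) = ‖c‖ * N n X
  complete : ∀ n : ℕ, IsCompleteOn (fun X Y => N n (X - Y))
      (Set.univ : Set (Matrix (Fin n) (Fin n) V))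
  dsum_eq : ∀ (n m : ℕ) (X : Matrix (Fin n) (Fin n) V) (Y : Matrix (Fin m) (Fin m) V),
      N (n + m) (dSum 0 X Y) = max (N n X) (N m Y)
  act_le : ∀ (n : ℕ) (S T : Matrix (Fin n) (Fin n) 𝔽) (X : Matrix (Fin n) (Fin n) V),
      N n (sAct S X T) ≤ l2opNorm S * N n X * l2opNorm T

/-- Two square matrices over `S` are equivalent if both are direct sums of copies of one and
the same smaller matrix. -/
def SimRel (O : S) {n m : ℕ} (X : Matrix (Fin n) (Fin n) S)
    (Y : Matrix (Fin m) (Fin m) S) : Prop :=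
  ∃ p : ℕ, 0 < p ∧ ∃ (hn : p ∣ n) (hm : p ∣ m) (Z : Matrix (Fin p) (Fin p) S),
    X = castMat (Nat.div_mul_cancel hn) (repSum O (n / p) Z) ∧
    Y = castMat (Nat.div_mul_cancel hm) (repSum O (m / p) Z)

/-- The function `ρ(X,Y) := ‖⊕_{α=1}^m X − ⊕_{β=1}^n Y‖_{nm}` comparing square matrices of
different sizes over an operator space. -/
noncomputable def rho {V : Type*} [AddCommGroup V]
    (N : ∀ k : ℕ, Matrix (Fin k) (Fin k) V → ℝ) {n m : ℕ}
    (X : Matrix (Fin n) (Fin n) V) (Y : Matrix (Fin m) (Fin m) V) : ℝ :=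
  N (n * m) (castMat (Nat.mul_comm m n) (repSum 0 m X) - repSum 0 n Y)

section DivKey

lemma div_div_pair {d b D i j : ℕ} (hD : D = b * d) (h : i / d = j / d) :
    i / D = j / D := by
  subst hD
  rw [Nat.mul_comm, ← Nat.div_div_eq_div_mul, ← Nat.div_div_eq_div_mul, h]

lemma mod_div_iff {d b D i j : ℕ} (hD : D = b * d) (h : i / D = j / D) :
    i % D / d = j % D / d ↔ i / d = j / d := by
  subst hD
  rw [Nat.mul_comm] at h ⊢
  rw [Nat.mod_mul_right_div_self, Nat.mod_mul_right_div_self]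
  rw [← Nat.div_div_eq_div_mul, ← Nat.div_div_eq_div_mul] at h
  constructor
  · intro h2
    have hi := Nat.div_add_mod (i / d) b
    have hj := Nat.div_add_mod (j / d) b
    rw [← hi, ← hj, h, h2]
  · intro h2
    rw [h2]

lemma mod_mod_mul {d b D i : ℕ} (hD : D = b * d) : i % D % d = i % d := by
  subst hD; exact Nat.mod_mod_of_dvd i (dvd_mul_left d b)

lemma exists_shift (n m : ℕ) (hm : 0 < m) (c : ℕ) (hc : Nat.gcd n m ∣ c) :
    ∃ t, t < m ∧ (c + t * n) % m = 0 := by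
  obtain ⟨k, hk⟩ := hc
  have hga : ((Nat.gcd n m : ℕ) : ℤ) = n * Nat.gcdA n m + m * Nat.gcdB n m :=
    Nat.gcd_eq_gcd_ab n m
  set A := Nat.gcdA n m with hA
  set t0 : ℤ := (-(k * A)) % m with ht0def
  have hm0 : (m : ℤ) ≠ 0 := by exact_mod_cast hm.ne'
  have ht0 : 0 ≤ t0 := Int.emod_nonneg _ hm0
  have ht1 : t0 < m := Int.emod_lt_of_pos _ (by exact_mod_cast hm)
  refine ⟨t0.toNat, ?_, ?_⟩
  · have : (t0.toNat : ℤ) < m := by rwa [Int.toNat_of_nonneg ht0]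
    exact_mod_cast this
  · have key : ((c + t0.toNat * n : ℕ) : ℤ) =
        m * (k * Nat.gcdB n m - (-(k * A)) / m * n) := by
      push_cast [Int.toNat_of_nonneg ht0]
      have hq : t0 = -(k * A) - m * ((-(k * A)) / m) := by
        rw [ht0def, Int.emod_def]
      have hkz : (c : ℤ) = (Nat.gcd n m : ℕ) * k := by exact_mod_cast hk
      rw [hq, hkz, hga]; ring
    have hdvd : (m : ℤ) ∣ ((c + t0.toNat * n : ℕ) : ℤ) := ⟨_, key⟩
    have : m ∣ (c + t0.toNat * n) := by exact_mod_cast hdvd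
    omega

end DivKey

section CastMat

variable {S : Type*}

lemma castMat_self {a : ℕ} (h : a = a) (A : Matrix (Fin a) (Fin a) S) :
    castMat h A = A := rfl

lemma castMat_trans {a b c : ℕ} (h : a = b) (h' : b = c) (A : Matrix (Fin a) (Fin a) S) :
    castMat h' (castMat h A) = castMat (h.trans h') A := rfl

end CastMat
section RepSum
set_option linter.unusedSectionVars false

variable {V : Type*} [AddCommGroup V]

lemma repSum_sub {k d : ℕ} (A B : Matrix (Fin d) (Fin d) V) :
    repSum 0 k (A - B) = repSum 0 k A - repSum 0 k B := by
  funext i j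
  simp only [repSum, Matrix.sub_apply]
  split <;> simp

lemma repSum_one {d : ℕ} (O : V) (A : Matrix (Fin d) (Fin d) V) :
    repSum O 1 A = castMat (Nat.one_mul d).symm A := by
  funext i j
  have hi : (i : ℕ) < d := by have := i.isLt; omega
  have hj : (j : ℕ) < d := by have := j.isLt; omega
  simp only [repSum, castMat, Nat.div_eq_of_lt hi, Nat.div_eq_of_lt hj,
    Nat.mod_eq_of_lt hi, Nat.mod_eq_of_lt hj, if_pos rfl]
  congr

lemma repSum_succ {d k : ℕ} (O : V) (A : Matrix (Fin d) (Fin d) V) :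
    repSum O (k + 1) A
      = castMat (by ring : d + k * d = (k + 1) * d) (dSum O A (repSum O k A)) := by
  funext i j
  have hd : 0 < d := by
    by_contra h
    have : d = 0 := by omega
    subst this
    exact absurd i.isLt (by simp)
  simp only [repSum, castMat, dSum, Fin.coe_cast]
  rcases Nat.lt_or_ge (i : ℕ) d with ha | ha <;> rcases Nat.lt_or_ge (j : ℕ) d with hb | hb
  · rw [dif_pos ha, dif_pos hb, Nat.div_eq_of_lt ha, Nat.div_eq_of_lt hb, if_pos rfl]
    congr 1 <;> exact Fin.ext (by simp [Nat.mod_eq_of_lt, ha, hb])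
  · rw [dif_pos ha, dif_neg (by omega), Nat.div_eq_of_lt ha,
      if_neg (by have : 1 ≤ (j : ℕ) / d := (Nat.one_le_div_iff hd).2 hb; omega)]
  · rw [dif_neg (by omega), dif_pos hb, Nat.div_eq_of_lt hb,
      if_neg (by have : 1 ≤ (i : ℕ) / d := (Nat.one_le_div_iff hd).2 ha; omega)]
  · rw [dif_neg (by omega), dif_neg (by omega)]
    have ea : (i : ℕ) / d = ((i : ℕ) - d) / d + 1 := by
      conv_lhs => rw [show (i : ℕ) = ((i : ℕ) - d) + d by omega]
      rw [Nat.add_div_right _ hd]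
    have eb : (j : ℕ) / d = ((j : ℕ) - d) / d + 1 := by
      conv_lhs => rw [show (j : ℕ) = ((j : ℕ) - d) + d by omega]
      rw [Nat.add_div_right _ hd]
    have ma : (i : ℕ) % d = ((i : ℕ) - d) % d := by
      conv_lhs => rw [show (i : ℕ) = ((i : ℕ) - d) + d by omega]
      rw [Nat.add_mod_right]
    have mb : (j : ℕ) % d = ((j : ℕ) - d) % d := by
      conv_lhs => rw [show (j : ℕ) = ((j : ℕ) - d) + d by omega]
      rw [Nat.add_mod_right]
    by_cases h : ((i : ℕ) - d) / d = ((j : ℕ) - d) / d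
    · rw [if_pos (by omega), if_pos h]
      congr 1 <;> exact Fin.ext (by simp [ma, mb])
    · rw [if_neg (by omega), if_neg h]

lemma castRep_congr {d k k' q : ℕ} (O : V) (e : k * d = q) (e' : k' * d = q)
    (X : Matrix (Fin d) (Fin d) V) :
    castMat e (repSum O k X) = castMat e' (repSum O k' X) := rfl

lemma repSum_comp {p k n m : ℕ} (e : k * p = n) (Z : Matrix (Fin p) (Fin p) V)
    (e' : (m * k) * p = m * n) :
    repSum (0 : V) m (castMat e (repSum 0 k Z)) = castMat e' (repSum 0 (m * k) Z) := by
  subst e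
  funext i j
  simp only [repSum, castMat, Fin.coe_cast]
  by_cases h : (i : ℕ) / (k * p) = (j : ℕ) / (k * p)
  · rw [if_pos h]
    by_cases h2 : (i : ℕ) / p = (j : ℕ) / p
    · rw [if_pos h2, if_pos ((mod_div_iff rfl h).2 h2)]
      congr 1 <;> exact Fin.ext (by simp [mod_mod_mul rfl])
    · rw [if_neg h2, if_neg (fun hc => h2 ((mod_div_iff rfl h).1 hc))]
  · rw [if_neg h, if_neg (fun hc => h (div_div_pair rfl hc))]

end RepSum
section NormLemmas
set_option linter.unusedSectionVars false

variable {𝔽 V : Type*} [RCLike 𝔽] [AddCommGroup V] [Module 𝔽 V]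
variable {N : ∀ n : ℕ, Matrix (Fin n) (Fin n) V → ℝ}

lemma N_castMat {a b : ℕ} (h : a = b) (A : Matrix (Fin a) (Fin a) V) :
    N b (castMat h A) = N a A := by subst h; rfl

lemma N_size0 (hop : IsOperatorSpace 𝔽 V N) {k : ℕ} (h : k = 0)
    (A : Matrix (Fin k) (Fin k) V) : N k A = 0 := by
  subst h
  have : A = 0 := by funext i; exact i.elim0
  rw [this]
  exact (hop.eq_zero_iff 0 0).2 rfl

lemma N_neg (hop : IsOperatorSpace 𝔽 V N) {k : ℕ} (A : Matrix (Fin k) (Fin k) V) :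
    N k (-A) = N k A := by
  have : -A = (-1 : 𝔽) • A := by rw [neg_one_smul]
  rw [this, hop.smul_eq]
  simp

lemma N_sub_comm (hop : IsOperatorSpace 𝔽 V N) {k : ℕ} (A B : Matrix (Fin k) (Fin k) V) :
    N k (A - B) = N k (B - A) := by
  rw [← N_neg hop (B - A), neg_sub]

lemma N_nonneg (hop : IsOperatorSpace 𝔽 V N) {k : ℕ} (A : Matrix (Fin k) (Fin k) V) :
    0 ≤ N k A := by
  have h0 : N k (A + (-A)) = 0 := by
    rw [add_neg_cancel]; exact (hop.eq_zero_iff k 0).2 rfl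
  have := hop.add_le k A (-A)
  rw [h0, N_neg hop] at this
  linarith

lemma repSum_norm (hop : IsOperatorSpace 𝔽 V N) {k d : ℕ} (hk : 0 < k)
    (A : Matrix (Fin d) (Fin d) V) : N (k * d) (repSum 0 k A) = N d A := by
  rcases Nat.eq_zero_or_pos d with hd | hd
  · subst hd; rw [N_size0 hop (Nat.mul_zero k), N_size0 hop rfl]
  induction k with
  | zero => omega
  | succ k ih =>
    rcases Nat.eq_zero_or_pos k with hk0 | hk0
    · subst hk0
      rw [repSum_one]
      exact N_castMat (N := N) _ _
    · rw [repSum_succ, N_castMat (N := N), hop.dsum_eq, ih hk0, max_self]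

lemma rho_amp (hop : IsOperatorSpace 𝔽 V N) {n m kk k1 k2 q : ℕ}
    (hkk : 0 < kk) (hq : kk * (n * m) = q) (e1 : k1 * n = q) (e2 : k2 * m = q)
    (X : Matrix (Fin n) (Fin n) V) (Y : Matrix (Fin m) (Fin m) V) :
    rho N X Y = N q (castMat e1 (repSum 0 k1 X) - castMat e2 (repSum 0 k2 Y)) := by
  have step1 : rho N X Y
      = N (kk * (n * m)) (repSum 0 kk (castMat (Nat.mul_comm m n) (repSum 0 m X)
          - repSum 0 n Y)) := (repSum_norm hop hkk _).symm
  have step2 : N (kk * (n * m)) (repSum 0 kk (castMat (Nat.mul_comm m n) (repSum 0 m X)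
          - repSum 0 n Y))
      = N q (castMat hq (repSum 0 kk (castMat (Nat.mul_comm m n) (repSum 0 m X)
          - repSum 0 n Y))) := (N_castMat hq _).symm
  rw [step1, step2]
  congr 1
  funext i j
  simp only [castMat, repSum, Matrix.sub_apply, Fin.coe_cast]
  by_cases h : (i : ℕ) / (n * m) = (j : ℕ) / (n * m)
  · rw [if_pos h]
    congr 1
    · by_cases h2 : (i : ℕ) / n = (j : ℕ) / n
      · rw [if_pos h2, if_pos ((mod_div_iff (Nat.mul_comm n m) h).2 h2)]
        congr 1 <;> exact Fin.ext (by simp [mod_mod_mul (Nat.mul_comm n m)])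
      · rw [if_neg h2, if_neg (fun hc => h2 ((mod_div_iff (Nat.mul_comm n m) h).1 hc))]
    · by_cases h2 : (i : ℕ) / m = (j : ℕ) / m
      · rw [if_pos h2, if_pos ((mod_div_iff rfl h).2 h2)]
        congr 1 <;> exact Fin.ext (by simp [mod_mod_mul (rfl : n * m = n * m)])
      · rw [if_neg h2, if_neg (fun hc => h2 ((mod_div_iff rfl h).1 hc))]
  · rw [if_neg h,
      if_neg (fun hc => h (div_div_pair (Nat.mul_comm n m) hc)),
      if_neg (fun hc => h (div_div_pair (rfl : n * m = n * m) hc)), sub_zero]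

end NormLemmas
section StarStep

lemma star_step {V : Type*} [Zero V] {n m : ℕ} (hn : 0 < n) (hm : 0 < m)
    (X : Matrix (Fin n) (Fin n) V) (Y : Matrix (Fin m) (Fin m) V)
    (H : ∀ a b : ℕ, a < n * m → b < n * m →
      (if a / n = b / n then X ⟨a % n, Nat.mod_lt a hn⟩ ⟨b % n, Nat.mod_lt b hn⟩ else 0)
        = (if a / m = b / m then Y ⟨a % m, Nat.mod_lt a hm⟩ ⟨b % m, Nat.mod_lt b hm⟩
           else 0)) :
    ∀ a b : ℕ, ∀ ha : a < n, ∀ hb : b < n,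
      X ⟨a, ha⟩ ⟨b, hb⟩ =
        if a / Nat.gcd n m = b / Nat.gcd n m
        then Y ⟨a % Nat.gcd n m, Nat.lt_of_lt_of_le
                (Nat.mod_lt a (Nat.gcd_pos_of_pos_right n hm))
                (Nat.le_of_dvd hm (Nat.gcd_dvd_right n m))⟩
               ⟨b % Nat.gcd n m, Nat.lt_of_lt_of_le
                (Nat.mod_lt b (Nat.gcd_pos_of_pos_right n hm))
                (Nat.le_of_dvd hm (Nat.gcd_dvd_right n m))⟩
        else 0 := by
  set g := Nat.gcd n m with hgdef
  have hg : 0 < g := Nat.gcd_pos_of_pos_right n hm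
  have hgm : g ≤ m := Nat.le_of_dvd hm (Nat.gcd_dvd_right n m)
  have hgn : g ≤ n := Nat.le_of_dvd hn (Nat.gcd_dvd_left n m)
  have hgdvd : ∀ c : ℕ, g ∣ c → ∃ t, t < m ∧ (c + t * n) % m = 0 := fun c hc =>
    exists_shift n m hm c (hgdef ▸ hc)
  clear_value g
  -- the shifted form of the hypothesis
  have shift : ∀ a b t : ℕ, ∀ ha : a < n, ∀ hb : b < n, t < m →
      X ⟨a, ha⟩ ⟨b, hb⟩ =
        if (a + t * n) / m = (b + t * n) / m
        then Y ⟨(a + t * n) % m, Nat.mod_lt _ hm⟩ ⟨(b + t * n) % m, Nat.mod_lt _ hm⟩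
        else 0 := by
    intro a b t ha hb ht
    have h1 : a + t * n < n * m := by
      calc a + t * n < n + t * n := by omega
        _ = (t + 1) * n := by ring
        _ ≤ m * n := Nat.mul_le_mul_right n (by omega)
        _ = n * m := Nat.mul_comm m n
    have h2 : b + t * n < n * m := by
      calc b + t * n < n + t * n := by omega
        _ = (t + 1) * n := by ring
        _ ≤ m * n := Nat.mul_le_mul_right n (by omega)
        _ = n * m := Nat.mul_comm m n
    have key := H (a + t * n) (b + t * n) h1 h2
    rw [Nat.add_mul_div_right _ _ hn, Nat.add_mul_div_right _ _ hn,
      Nat.div_eq_of_lt ha, Nat.div_eq_of_lt hb, if_pos rfl] at key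
    have ea : (a + t * n) % n = a := by
      rw [Nat.add_mul_mod_self_right, Nat.mod_eq_of_lt ha]
    have eb : (b + t * n) % n = b := by
      rw [Nat.add_mul_mod_self_right, Nat.mod_eq_of_lt hb]
    simp only [ea, eb] at key
    exact key
  -- step B : equal quotients by g
  have stepB : ∀ a b : ℕ, ∀ ha : a < n, ∀ hb : b < n, a / g = b / g →
      X ⟨a, ha⟩ ⟨b, hb⟩ =
        Y ⟨a % g, Nat.lt_of_lt_of_le (Nat.mod_lt a hg) hgm⟩
          ⟨b % g, Nat.lt_of_lt_of_le (Nat.mod_lt b hg) hgm⟩ := by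
    intro a b ha hb hq
    obtain ⟨t, ht, hmod⟩ := hgdvd (a / g * g) (dvd_mul_left g (a / g))
    obtain ⟨Q, hQ⟩ := Nat.dvd_of_mod_eq_zero hmod
    have hag : a % g < g := Nat.mod_lt a hg
    have hbg : b % g < g := Nat.mod_lt b hg
    have h1 : a / g * g + a % g = a := by rw [Nat.mul_comm]; exact Nat.div_add_mod a g
    have h1b : a / g * g + b % g = b := by
      rw [hq, Nat.mul_comm]; exact Nat.div_add_mod b g
    have ea : a + t * n = m * Q + a % g := by omega
    have eb : b + t * n = m * Q + b % g := by omega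
    have hdiva : (a + t * n) / m = Q := by
      rw [ea, Nat.mul_add_div hm, Nat.div_eq_of_lt (by omega), Nat.add_zero]
    have hdivb : (b + t * n) / m = Q := by
      rw [eb, Nat.mul_add_div hm, Nat.div_eq_of_lt (by omega), Nat.add_zero]
    have hmoda : (a + t * n) % m = a % g := by
      rw [ea, Nat.mul_add_mod, Nat.mod_eq_of_lt (by omega)]
    have hmodb : (b + t * n) % m = b % g := by
      rw [eb, Nat.mul_add_mod, Nat.mod_eq_of_lt (by omega)]
    have key := shift a b t ha hb ht
    rw [hdiva, hdivb, if_pos rfl] at key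
    simp only [hmoda, hmodb] at key
    exact key
  -- step A : different quotients by g give zero entries
  have diffq : ∀ a b : ℕ, a < n → b < n → a < b → a / g ≠ b / g →
      ∃ t, t < m ∧ (a + t * n) / m ≠ (b + t * n) / m := by
    intro a b ha hb hab hne
    rcases le_or_gt m (b - a) with hbig | hsmall
    · refine ⟨0, hm, ?_⟩
      simp only [Nat.zero_mul, Nat.add_zero]
      have h2 : (a + m) / m ≤ b / m := Nat.div_le_div_right (by omega)
      rw [Nat.add_div_right _ hm] at h2
      omega
    · have hq : a / g < b / g :=
        lt_of_le_of_ne (Nat.div_le_div_right (Nat.le_of_lt hab)) hne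
      have hag : a % g < g := Nat.mod_lt a hg
      have h1 : g * (a / g) + a % g = a := Nat.div_add_mod a g
      have hc1 : a < b / g * g := by
        have h2 : g * (a / g) + g ≤ b / g * g := by
          calc g * (a / g) + g = (a / g + 1) * g := by ring
            _ ≤ b / g * g := Nat.mul_le_mul_right g (by omega)
        omega
      have hc2 : b / g * g ≤ b := Nat.div_mul_le_self b g
      obtain ⟨t, ht, hmod⟩ := hgdvd (b / g * g) (dvd_mul_left g (b / g))
      obtain ⟨Q, hQ⟩ := Nat.dvd_of_mod_eq_zero hmod
      have hQ1 : 1 ≤ Q := by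
        by_contra hcon
        have hQ0 : Q = 0 := by omega
        rw [hQ0, Nat.mul_zero] at hQ
        omega
      obtain ⟨Q', rfl⟩ : ∃ Q', Q = Q' + 1 := ⟨Q - 1, by omega⟩
      have hQ' : b / g * g + t * n = m * Q' + m := by
        have : m * (Q' + 1) = m * Q' + m := by ring
        omega
      have ea : a + t * n = m * Q' + (m - (b / g * g - a)) := by omega
      have eb : b + t * n = m * (Q' + 1) + (b - b / g * g) := by
        have : m * (Q' + 1) = m * Q' + m := by ring
        omega
      have hdiva : (a + t * n) / m = Q' := by
        rw [ea, Nat.mul_add_div hm, Nat.div_eq_of_lt (by omega), Nat.add_zero]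
      have hdivb : (b + t * n) / m = Q' + 1 := by
        rw [eb, Nat.mul_add_div hm, Nat.div_eq_of_lt (by omega), Nat.add_zero]
      exact ⟨t, ht, by omega⟩
  have stepA : ∀ a b : ℕ, ∀ ha : a < n, ∀ hb : b < n, a / g ≠ b / g →
      X ⟨a, ha⟩ ⟨b, hb⟩ = 0 := by
    intro a b ha hb hne
    rcases lt_trichotomy a b with h | h | h
    · obtain ⟨t, ht, hd⟩ := diffq a b ha hb h hne
      rw [shift a b t ha hb ht, if_neg hd]
    · exact absurd (by rw [h]) hne
    · obtain ⟨t, ht, hd⟩ := diffq b a hb ha h (Ne.symm hne)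
      rw [shift a b t ha hb ht, if_neg (fun hc => hd hc.symm)]
  intro a b ha hb
  subst hgdef
  by_cases h : a / Nat.gcd n m = b / Nat.gcd n m
  · rw [if_pos h]
    exact stepB a b ha hb h
  · rw [if_neg h]
    exact stepA a b ha hb h

end StarStep
/-- On an operator space, `ρ` extends the norm-induced metrics, is a pseudometric on the nc
space, and vanishes exactly on pairs of matrices that are direct sums of copies of one and the
same matrix. -/
theorem rho_pseudometric {𝔽 V : Type*} [RCLike 𝔽] [AddCommGroup V] [Module 𝔽 V]
    (N : ∀ n : ℕ, Matrix (Fin n) (Fin n) V → ℝ) (hop : IsOperatorSpace 𝔽 V N) :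
    (∀ (n : ℕ) (X Y : Matrix (Fin n) (Fin n) V), rho N X Y = N n (X - Y)) ∧
    (∀ (n : ℕ) (X : Matrix (Fin n) (Fin n) V), 0 < n → rho N X X = 0) ∧
    (∀ (n m : ℕ) (X : Matrix (Fin n) (Fin n) V) (Y : Matrix (Fin m) (Fin m) V),
      0 < n → 0 < m → rho N X Y = rho N Y X) ∧
    (∀ (n m p : ℕ) (X : Matrix (Fin n) (Fin n) V) (Y : Matrix (Fin m) (Fin m) V)
      (Z : Matrix (Fin p) (Fin p) V), 0 < n → 0 < m → 0 < p →
      rho N X Z ≤ rho N X Y + rho N Y Z) ∧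
    (∀ (n m : ℕ) (X : Matrix (Fin n) (Fin n) V) (Y : Matrix (Fin m) (Fin m) V),
      0 < n → 0 < m → (rho N X Y = 0 ↔ SimRel (0 : V) X Y)) := by
  refine ⟨?_, ?_, ?_, ?_, ?_⟩
  · -- (a) extends the norms
    intro n X Y
    rcases Nat.eq_zero_or_pos n with hn | hn
    · subst hn
      show N (0 * 0) (castMat (Nat.mul_comm 0 0) (repSum 0 0 X) - repSum 0 0 Y) = N 0 (X - Y)
      rw [N_size0 hop (Nat.zero_mul 0), N_size0 hop rfl]
    · show N (n * n) (castMat (Nat.mul_comm n n) (repSum 0 n X) - repSum 0 n Y) = N n (X - Y)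
      rw [castMat_self, ← repSum_sub, repSum_norm hop hn]
  · -- (b1) reflexivity
    intro n X _
    show N (n * n) (castMat (Nat.mul_comm n n) (repSum 0 n X) - repSum 0 n X) = 0
    rw [castMat_self, sub_self]
    exact (hop.eq_zero_iff _ _).2 rfl
  · -- (b2) symmetry
    intro n m X Y hn hm
    calc rho N X Y
        = N (n * m) (castMat (Nat.mul_comm m n) (repSum 0 m X) - repSum 0 n Y) := rfl
      _ = N (n * m) (repSum 0 n Y - castMat (Nat.mul_comm m n) (repSum 0 m X)) :=
          N_sub_comm hop _ _
      _ = N (n * m) (castMat (Nat.mul_comm m n)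
            (castMat (Nat.mul_comm n m) (repSum 0 n Y) - repSum 0 m X)) := rfl
      _ = N (m * n) (castMat (Nat.mul_comm n m) (repSum 0 n Y) - repSum 0 m X) :=
          N_castMat (N := N) _ _
      _ = rho N Y X := rfl
  · -- (b3) triangle inequality
    intro n m p X Y Z hn hm hp
    have eX : (m * p) * n = n * m * p := by ring
    have eY : (n * p) * m = n * m * p := by ring
    have eZ : (n * m) * p = n * m * p := by ring
    have h1 := rho_amp hop hm (show m * (n * p) = n * m * p by ring) eX eZ X Z
    have h2 := rho_amp hop hp (show p * (n * m) = n * m * p by ring) eX eY X Y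
    have h3 := rho_amp hop hn (show n * (m * p) = n * m * p by ring) eY eZ Y Z
    rw [h1, h2, h3, ← sub_add_sub_cancel (castMat eX (repSum 0 (m * p) X))
      (castMat eY (repSum 0 (n * p) Y)) (castMat eZ (repSum 0 (n * m) Z))]
    exact hop.add_le _ _ _
  · -- (c) vanishing iff similar
    intro n m X Y hn hm
    have hgpos : 0 < Nat.gcd n m := Nat.gcd_pos_of_pos_right n hm
    have hglen : Nat.gcd n m ≤ n := Nat.le_of_dvd hn (Nat.gcd_dvd_left n m)
    have hglem : Nat.gcd n m ≤ m := Nat.le_of_dvd hm (Nat.gcd_dvd_right n m)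
    constructor
    · intro h0
      have Hmat : castMat (Nat.mul_comm m n) (repSum 0 m X) = repSum 0 n Y :=
        sub_eq_zero.mp ((hop.eq_zero_iff _ _).mp h0)
      have H : ∀ a b : ℕ, a < n * m → b < n * m →
          (if a / n = b / n then X ⟨a % n, Nat.mod_lt a hn⟩ ⟨b % n, Nat.mod_lt b hn⟩ else 0)
            = (if a / m = b / m then Y ⟨a % m, Nat.mod_lt a hm⟩ ⟨b % m, Nat.mod_lt b hm⟩
               else 0) := by
        intro a b ha hb
        exact congrFun (congrFun Hmat ⟨a, ha⟩) ⟨b, hb⟩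
      have H' : ∀ a b : ℕ, a < m * n → b < m * n →
          (if a / m = b / m then Y ⟨a % m, Nat.mod_lt a hm⟩ ⟨b % m, Nat.mod_lt b hm⟩ else 0)
            = (if a / n = b / n then X ⟨a % n, Nat.mod_lt a hn⟩ ⟨b % n, Nat.mod_lt b hn⟩
               else 0) := by
        intro a b ha hb
        exact (H a b (by rw [Nat.mul_comm n m]; exact ha)
          (by rw [Nat.mul_comm n m]; exact hb)).symm
      have hX := star_step hn hm X Y H
      have hY := star_step hm hn Y X H'
      have hY' : ∀ a b : ℕ, ∀ ha : a < m, ∀ hb : b < m,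
          Y ⟨a, ha⟩ ⟨b, hb⟩ =
            if a / Nat.gcd n m = b / Nat.gcd n m
            then X ⟨a % Nat.gcd n m,
                    Nat.lt_of_lt_of_le (Nat.mod_lt a hgpos) hglen⟩
                   ⟨b % Nat.gcd n m,
                    Nat.lt_of_lt_of_le (Nat.mod_lt b hgpos) hglen⟩
            else 0 := by
        intro a b ha hb
        have h2 := hY a b ha hb
        simp only [Nat.gcd_comm m n] at h2
        exact h2
      have hYX : ∀ c d : ℕ, ∀ hc : c < Nat.gcd n m, ∀ hd : d < Nat.gcd n m,
          Y ⟨c, Nat.lt_of_lt_of_le hc hglem⟩ ⟨d, Nat.lt_of_lt_of_le hd hglem⟩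
            = X ⟨c, Nat.lt_of_lt_of_le hc hglen⟩ ⟨d, Nat.lt_of_lt_of_le hd hglen⟩ := by
        intro c d hc hd
        have h2 := hY' c d (Nat.lt_of_lt_of_le hc hglem) (Nat.lt_of_lt_of_le hd hglem)
        rw [Nat.div_eq_of_lt hc, Nat.div_eq_of_lt hd, if_pos rfl] at h2
        simp only [Nat.mod_eq_of_lt hc, Nat.mod_eq_of_lt hd] at h2
        exact h2
      refine ⟨Nat.gcd n m, hgpos, Nat.gcd_dvd_left n m, Nat.gcd_dvd_right n m,
        (fun i j => X ⟨i.1, Nat.lt_of_lt_of_le i.2 hglen⟩ ⟨j.1, Nat.lt_of_lt_of_le j.2 hglen⟩),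
        ?_, ?_⟩
      · funext i j
        have hmi : (i : ℕ) % Nat.gcd n m < Nat.gcd n m := Nat.mod_lt _ hgpos
        have hmj : (j : ℕ) % Nat.gcd n m < Nat.gcd n m := Nat.mod_lt _ hgpos
        calc X i j
            = if (i : ℕ) / Nat.gcd n m = (j : ℕ) / Nat.gcd n m
              then Y ⟨(i : ℕ) % Nat.gcd n m, Nat.lt_of_lt_of_le hmi hglem⟩
                     ⟨(j : ℕ) % Nat.gcd n m, Nat.lt_of_lt_of_le hmj hglem⟩
              else 0 := hX (i : ℕ) (j : ℕ) i.isLt j.isLt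
          _ = if (i : ℕ) / Nat.gcd n m = (j : ℕ) / Nat.gcd n m
              then X ⟨(i : ℕ) % Nat.gcd n m, Nat.lt_of_lt_of_le hmi hglen⟩
                     ⟨(j : ℕ) % Nat.gcd n m, Nat.lt_of_lt_of_le hmj hglen⟩
              else 0 := by
                split_ifs with hc
                · exact hYX _ _ hmi hmj
                · rfl
          _ = castMat (Nat.div_mul_cancel (Nat.gcd_dvd_left n m))
                (repSum 0 (n / Nat.gcd n m)
                  (fun i j => X ⟨i.1, Nat.lt_of_lt_of_le i.2 hglen⟩
                    ⟨j.1, Nat.lt_of_lt_of_le j.2 hglen⟩)) i j := rfl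
      · funext i j
        have hmi : (i : ℕ) % Nat.gcd n m < Nat.gcd n m := Nat.mod_lt _ hgpos
        have hmj : (j : ℕ) % Nat.gcd n m < Nat.gcd n m := Nat.mod_lt _ hgpos
        calc Y i j
            = if (i : ℕ) / Nat.gcd n m = (j : ℕ) / Nat.gcd n m
              then X ⟨(i : ℕ) % Nat.gcd n m, Nat.lt_of_lt_of_le hmi hglen⟩
                     ⟨(j : ℕ) % Nat.gcd n m, Nat.lt_of_lt_of_le hmj hglen⟩
              else 0 := hY' (i : ℕ) (j : ℕ) i.isLt j.isLt
          _ = castMat (Nat.div_mul_cancel (Nat.gcd_dvd_right n m))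
                (repSum 0 (m / Nat.gcd n m)
                  (fun i j => X ⟨i.1, Nat.lt_of_lt_of_le i.2 hglen⟩
                    ⟨j.1, Nat.lt_of_lt_of_le j.2 hglen⟩)) i j := rfl
    · rintro ⟨q, hq, hqn, hqm, Z, hXZ, hYZ⟩
      show N (n * m) (castMat (Nat.mul_comm m n) (repSum 0 m X) - repSum 0 n Y) = 0
      apply (hop.eq_zero_iff _ _).2
      rw [sub_eq_zero]
      subst hXZ
      subst hYZ
      rw [repSum_comp (Nat.div_mul_cancel hqn) Z
          (show (m * (n / q)) * q = m * n by rw [Nat.mul_assoc, Nat.div_mul_cancel hqn]),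
        repSum_comp (Nat.div_mul_cancel hqm) Z
          (show (n * (m / q)) * q = n * m by rw [Nat.mul_assoc, Nat.div_mul_cancel hqm])]
      rfl

end NCPaper
end
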